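/- arXiv:math/0309190 — 11 statements merged into one kernel-verified Lean document; each statement's English description precedes it below -/
import Mathlib

section
/- Let (a_n)_{n≥1} be a sequence of complex numbers and define (b_n)_{n≥1} by n·b_n = Σ_{d|n} μ(n/d)·a_d. Then as formal power series, ∏_{n=1}^∞ (1 - x^n)^{-b_n} = exp(Σ_{n=1}^∞ (a_n/n)·x^n). -/
open PowerSeries Finset ArithmeticFunction

/-- `expComp f` is the formal power series `exp(f) = ∑ₖ f^k / k!` for a power
series `f` with zero constant term (coefficientwise definition). -/
noncomputable def expComp (f : PowerSeries ℂ) : PowerSeries ℂ :=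
  PowerSeries.mk fun n =>
    ∑ k ∈ Finset.range (n + 1), (PowerSeries.coeff n (f ^ k)) / (k.factorial : ℂ)

/-- `log(1 - x^n) = -∑_{k≥1} x^{nk}/k`, as a formal power series. -/
noncomputable def logOneSubPow (n : ℕ) : PowerSeries ℂ :=
  PowerSeries.mk fun m => if m ≠ 0 ∧ n ∣ m then -(1 / ((m / n : ℕ) : ℂ)) else 0

/-- `(1 - x^n)^(-b) := exp(-b · log(1 - x^n))` for a complex exponent `b`. -/
noncomputable def oneSubPowRpow (n : ℕ) (b : ℂ) : PowerSeries ℂ :=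
  expComp ((-b) • logOneSubPow n)

lemma coeff_pow_zero_of_lt {f : PowerSeries ℂ} (hf : PowerSeries.constantCoeff f = 0) :
    ∀ i n : ℕ, n < i → PowerSeries.coeff n (f ^ i) = 0 := by
  intro i
  induction i with
  | zero => intro n hn; omega
  | succ i ih =>
    intro n hn
    rw [pow_succ, PowerSeries.coeff_mul]
    refine Finset.sum_eq_zero fun p hp => ?_
    rw [Finset.HasAntidiagonal.mem_antidiagonal] at hp
    rcases Nat.lt_or_ge p.1 i with h | h
    · rw [ih p.1 h, zero_mul]
    · have h2 : p.2 = 0 := by omega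
      rw [h2]
      simp only [PowerSeries.coeff_zero_eq_constantCoeff, hf, mul_zero]

lemma coeff_mul_pow_zero {f g : PowerSeries ℂ} (hf : PowerSeries.constantCoeff f = 0)
    (hg : PowerSeries.constantCoeff g = 0) {i j n : ℕ} (h : n < i + j) :
    PowerSeries.coeff n (f ^ i * g ^ j) = 0 := by
  rw [PowerSeries.coeff_mul]
  refine Finset.sum_eq_zero fun p hp => ?_
  rw [Finset.HasAntidiagonal.mem_antidiagonal] at hp
  rcases Nat.lt_or_ge p.1 i with h1 | h1
  · rw [coeff_pow_zero_of_lt hf i p.1 h1, zero_mul]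
  · rw [coeff_pow_zero_of_lt hg j p.2 (by omega), mul_zero]

lemma expComp_add {f g : PowerSeries ℂ} (hf : PowerSeries.constantCoeff f = 0)
    (hg : PowerSeries.constantCoeff g = 0) :
    expComp (f + g) = expComp f * expComp g := by
  ext n
  set F : ℕ → ℕ → ℂ := fun i j =>
    PowerSeries.coeff n (f ^ i * g ^ j) / ((i.factorial : ℂ) * (j.factorial : ℂ)) with hF
  have hFzero : ∀ i j : ℕ, n < i + j → F i j = 0 := by
    intro i j h
    rw [hF]
    simp only [coeff_mul_pow_zero hf hg h, zero_div]
  have lhs_eq : PowerSeries.coeff n (expComp (f + g)) =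
      ∑ i ∈ Finset.range (n + 1), ∑ j ∈ Finset.range (n + 1), F i j := by
    rw [expComp, PowerSeries.coeff_mk]
    have step1 : ∀ k ∈ Finset.range (n + 1),
        PowerSeries.coeff n ((f + g) ^ k) / (k.factorial : ℂ) =
        ∑ i ∈ Finset.range (k + 1), F i (k - i) := by
      intro k _
      rw [add_pow, map_sum, Finset.sum_div]
      refine Finset.sum_congr rfl fun i hi => ?_
      rw [Finset.mem_range] at hi
      have hik : i ≤ k := by omega
      have hC : ((k.choose i : ℕ) : PowerSeries ℂ) = PowerSeries.C ((k.choose i : ℕ) : ℂ) := by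
        simp
      rw [hC, PowerSeries.coeff_mul_C, hF]
      have hfac : (k.choose i : ℂ) * (i.factorial : ℂ) * ((k - i).factorial : ℂ)
          = (k.factorial : ℂ) := by
        rw [← Nat.cast_mul, ← Nat.cast_mul, Nat.choose_mul_factorial_mul_factorial hik]
      have h1 : (i.factorial : ℂ) ≠ 0 := Nat.cast_ne_zero.mpr (Nat.factorial_ne_zero _)
      have h2 : ((k - i).factorial : ℂ) ≠ 0 := Nat.cast_ne_zero.mpr (Nat.factorial_ne_zero _)
      have h3 : (k.factorial : ℂ) ≠ 0 := Nat.cast_ne_zero.mpr (Nat.factorial_ne_zero _)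
      field_simp
      rw [← hfac]
      ring
    rw [Finset.sum_congr rfl step1]
    have extend : ∀ k ∈ Finset.range (n + 1),
        ∑ i ∈ Finset.range (k + 1), F i (k - i) =
        ∑ i ∈ Finset.range (n + 1), if i ≤ k then F i (k - i) else 0 := by
      intro k hk
      rw [Finset.mem_range] at hk
      rw [← Finset.sum_filter]
      refine Finset.sum_congr ?_ fun _ _ => rfl
      ext i
      simp only [Finset.mem_filter, Finset.mem_range]
      omega
    rw [Finset.sum_congr rfl extend, Finset.sum_comm]
    refine Finset.sum_congr rfl fun i hi => ?_
    rw [Finset.mem_range] at hi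
    have hIco : ∑ k ∈ Finset.range (n + 1), (if i ≤ k then F i (k - i) else 0) =
        ∑ k ∈ Finset.Ico i (n + 1), F i (k - i) := by
      rw [← Finset.sum_filter]
      refine Finset.sum_congr ?_ fun _ _ => rfl
      ext k
      simp only [Finset.mem_filter, Finset.mem_range, Finset.mem_Ico]
      omega
    rw [hIco, Finset.sum_Ico_eq_sum_range]
    simp only [Nat.add_sub_cancel_left]
    refine Finset.sum_subset (Finset.range_subset_range.mpr (by omega)) fun j hj hj' => ?_
    rw [Finset.mem_range] at hj hj'
    exact hFzero i j (by omega)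
  have rhs_eq : PowerSeries.coeff n (expComp f * expComp g) =
      ∑ i ∈ Finset.range (n + 1), ∑ j ∈ Finset.range (n + 1), F i j := by
    rw [PowerSeries.coeff_mul]
    have step1 : ∀ p ∈ Finset.HasAntidiagonal.antidiagonal n,
        PowerSeries.coeff p.1 (expComp f) * PowerSeries.coeff p.2 (expComp g) =
        ∑ i ∈ Finset.range (n + 1), ∑ j ∈ Finset.range (n + 1),
          (PowerSeries.coeff p.1 (f ^ i) * PowerSeries.coeff p.2 (g ^ j)) /
            ((i.factorial : ℂ) * (j.factorial : ℂ)) := by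
      intro p hp
      rw [Finset.HasAntidiagonal.mem_antidiagonal] at hp
      rw [expComp, expComp, PowerSeries.coeff_mk, PowerSeries.coeff_mk]
      have ef : ∑ k ∈ Finset.range (p.1 + 1), PowerSeries.coeff p.1 (f ^ k) / (k.factorial : ℂ)
          = ∑ k ∈ Finset.range (n + 1), PowerSeries.coeff p.1 (f ^ k) / (k.factorial : ℂ) := by
        refine Finset.sum_subset (Finset.range_subset_range.mpr (by omega)) fun k hk hk' => ?_
        rw [Finset.mem_range] at hk hk'
        rw [coeff_pow_zero_of_lt hf k p.1 (by omega), zero_div]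
      have eg : ∑ k ∈ Finset.range (p.2 + 1), PowerSeries.coeff p.2 (g ^ k) / (k.factorial : ℂ)
          = ∑ k ∈ Finset.range (n + 1), PowerSeries.coeff p.2 (g ^ k) / (k.factorial : ℂ) := by
        refine Finset.sum_subset (Finset.range_subset_range.mpr (by omega)) fun k hk hk' => ?_
        rw [Finset.mem_range] at hk hk'
        rw [coeff_pow_zero_of_lt hg k p.2 (by omega), zero_div]
      rw [ef, eg, Finset.sum_mul_sum]
      refine Finset.sum_congr rfl fun i _ => Finset.sum_congr rfl fun j _ => ?_
      field_simp
    rw [Finset.sum_congr rfl step1, Finset.sum_comm]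
    refine Finset.sum_congr rfl fun i _ => ?_
    rw [Finset.sum_comm]
    refine Finset.sum_congr rfl fun j _ => ?_
    show _ = PowerSeries.coeff n (f ^ i * g ^ j) / ((i.factorial : ℂ) * (j.factorial : ℂ))
    rw [PowerSeries.coeff_mul, Finset.sum_div]
  rw [lhs_eq, ← rhs_eq]

lemma expComp_zero : expComp (0 : PowerSeries ℂ) = 1 := by
  ext n
  rw [expComp, PowerSeries.coeff_mk]
  have : ∀ k ∈ Finset.range (n + 1),
      PowerSeries.coeff n ((0 : PowerSeries ℂ) ^ k) / (k.factorial : ℂ)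
      = if k = 0 then PowerSeries.coeff n (1 : PowerSeries ℂ) else 0 := by
    intro k _
    rcases Nat.eq_zero_or_pos k with hk | hk
    · subst hk; simp
    · rw [zero_pow (by omega), if_neg (by omega)]
      simp
  rw [Finset.sum_congr rfl this, Finset.sum_ite_eq' (Finset.range (n + 1)) 0]
  simp

lemma expComp_sum (s : Finset ℕ) (G : ℕ → PowerSeries ℂ)
    (h : ∀ n ∈ s, PowerSeries.constantCoeff (G n) = 0) :
    expComp (∑ n ∈ s, G n) = ∏ n ∈ s, expComp (G n) := by
  induction s using Finset.cons_induction with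
  | empty => simp [expComp_zero]
  | cons i s his ih =>
    rw [Finset.sum_cons, Finset.prod_cons, expComp_add (h i (Finset.mem_cons_self i s))
      (by rw [map_sum]; exact Finset.sum_eq_zero fun n hn => h n (Finset.mem_cons_of_mem hn)),
      ih fun n hn => h n (Finset.mem_cons_of_mem hn)]

lemma coeff_expComp_congr {f g : PowerSeries ℂ} {m : ℕ}
    (h : ∀ i ≤ m, PowerSeries.coeff i f = PowerSeries.coeff i g) :
    PowerSeries.coeff m (expComp f) = PowerSeries.coeff m (expComp g) := by
  have key : ∀ k : ℕ, ∀ i ≤ m, PowerSeries.coeff i (f ^ k) = PowerSeries.coeff i (g ^ k) := by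
    intro k
    induction k with
    | zero => intro i _; rfl
    | succ k ih =>
      intro i hi
      rw [pow_succ, pow_succ, PowerSeries.coeff_mul, PowerSeries.coeff_mul]
      refine Finset.sum_congr rfl fun p hp => ?_
      rw [Finset.HasAntidiagonal.mem_antidiagonal] at hp
      rw [ih p.1 (by omega), h p.2 (by omega)]
  rw [expComp, expComp, PowerSeries.coeff_mk, PowerSeries.coeff_mk]
  exact Finset.sum_congr rfl fun k _ => by rw [key k m le_rfl]

/-- The infinite product `∏_{n≥1} (1-x^n)^{-b_n}` equals
`exp(∑_{n≥1} (a_n/n) x^n)`:  since the `n`-th factor is `1 + O(x^n)`, the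
coefficient of `x^m` of the infinite product is that of the partial product
over `1 ≤ n ≤ m`. -/
theorem stmt_0 (a b : ℕ → ℂ)
    (hb : ∀ n : ℕ, 1 ≤ n → (n : ℂ) * b n =
      ∑ d ∈ n.divisors, (moebius (n / d) : ℂ) * a d) :
    ∀ m : ℕ,
      PowerSeries.coeff m (∏ n ∈ Finset.Icc 1 m, oneSubPowRpow n (b n)) =
        PowerSeries.coeff m
          (expComp (PowerSeries.mk fun n => if n = 0 then 0 else a n / (n : ℂ))) := by
  intro m
  -- Möbius inversion: ∑_{d ∣ j} d * b d = a j
  have hinv : ∀ j : ℕ, 0 < j → ∑ d ∈ j.divisors, (d : ℂ) * b d = a j := by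
    refine (ArithmeticFunction.sum_eq_iff_sum_mul_moebius_eq
      (f := fun d => (d : ℂ) * b d) (g := a)).mpr ?_
    intro n hn
    rw [Nat.sum_divisorsAntidiagonal' (f := fun x y => ((moebius x : ℤ) : ℂ) * a y)]
    exact (hb n hn).symm
  -- constant coefficient of summands is zero
  have hc0 : ∀ n : ℕ, PowerSeries.constantCoeff ((-(b n)) • logOneSubPow n) = 0 := by
    intro n
    simp [logOneSubPow, PowerSeries.constantCoeff_smul]
  -- product of exps = exp of sum
  have hprod : ∏ n ∈ Finset.Icc 1 m, oneSubPowRpow n (b n)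
      = expComp (∑ n ∈ Finset.Icc 1 m, (-(b n)) • logOneSubPow n) := by
    rw [expComp_sum _ _ fun n _ => hc0 n]
    rfl
  rw [hprod]
  refine coeff_expComp_congr fun j hj => ?_
  rw [PowerSeries.coeff_mk, map_sum]
  rcases Nat.eq_zero_or_pos j with hj0 | hj0
  · subst hj0
    simp only [if_pos rfl]
    refine Finset.sum_eq_zero fun n _ => ?_
    simp [logOneSubPow, PowerSeries.coeff_smul]
  · rw [if_neg (by omega)]
    have hterm : ∀ n ∈ Finset.Icc 1 m,
        PowerSeries.coeff j ((-(b n)) • logOneSubPow n)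
        = if n ∣ j ∧ 1 ≤ n ∧ n ≤ j then b n * (n : ℂ) / (j : ℂ) else 0 := by
      intro n hn
      rw [Finset.mem_Icc] at hn
      rw [PowerSeries.coeff_smul, logOneSubPow, PowerSeries.coeff_mk]
      by_cases hd : n ∣ j
      · have hn1 : 1 ≤ n := hn.1
        have hnj : n ≤ j := Nat.le_of_dvd hj0 hd
        rw [if_pos ⟨by omega, hd⟩, if_pos ⟨hd, hn1, hnj⟩]
        have hjn : ((j / n : ℕ) : ℂ) = (j : ℂ) / (n : ℂ) := by
          rw [Nat.cast_div hd (by exact_mod_cast (by omega : n ≠ 0))]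
        rw [hjn]
        have hn0 : (n : ℂ) ≠ 0 := by exact_mod_cast (by omega : n ≠ 0)
        have hj0' : (j : ℂ) ≠ 0 := by exact_mod_cast (by omega : j ≠ 0)
        rw [smul_eq_mul]
        field_simp
      · rw [if_neg (by tauto), if_neg (by tauto), smul_zero]
    rw [Finset.sum_congr rfl hterm, ← Finset.sum_filter]
    have hset : (Finset.Icc 1 m).filter (fun n => n ∣ j ∧ 1 ≤ n ∧ n ≤ j) = j.divisors := by
      ext n
      simp only [Finset.mem_filter, Finset.mem_Icc, Nat.mem_divisors]
      constructor
      · rintro ⟨_, hd, _, _⟩; exact ⟨hd, by omega⟩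
      · rintro ⟨hd, _⟩
        have h1 : 1 ≤ n := Nat.one_le_iff_ne_zero.mpr fun h => by
          subst h; exact absurd (Nat.eq_zero_of_zero_dvd hd) (by omega)
        have h2 : n ≤ j := Nat.le_of_dvd hj0 hd
        exact ⟨⟨h1, by omega⟩, hd, h1, h2⟩
    rw [hset, ← hinv j hj0, Finset.sum_div]
    refine Finset.sum_congr rfl fun d hd => ?_
    ring
end

section
/- Let (a_n)_{n≥1} be a sequence of integers. If for every n ≥ 1 the sum Σ_{d|n} μ(n/d)·a_d is divisible by n, then the numbers A_n defined by A_0 = 1 and (n+1)·A_{n+1} = Σ_{k=0}^n A_{n-k}·a_{k+1} are all integers. -/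
open Finset ArithmeticFunction PowerSeries

namespace Stmt2Aux

noncomputable section

variable (R : Type*) [CommRing R]

/-- geometric series `1/(1 - X^m)` -/
def geom (m : ℕ) : R⟦X⟧ := PowerSeries.mk fun n => if m ∣ n then 1 else 0

lemma one_sub_mul_geom (d : ℕ) : (1 - X ^ (d + 1)) * geom R (d + 1) = 1 := by
  ext n
  rw [sub_mul, one_mul, map_sub, coeff_X_pow_mul', coeff_one]
  simp only [geom, coeff_mk]
  rcases Nat.eq_zero_or_pos n with rfl | hn
  · simp
  · rw [if_neg hn.ne']
    by_cases h : d + 1 ≤ n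
    · rw [if_pos h]
      have hiff : (d + 1) ∣ n ↔ (d + 1) ∣ (n - (d + 1)) := by
        constructor
        · intro hdvd; exact Nat.dvd_sub hdvd dvd_rfl
        · intro hdvd
          have hsum : n = (n - (d + 1)) + (d + 1) := (Nat.sub_add_cancel h).symm
          rw [hsum]; exact hdvd.add dvd_rfl
      by_cases hdn : (d + 1) ∣ n
      · rw [if_pos hdn, if_pos (hiff.mp hdn), sub_self]
      · rw [if_neg hdn, if_neg fun hc => hdn (hiff.mpr hc), sub_self]
    · rw [if_neg h, sub_zero, if_neg]
      intro hdvd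
      exact h (Nat.le_of_dvd hn hdvd)

/-- `1 - X^(d+1)` as a unit of `R⟦X⟧`. -/
def gu (d : ℕ) : (R⟦X⟧)ˣ :=
  ⟨1 - X ^ (d + 1), geom R (d + 1), one_sub_mul_geom R d,
    by rw [mul_comm]; exact one_sub_mul_geom R d⟩

/-- logarithmic derivative -/
def logD (u : (R⟦X⟧)ˣ) : R⟦X⟧ := (↑u⁻¹ : R⟦X⟧) * (d⁄dX R ↑u)

variable {R}

lemma logD_mul (u v : (R⟦X⟧)ˣ) : logD R (u * v) = logD R u + logD R v := by
  unfold logD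
  rw [mul_inv, Units.val_mul, Units.val_mul, Derivation.leibniz, smul_eq_mul, smul_eq_mul]
  linear_combination ((↑v⁻¹ : R⟦X⟧) * (d⁄dX R (↑v : R⟦X⟧))) * u.inv_mul
    + ((↑u⁻¹ : R⟦X⟧) * (d⁄dX R (↑u : R⟦X⟧))) * v.inv_mul

lemma logD_one : logD R (1 : (R⟦X⟧)ˣ) = 0 := by
  simp [logD]

lemma logD_pow (u : (R⟦X⟧)ˣ) (n : ℕ) : logD R (u ^ n) = n • logD R u := by
  induction n with
  | zero => simp [logD_one]
  | succ k ih => rw [pow_succ, logD_mul, ih, succ_nsmul]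

lemma logD_inv (u : (R⟦X⟧)ˣ) : logD R u⁻¹ = - logD R u := by
  have h := logD_mul u⁻¹ u
  rw [inv_mul_cancel, logD_one] at h
  exact eq_neg_of_add_eq_zero_left h.symm

lemma logD_zpow (u : (R⟦X⟧)ˣ) (z : ℤ) : logD R (u ^ z) = z • logD R u := by
  cases z with
  | ofNat n => rw [Int.ofNat_eq_coe, zpow_natCast, logD_pow, natCast_zsmul]
  | negSucc n =>
      rw [zpow_negSucc, logD_inv, logD_pow, negSucc_zsmul]

lemma logD_prod {ι : Type*} (s : Finset ι) (u : ι → (R⟦X⟧)ˣ) :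
    logD R (∏ i ∈ s, u i) = ∑ i ∈ s, logD R (u i) := by
  classical
  induction s using Finset.induction_on with
  | empty => simp [logD_one]
  | insert x s hx ih =>
      rw [Finset.prod_insert hx, Finset.sum_insert hx, logD_mul, ih]

lemma D_eq_mul_logD (u : (R⟦X⟧)ˣ) : d⁄dX R (↑u : R⟦X⟧) = ↑u * logD R u := by
  unfold logD
  linear_combination (-(d⁄dX R (↑u : R⟦X⟧))) * u.mul_inv

lemma logD_gu (d : ℕ) :
    logD R (gu R d) = -((d + 1 : ℕ) • (geom R (d + 1) * X ^ d)) := by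
  unfold logD gu
  rw [Units.inv_mk, Units.val_mk, Units.val_mk, map_sub, Derivation.map_one_eq_zero,
    Derivation.leibniz_pow, derivative_X]
  rw [Nat.add_sub_cancel]
  simp only [smul_eq_mul, mul_one, zero_sub, mul_neg, smul_mul_assoc, mul_smul_comm]

lemma coeff_geom_mul_X_pow (d k : ℕ) :
    coeff (R := R) k (geom R (d + 1) * X ^ d) = if (d + 1) ∣ (k + 1) then 1 else 0 := by
  rw [mul_comm, coeff_X_pow_mul']
  by_cases h : d ≤ k
  · rw [if_pos h]
    simp only [geom, coeff_mk]
    have hiff : (d + 1) ∣ (k - d) ↔ (d + 1) ∣ (k + 1) := by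
      rw [show k + 1 = (k - d) + (d + 1) by omega]
      exact Nat.dvd_add_self_right.symm
    simp only [hiff]
  · rw [if_neg h, if_neg]
    intro hdvd
    have := Nat.le_of_dvd (Nat.succ_pos k) hdvd
    omega

variable (R)

/-- the product `∏_{d=1}^{N} (1 - X^d) ^ (-b d)` -/
def G (b : ℕ → ℤ) (N : ℕ) : (R⟦X⟧)ˣ :=
  ∏ d ∈ Finset.range N, (gu R d) ^ (-(b (d + 1)))

variable {R}

lemma logD_G (b : ℕ → ℤ) (N : ℕ) :
    logD R (G R b N) = ∑ d ∈ Finset.range N, (-(b (d + 1))) • logD R (gu R d) := by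
  rw [G, logD_prod]
  exact Finset.sum_congr rfl fun d _ => logD_zpow _ _

lemma coeff_logD_G (b : ℕ → ℤ) (N k : ℕ) (hk : k + 1 ≤ N) :
    coeff (R := ℚ) k (logD ℚ (G ℚ b N)) = ∑ m ∈ (k + 1).divisors, (m : ℚ) * (b m : ℚ) := by
  rw [logD_G, map_sum]
  have step : ∀ d ∈ Finset.range N, coeff (R := ℚ) k ((-(b (d + 1))) • logD ℚ (gu ℚ d))
      = (if (d + 1) ∣ (k + 1) then ((d + 1 : ℕ) : ℚ) * (b (d + 1) : ℚ) else 0) := by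
    intro d _
    rw [map_zsmul, logD_gu, map_neg, map_nsmul, coeff_geom_mul_X_pow]
    simp only [zsmul_eq_mul, nsmul_eq_mul]
    split_ifs with h
    · push_cast; ring
    · push_cast; ring
  rw [Finset.sum_congr rfl step]
  have h1 : ∑ d ∈ Finset.range N, (if (d + 1) ∣ (k + 1) then ((d + 1 : ℕ) : ℚ) * (b (d + 1) : ℚ) else 0)
      = ∑ m ∈ Finset.Ico 1 (N + 1), (if m ∣ (k + 1) then (m : ℚ) * (b m : ℚ) else 0) := by
    rw [Finset.sum_Ico_eq_sum_range]
    simp only [Nat.add_sub_cancel]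
    refine Finset.sum_congr rfl fun d _ => by rw [add_comm 1 d]
  rw [h1, ← Finset.sum_filter]
  refine Finset.sum_congr ?_ fun _ _ => rfl
  ext m
  simp only [Finset.mem_filter, Finset.mem_Ico, Nat.mem_divisors]
  constructor
  · rintro ⟨⟨h1, h2⟩, h3⟩; exact ⟨h3, by omega⟩
  · rintro ⟨h1, h2⟩
    have hm1 : 1 ≤ m := Nat.pos_of_dvd_of_pos h1 (Nat.succ_pos k)
    have hm2 : m ≤ k + 1 := Nat.le_of_dvd (Nat.succ_pos k) h1
    exact ⟨⟨hm1, by omega⟩, h1⟩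

lemma coeff_zero_G (b : ℕ → ℤ) (N : ℕ) : coeff (R := ℚ) 0 (↑(G ℚ b N) : ℚ⟦X⟧) = 1 := by
  have hgu : ∀ d : ℕ, Units.map (constantCoeff (R := ℚ)).toMonoidHom (gu ℚ d) = 1 := by
    intro d
    ext
    simp [gu, Units.coe_map]
  have : Units.map (constantCoeff (R := ℚ)).toMonoidHom (G ℚ b N) = 1 := by
    rw [G, map_prod]
    refine Finset.prod_eq_one fun d _ => by rw [map_zpow, hgu, one_zpow]
  have h2 : constantCoeff (R := ℚ) (↑(G ℚ b N) : ℚ⟦X⟧) = 1 := by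
    have := congrArg (Units.val) this
    rwa [Units.coe_map] at this
  rw [coeff_zero_eq_constantCoeff, h2]

lemma exists_int_coeff (b : ℕ → ℤ) (N n : ℕ) :
    ∃ m : ℤ, coeff (R := ℚ) n (↑(G ℚ b N) : ℚ⟦X⟧) = (m : ℚ) := by
  refine ⟨coeff (R := ℤ) n (↑(G ℤ b N) : ℤ⟦X⟧), ?_⟩
  have hgu : ∀ d : ℕ,
      Units.map (PowerSeries.map (Int.castRingHom ℚ)).toMonoidHom (gu ℤ d) = gu ℚ d := by
    intro d
    ext
    simp [gu, Units.coe_map]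
  have hmap : Units.map (PowerSeries.map (Int.castRingHom ℚ)).toMonoidHom (G ℤ b N)
      = G ℚ b N := by
    rw [G, G, map_prod]
    exact Finset.prod_congr rfl fun d _ => by rw [map_zpow, hgu]
  rw [← hmap, Units.coe_map]
  simp [PowerSeries.coeff_map]

end

end Stmt2Aux

open Stmt2Aux

theorem stmt_2 (a : ℕ → ℤ)
    (hdiv : ∀ n : ℕ, 1 ≤ n →
      (n : ℤ) ∣ ∑ d ∈ n.divisors, moebius (n / d) * a d)
    (A : ℕ → ℚ) (hA0 : A 0 = 1)
    (hArec : ∀ n : ℕ, (n + 1 : ℚ) * A (n + 1) =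
      ∑ k ∈ Finset.range (n + 1), A (n - k) * (a (k + 1) : ℚ)) :
    ∀ n : ℕ, ∃ m : ℤ, A n = (m : ℚ) := by
  -- define b by Möbius inversion
  set b : ℕ → ℤ := fun n => (∑ d ∈ n.divisors, moebius (n / d) * a d) / n with hbdef
  have hb' : ∀ n : ℕ, 0 < n → (n : ℤ) * b n = ∑ d ∈ n.divisors, moebius (n / d) * a d := by
    intro n hn
    exact Int.mul_ediv_cancel' (hdiv n hn)
  have hb : ∀ m : ℕ, 0 < m → ∑ i ∈ m.divisors, (i : ℤ) * b i = a m := by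
    refine (sum_eq_iff_sum_mul_moebius_eq (f := fun i => (i : ℤ) * b i) (g := a)).mpr ?_
    intro n hn
    have hswap := Nat.sum_divisorsAntidiagonal' (f := fun x y => (moebius x : ℤ) * a y) (n := n)
    exact hswap.trans (hb' n hn).symm
  -- coefficient of logD G is a
  have hcoeffS : ∀ N k : ℕ, k + 1 ≤ N →
      coeff (R := ℚ) k (logD ℚ (G ℚ b N)) = (a (k + 1) : ℚ) := by
    intro N k hk
    rw [coeff_logD_G b N k hk]
    rw [show (∑ m ∈ (k + 1).divisors, (m : ℚ) * (b m : ℚ))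
        = ((∑ i ∈ (k + 1).divisors, (i : ℤ) * b i : ℤ) : ℚ) by push_cast; ring_nf]
    rw [hb (k + 1) (Nat.succ_pos k)]
  -- recurrence for coefficients of G
  have hrec : ∀ N n : ℕ, n + 1 ≤ N →
      ((n : ℚ) + 1) * coeff (R := ℚ) (n + 1) (↑(G ℚ b N) : ℚ⟦X⟧) =
        ∑ k ∈ Finset.range (n + 1),
          coeff (R := ℚ) (n - k) (↑(G ℚ b N) : ℚ⟦X⟧) * (a (k + 1) : ℚ) := by
    intro N n hn
    have hD := congrArg (coeff (R := ℚ) n) (D_eq_mul_logD (G ℚ b N))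
    rw [coeff_derivative, coeff_mul,
      Finset.Nat.sum_antidiagonal_eq_sum_range_succ_mk] at hD
    have h2 : ∑ k ∈ Finset.range (n + 1),
        coeff (R := ℚ) k (↑(G ℚ b N) : ℚ⟦X⟧) * coeff (R := ℚ) (n - k) (logD ℚ (G ℚ b N))
        = ∑ k ∈ Finset.range (n + 1),
          coeff (R := ℚ) k (↑(G ℚ b N) : ℚ⟦X⟧) * (a (n - k + 1) : ℚ) := by
      refine Finset.sum_congr rfl fun k hk => ?_
      rw [hcoeffS N (n - k) (by simp at hk; omega)]
    rw [h2] at hD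
    have h3 : ∑ k ∈ Finset.range (n + 1),
        coeff (R := ℚ) (n - k) (↑(G ℚ b N) : ℚ⟦X⟧) * (a (k + 1) : ℚ)
        = ∑ k ∈ Finset.range (n + 1),
          coeff (R := ℚ) k (↑(G ℚ b N) : ℚ⟦X⟧) * (a (n - k + 1) : ℚ) := by
      rw [← Finset.sum_range_reflect
        (fun k => coeff (R := ℚ) k (↑(G ℚ b N) : ℚ⟦X⟧) * (a (n - k + 1) : ℚ)) (n + 1)]
      refine Finset.sum_congr rfl fun j hj => ?_
      simp only [Finset.mem_range] at hj
      have : n + 1 - 1 - j = n - j := by omega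
      rw [this, Nat.sub_sub_self (by omega : j ≤ n)]
    rw [h3]
    rw [← hD]; ring
  -- coefficients of G agree with A
  have key : ∀ N n : ℕ, n ≤ N → coeff (R := ℚ) n (↑(G ℚ b N) : ℚ⟦X⟧) = A n := by
    intro N n
    induction n using Nat.strong_induction_on with
    | _ n ih =>
      intro hn
      match n with
      | 0 => rw [coeff_zero_G, hA0]
      | Nat.succ m =>
        have h1 := hrec N m hn
        have h2 : ∑ k ∈ Finset.range (m + 1),
            coeff (R := ℚ) (m - k) (↑(G ℚ b N) : ℚ⟦X⟧) * (a (k + 1) : ℚ)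
            = ∑ k ∈ Finset.range (m + 1), A (m - k) * (a (k + 1) : ℚ) := by
          refine Finset.sum_congr rfl fun k hk => ?_
          rw [ih (m - k) (by omega) (by omega)]
        rw [h2, ← hArec m] at h1
        have hm : ((m : ℚ) + 1) ≠ 0 := by positivity
        exact mul_left_cancel₀ hm h1
  intro n
  obtain ⟨m, hm⟩ := exists_int_coeff b n n
  exact ⟨m, by rw [← key n n le_rfl, hm]⟩
end

section
/- Let (a_n)_{n≥1} be a sequence of integers. If the numbers A_n defined by A_0 = 1 and (n+1)·A_{n+1} = Σ_{k=0}^n A_{n-k}·a_{k+1} are all integers, then for every n ≥ 1 the sum Σ_{d|n} μ(n/d)·a_d is divisible by n. -/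
open Finset ArithmeticFunction

open PowerSeries

noncomputable section

/-- geometric series `(1 - X^d)⁻¹` -/
def Geo (d : ℕ) : PowerSeries ℤ := PowerSeries.mk fun k => if d ∣ k then 1 else 0

lemma geo_mul (d : ℕ) (hd : 1 ≤ d) : (1 - X ^ d) * Geo d = 1 := by
  have hd0 : d ≠ 0 := Nat.one_le_iff_ne_zero.mp hd
  ext m
  rw [sub_mul, one_mul, map_sub, PowerSeries.coeff_X_pow_mul']
  rcases Nat.eq_zero_or_pos m with rfl | hm
  · have : ¬ d ≤ 0 := by omega
    simp [Geo, PowerSeries.coeff_one, this, hd0]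
  · have hm0 : m ≠ 0 := hm.ne'
    by_cases h : d ≤ m
    · have h2 : d ∣ m ↔ d ∣ m - d := by
        constructor
        · intro hh; exact Nat.dvd_sub hh dvd_rfl
        · intro hh
          have := Nat.dvd_add hh (dvd_rfl (a := d))
          rwa [Nat.sub_add_cancel h] at this
      simp only [if_pos h, Geo, coeff_mk, PowerSeries.coeff_one, if_neg hm0, h2]
      split_ifs <;> ring
    · have hnd : ¬ d ∣ m := fun hdvd => h (Nat.le_of_dvd hm hdvd)
      simp [Geo, coeff_mk, PowerSeries.coeff_one, hm0, hnd, h]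

abbrev Dz : Derivation ℤ (PowerSeries ℤ) (PowerSeries ℤ) := PowerSeries.derivative ℤ

lemma LD_mul {F G B C' : PowerSeries ℤ} (hF : Dz F = F * B) (hG : Dz G = G * C') :
    Dz (F * G) = (F * G) * (B + C') := by
  rw [Derivation.leibniz, smul_eq_mul, smul_eq_mul, hF, hG]; ring

lemma LD_pow {F B : PowerSeries ℤ} (h : Dz F = F * B) (q : ℕ) :
    Dz (F ^ q) = F ^ q * ((q : PowerSeries ℤ) * B) := by
  induction q with
  | zero => simp
  | succ q ih =>
      rw [pow_succ, LD_mul ih h]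
      push_cast
      ring

lemma LD_prod {ι : Type} (s : Finset ι) (F B : ι → PowerSeries ℤ)
    (h : ∀ i ∈ s, Dz (F i) = F i * B i) :
    Dz (∏ i ∈ s, F i) = (∏ i ∈ s, F i) * (∑ i ∈ s, B i) := by
  induction s using Finset.cons_induction with
  | empty => simp
  | cons i s his ih =>
      rw [Finset.prod_cons, Finset.sum_cons,
        LD_mul (h i (Finset.mem_cons_self i s)) (ih fun j hj => h j (Finset.mem_cons_of_mem hj))]

lemma deriv_X_pow (d : ℕ) (hd : 1 ≤ d) :
    Dz (X ^ d) = (d : PowerSeries ℤ) * X ^ (d - 1) := by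
  rw [Derivation.leibniz_pow, show Dz X = 1 from PowerSeries.derivative_X (R := ℤ), smul_eq_mul, mul_one, nsmul_eq_mul]

lemma deriv_geo (d : ℕ) (hd : 1 ≤ d) :
    Dz (Geo d) = Geo d * ((d : PowerSeries ℤ) * X ^ (d - 1) * Geo d) := by
  have h0 : Dz ((1 - X ^ d) * Geo d) = 0 := by rw [geo_mul d hd]; simp
  rw [Derivation.leibniz, smul_eq_mul, smul_eq_mul] at h0
  have hd1 : Dz (1 - X ^ d) = -((d : PowerSeries ℤ) * X ^ (d - 1)) := by
    rw [map_sub, deriv_X_pow d hd]; simp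
  rw [hd1] at h0
  have h2 : (1 - X ^ d) * Dz (Geo d) = Geo d * ((d : PowerSeries ℤ) * X ^ (d - 1)) := by
    linear_combination h0
  calc Dz (Geo d) = ((1 - X ^ d) * Geo d) * Dz (Geo d) := by rw [geo_mul d hd, one_mul]
    _ = Geo d * ((1 - X ^ d) * Dz (Geo d)) := by ring
    _ = Geo d * ((d : PowerSeries ℤ) * X ^ (d - 1) * Geo d) := by rw [h2]; ring

lemma deriv_one_sub (d : ℕ) (hd : 1 ≤ d) :
    Dz (1 - X ^ d) = (1 - X ^ d) * (-((d : PowerSeries ℤ) * X ^ (d - 1) * Geo d)) := by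
  have : (1 - X ^ d) * (-((d : PowerSeries ℤ) * X ^ (d - 1) * Geo d))
      = -((d : PowerSeries ℤ) * X ^ (d - 1)) * ((1 - X ^ d) * Geo d) := by ring
  rw [this, geo_mul d hd, mul_one, map_sub, deriv_X_pow d hd]
  simp

lemma coeff_geoB (d : ℕ) (hd : 1 ≤ d) (j : ℕ) :
    PowerSeries.coeff (R := ℤ) j ((d : PowerSeries ℤ) * X ^ (d - 1) * Geo d)
      = if d ∣ (j + 1) then (d : ℤ) else 0 := by
  have heq : (d : PowerSeries ℤ) * X ^ (d - 1) * Geo d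
      = X ^ (d - 1) * (PowerSeries.C (R := ℤ) (d : ℤ) * Geo d) := by
    rw [map_natCast (PowerSeries.C (R := ℤ))]; ring
  rw [heq, PowerSeries.coeff_X_pow_mul', PowerSeries.coeff_C_mul]
  by_cases h : d - 1 ≤ j
  · rw [if_pos h]
    have hsub : j - (d - 1) = j + 1 - d := by omega
    have hdvd : d ∣ j - (d - 1) ↔ d ∣ j + 1 := by
      rw [hsub]
      constructor
      · intro hh
        have := Nat.dvd_add hh (dvd_refl d)
        rwa [Nat.sub_add_cancel (by omega : d ≤ j + 1)] at this
      · intro hh; exact Nat.dvd_sub hh dvd_rfl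
    simp only [Geo, coeff_mk, hdvd]
    split_ifs <;> ring
  · rw [if_neg h]
    have : ¬ d ∣ j + 1 := by
      intro hh
      have := Nat.le_of_dvd (by omega) hh
      omega
    simp [this]

lemma coeff_rec {F B : PowerSeries ℤ} (h : Dz F = F * B) (m : ℕ) :
    ((m : ℤ) + 1) * PowerSeries.coeff (R := ℤ) (m+1) F
      = ∑ k ∈ range (m+1), PowerSeries.coeff (R := ℤ) k F * PowerSeries.coeff (R := ℤ) (m-k) B := by
  have hc := congrArg (PowerSeries.coeff (R := ℤ) m) h
  rw [show PowerSeries.coeff (R := ℤ) m (Dz F) = _ from PowerSeries.coeff_derivative F m, PowerSeries.coeff_mul,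
    Finset.Nat.sum_antidiagonal_eq_sum_range_succ_mk] at hc
  rw [mul_comm]
  convert hc using 2

lemma key (u v α β : ℕ → ℤ) (n : ℕ) (hn : 1 ≤ n) (hu0 : u 0 = 1) (hv0 : v 0 = 1)
    (hu : ∀ m : ℕ, ((m : ℤ) + 1) * u (m+1) = ∑ k ∈ range (m+1), u k * α (m - k))
    (hv : ∀ m : ℕ, ((m : ℤ) + 1) * v (m+1) = ∑ k ∈ range (m+1), v k * β (m - k))
    (heq : ∀ j : ℕ, j < n - 1 → α j = β j) :
    (n : ℤ) * (u n - v n) = α (n-1) - β (n-1) := by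
  have huv : ∀ m, m < n → u m = v m := by
    intro m
    induction m using Nat.strong_induction_on with
    | _ m ih =>
      intro hmn
      rcases m with _ | m
      · rw [hu0, hv0]
      · have h1 := hu m
        have h2 := hv m
        have hsum : ∑ k ∈ range (m+1), u k * α (m-k)
            = ∑ k ∈ range (m+1), v k * β (m-k) := by
          apply Finset.sum_congr rfl
          intro k hk
          rw [Finset.mem_range] at hk
          rw [ih k (by omega) (by omega), heq (m-k) (by omega)]
        have h3 : ((m:ℤ)+1) * u (m+1) = ((m:ℤ)+1) * v (m+1) := by rw [h1, h2, hsum]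
        have hne : ((m:ℤ)+1) ≠ 0 := by positivity
        exact mul_left_cancel₀ hne h3
  obtain ⟨m, rfl⟩ : ∃ m, n = m + 1 := ⟨n - 1, by omega⟩
  simp only [Nat.add_sub_cancel] at heq ⊢
  have h1 := hu m
  have h2 := hv m
  push_cast at h1 h2 ⊢
  rw [mul_sub, h1, h2]
  rw [Finset.sum_range_succ' (fun k => u k * α (m-k)) m,
    Finset.sum_range_succ' (fun k => v k * β (m-k)) m]
  simp only [Nat.sub_zero, hu0, hv0, one_mul]
  have hsum2 : ∑ k ∈ range m, u (k+1) * α (m-(k+1))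
      = ∑ k ∈ range m, v (k+1) * β (m-(k+1)) := by
    apply Finset.sum_congr rfl
    intro k hk
    rw [Finset.mem_range] at hk
    rw [huv (k+1) (by omega), heq (m-(k+1)) (by omega)]
  rw [hsum2]
  ring

lemma moeb (a : ℕ → ℤ) (m : ℕ) (hm : 0 < m) :
    ∑ d ∈ m.divisors, (∑ e ∈ d.divisors, (ArithmeticFunction.moebius (d/e) : ℤ) * a e) = a m := by
  have := (ArithmeticFunction.sum_eq_iff_sum_mul_moebius_eq
    (R := ℤ) (f := fun d => ∑ e ∈ d.divisors, (ArithmeticFunction.moebius (d/e) : ℤ) * a e)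
    (g := a)).mpr ?_ m hm
  · exact this
  · intro nn hnn
    rw [← Nat.sum_divisorsAntidiagonal' (f := fun i j => (ArithmeticFunction.moebius i : ℤ) * a j)]
    apply Finset.sum_congr rfl
    intro x _
    simp

lemma hd_deriv (b : ℤ) (d : ℕ) (hd : 1 ≤ d) :
    Dz ((1 - X^d)^((-b).toNat) * (Geo d)^(b.toNat))
      = ((1 - X^d)^((-b).toNat) * (Geo d)^(b.toNat)) *
        (PowerSeries.C (R := ℤ) b * ((d : PowerSeries ℤ) * X^(d-1) * Geo d)) := by
  rw [LD_mul (LD_pow (deriv_one_sub d hd) ((-b).toNat)) (LD_pow (deriv_geo d hd) (b.toNat))]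
  congr 1
  have hC : ((b.toNat : ℕ) : PowerSeries ℤ) - (((-b).toNat : ℕ) : PowerSeries ℤ)
      = PowerSeries.C (R := ℤ) b := by
    rw [← map_natCast (PowerSeries.C (R := ℤ)), ← map_natCast (PowerSeries.C (R := ℤ)), ← map_sub]
    congr 1
    omega
  rw [← hC]
  ring

lemma sum_reflect' (f : ℕ → ℤ) (m : ℕ) :
    ∑ k ∈ range (m+1), f k = ∑ k ∈ range (m+1), f (m - k) := by
  simpa using (Finset.sum_range_reflect f (m+1)).symm

end

theorem stmt_3 (a : ℕ → ℤ) (A : ℕ → ℚ) (hA0 : A 0 = 1)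
    (hArec : ∀ n : ℕ, (n + 1 : ℚ) * A (n + 1) =
      ∑ k ∈ Finset.range (n + 1), A (n - k) * (a (k + 1) : ℚ))
    (hint : ∀ n : ℕ, ∃ m : ℤ, A n = (m : ℚ)) :
    ∀ n : ℕ, 1 ≤ n →
      (n : ℤ) ∣ ∑ d ∈ n.divisors, moebius (n / d) * a d := by
  choose Ai hAi using hint
  -- integer recurrence for Ai
  have hAi0 : Ai 0 = 1 := by
    have : (Ai 0 : ℚ) = 1 := by rw [← hAi 0, hA0]
    exact_mod_cast this
  have hu : ∀ m : ℕ, ((m : ℤ) + 1) * Ai (m+1)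
      = ∑ k ∈ range (m+1), Ai k * a (m - k + 1) := by
    intro m
    have hq := hArec m
    simp only [hAi] at hq
    have hz : ((m : ℤ) + 1) * Ai (m+1) = ∑ k ∈ range (m+1), Ai (m-k) * a (k+1) := by
      exact_mod_cast hq
    rw [hz, sum_reflect' (fun k => Ai (m-k) * a (k+1)) m]
    apply Finset.sum_congr rfl
    intro k hk
    rw [Finset.mem_range] at hk
    congr 2 <;> omega
  intro n
  induction n using Nat.strong_induction_on with
  | _ n ih =>
  intro hn
  set c : ℕ → ℤ := fun m => ∑ d ∈ m.divisors, moebius (m / d) * a d with hcdef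
  show (n : ℤ) ∣ c n
  set b : ℕ → ℤ := fun d => c d / d with hbdef
  have hdb : ∀ d : ℕ, 1 ≤ d → d < n → b d * (d : ℤ) = c d := by
    intro d h1 h2
    exact Int.ediv_mul_cancel (ih d h2 h1)
  have hmoeb : ∀ m : ℕ, 0 < m → ∑ d ∈ m.divisors, c d = a m := fun m hm => moeb a m hm
  -- the comparison series
  set Fz : PowerSeries ℤ :=
    ∏ d ∈ Finset.Ico 1 n, ((1 - X^d)^((-(b d)).toNat) * (Geo d)^((b d).toNat)) with hFzdef
  set Bz : PowerSeries ℤ :=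
    ∑ d ∈ Finset.Ico 1 n,
      PowerSeries.C (R := ℤ) (b d) * ((d : PowerSeries ℤ) * X^(d-1) * Geo d) with hBzdef
  have hF : Dz Fz = Fz * Bz := by
    apply LD_prod
    intro d hd
    rw [Finset.mem_Ico] at hd
    exact hd_deriv (b d) d hd.1
  have hv := coeff_rec hF
  have hv0 : PowerSeries.coeff (R := ℤ) 0 Fz = 1 := by
    rw [PowerSeries.coeff_zero_eq_constantCoeff, hFzdef, map_prod]
    apply Finset.prod_eq_one
    intro d hd
    rw [Finset.mem_Ico] at hd
    have hd0 : d ≠ 0 := by omega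
    rw [map_mul, map_pow, map_pow, map_sub, map_one, map_pow]
    have h1 : PowerSeries.constantCoeff (R := ℤ) X = 0 := PowerSeries.constantCoeff_X
    have h2 : PowerSeries.constantCoeff (R := ℤ) (Geo d) = 1 := by
      have : PowerSeries.coeff (R := ℤ) 0 (Geo d) = 1 := by simp [Geo]
      rwa [PowerSeries.coeff_zero_eq_constantCoeff] at this
    rw [h1, h2, zero_pow hd0]
    simp
  have hBcoeff : ∀ j : ℕ, PowerSeries.coeff (R := ℤ) j Bz
      = ∑ d ∈ Finset.Ico 1 n, (if d ∣ (j+1) then b d * (d : ℤ) else 0) := by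
    intro j
    rw [hBzdef, map_sum]
    apply Finset.sum_congr rfl
    intro d hd
    rw [Finset.mem_Ico] at hd
    rw [PowerSeries.coeff_C_mul, coeff_geoB d hd.1 j, mul_ite, mul_zero]
  have hfilter : ∀ m : ℕ, 1 ≤ m → m < n →
      ∑ d ∈ Finset.Ico 1 n, (if d ∣ m then b d * (d : ℤ) else 0)
        = ∑ d ∈ m.divisors, b d * (d : ℤ) := by
    intro m h1 h2
    rw [← Finset.sum_filter]
    apply Finset.sum_congr _ (fun _ _ => rfl)
    ext d
    simp only [Finset.mem_filter, Finset.mem_Ico, Nat.mem_divisors]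
    constructor
    · rintro ⟨_, hd⟩; exact ⟨hd, by omega⟩
    · rintro ⟨hd, _⟩
      have hd1 : 1 ≤ d := Nat.pos_of_dvd_of_pos hd (by omega)
      have hd2 : d ≤ m := Nat.le_of_dvd (by omega) hd
      exact ⟨⟨hd1, by omega⟩, hd⟩
  -- β agrees with a up to degree n-1
  have heq : ∀ j : ℕ, j < n - 1 → a (j+1) = PowerSeries.coeff (R := ℤ) j Bz := by
    intro j hj
    rw [hBcoeff j, hfilter (j+1) (by omega) (by omega)]
    have : ∑ d ∈ (j+1).divisors, b d * (d : ℤ) = ∑ d ∈ (j+1).divisors, c d := by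
      apply Finset.sum_congr rfl
      intro d hd
      rw [Nat.mem_divisors] at hd
      have hd1 : 1 ≤ d := Nat.pos_of_dvd_of_pos hd.1 (by omega)
      have hd2 : d ≤ j + 1 := Nat.le_of_dvd (by omega) hd.1
      exact hdb d hd1 (by omega)
    rw [this, hmoeb (j+1) (by omega)]
  -- final coefficient of Bz
  have hfiltern : Finset.filter (· ∣ n) (Finset.Ico 1 n) = n.divisors.erase n := by
    ext d
    simp only [Finset.mem_filter, Finset.mem_Ico, Finset.mem_erase, Nat.mem_divisors]
    constructor
    · rintro ⟨⟨hd1, hd2⟩, hd⟩; exact ⟨by omega, hd, by omega⟩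
    · rintro ⟨hne, hd, _⟩
      have hd1 : 1 ≤ d := Nat.pos_of_dvd_of_pos hd (by omega)
      have hd2 : d ≤ n := Nat.le_of_dvd (by omega) hd
      exact ⟨⟨hd1, by omega⟩, hd⟩
  have hBn : PowerSeries.coeff (R := ℤ) (n-1) Bz = a n - c n := by
    rw [hBcoeff (n-1)]
    rw [show n - 1 + 1 = n by omega]
    rw [← Finset.sum_filter, hfiltern]
    have herase : ∑ d ∈ n.divisors.erase n, b d * (d : ℤ)
        = ∑ d ∈ n.divisors.erase n, c d := by
      apply Finset.sum_congr rfl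
      intro d hd
      rw [Finset.mem_erase, Nat.mem_divisors] at hd
      have hd1 : 1 ≤ d := Nat.pos_of_dvd_of_pos hd.2.1 (by omega)
      have hd2 : d ≤ n := Nat.le_of_dvd (by omega) hd.2.1
      exact hdb d hd1 (by omega)
    rw [herase]
    have := Finset.sum_erase_add n.divisors c (Nat.mem_divisors_self n (by omega))
    rw [hmoeb n (by omega)] at this
    omega
  -- apply the key lemma
  have hkey := key Ai (fun m => PowerSeries.coeff (R := ℤ) m Fz) (fun j => a (j+1))
    (fun j => PowerSeries.coeff (R := ℤ) j Bz) n hn hAi0 hv0 hu hv heq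
  beta_reduce at hkey
  rw [show n - 1 + 1 = n by omega, hBn] at hkey
  exact ⟨Ai n - PowerSeries.coeff (R := ℤ) n Fz, by linarith [hkey]⟩
end

section
/- Let (a_n)_{n≥1} be a sequence of integers. Then n divides Σ_{d|n} μ(n/d)·a_d for all n ≥ 1 if and only if for every prime p and all natural numbers n, α with gcd(p, n) = 1 and α ≥ 1, one has a_{n·p^α} ≡ a_{n·p^{α-1}} (mod p^α). -/
open Finset ArithmeticFunction

private lemma key_ident (a : ℕ → ℤ) {p m : ℕ} (α : ℕ) (hp : p.Prime) (hm : 0 < m)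
    (hpm : ¬ p ∣ m) (hα : 1 ≤ α) :
    ∑ d ∈ (m * p ^ α).divisors, moebius ((m * p ^ α) / d) * a d
      = ∑ e ∈ m.divisors, moebius (m / e) * (a (e * p ^ α) - a (e * p ^ (α - 1))) := by
  obtain ⟨β, rfl⟩ : ∃ β, α = β + 1 := ⟨α - 1, (Nat.succ_pred_eq_of_pos hα).symm⟩
  have hm0 : m ≠ 0 := hm.ne'
  have hp0 : p ≠ 0 := hp.pos.ne'
  have hmp0 : m * p ^ (β + 1) ≠ 0 := by positivity
  have hre : ∑ d ∈ (m * p ^ (β + 1)).divisors, moebius ((m * p ^ (β + 1)) / d) * a d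
      = ∑ x ∈ m.divisors ×ˢ Finset.range (β + 2),
          (moebius (m / x.1) * moebius (p ^ (β + 1 - x.2))) * a (x.1 * p ^ x.2) := by
    refine (Finset.sum_nbij (fun x => x.1 * p ^ x.2) ?_ ?_ ?_ ?_).symm
    · rintro ⟨e, k⟩ hx
      simp only [Finset.mem_product, Nat.mem_divisors, Finset.mem_range] at hx
      exact Nat.mem_divisors.mpr
        ⟨mul_dvd_mul hx.1.1 (pow_dvd_pow _ (by omega)), hmp0⟩
    · rintro ⟨e, k⟩ hx ⟨e', k'⟩ hx' hee
      simp only [Finset.coe_product, Set.mem_prod, Finset.mem_coe, Nat.mem_divisors,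
        Finset.coe_range, Set.mem_Iio] at hx hx'
      have he0 : e ≠ 0 := fun h => hm0 (by simpa [h] using (zero_dvd_iff.mp (h ▸ hx.1.1)))
      have he'0 : e' ≠ 0 := fun h => hm0 (by simpa [h] using (zero_dvd_iff.mp (h ▸ hx'.1.1)))
      have hpe : ¬ p ∣ e := fun h => hpm (h.trans hx.1.1)
      have hpe' : ¬ p ∣ e' := fun h => hpm (h.trans hx'.1.1)
      simp only at hee
      have hk : k = k' := by
        have h1 : (e * p ^ k).factorization p = k := by
          rw [Nat.factorization_mul he0 (pow_ne_zero _ hp0),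
            Nat.Prime.factorization_pow hp, Finsupp.add_apply,
            Nat.factorization_eq_zero_of_not_dvd hpe]
          simp
        have h2 : (e' * p ^ k').factorization p = k' := by
          rw [Nat.factorization_mul he'0 (pow_ne_zero _ hp0),
            Nat.Prime.factorization_pow hp, Finsupp.add_apply,
            Nat.factorization_eq_zero_of_not_dvd hpe']
          simp
        rw [← h1, ← h2, hee]
      subst hk
      have := Nat.eq_of_mul_eq_mul_right (pow_pos hp.pos k) hee
      simp [this]
    · rintro d hd
      simp only [Finset.mem_coe, Nat.mem_divisors] at hd
      obtain ⟨e, q, he, hq, rfl⟩ := exists_dvd_and_dvd_of_dvd_mul hd.1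
      obtain ⟨k, hk, rfl⟩ := (Nat.dvd_prime_pow hp).mp hq
      exact ⟨⟨e, k⟩, by
        simp only [Finset.coe_product, Set.mem_prod, Finset.mem_coe, Nat.mem_divisors,
          Finset.coe_range, Set.mem_Iio]
        exact ⟨⟨he, hm0⟩, by omega⟩, rfl⟩
    · rintro ⟨e, k⟩ hx
      simp only [Finset.mem_product, Nat.mem_divisors, Finset.mem_range] at hx
      have he : e ∣ m := hx.1.1
      have hk : k ≤ β + 1 := by omega
      have hdiv : (m * p ^ (β + 1)) / (e * p ^ k) = (m / e) * p ^ (β + 1 - k) := by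
        rw [← Nat.div_mul_div_comm he (pow_dvd_pow _ hk), Nat.pow_div hk hp.pos]
      have hcop : Nat.Coprime (m / e) (p ^ (β + 1 - k)) := by
        refine Nat.Coprime.pow_right _ ?_
        exact (hp.coprime_iff_not_dvd.mpr (fun h => hpm (h.trans (Nat.div_dvd_of_dvd he)))).symm
      simp only [hdiv, isMultiplicative_moebius.map_mul_of_coprime hcop]
  rw [hre, Finset.sum_product]
  refine Finset.sum_congr rfl fun e he => ?_
  rw [Finset.sum_range_succ, Finset.sum_range_succ]
  have h0 : ∀ k ∈ Finset.range β,
      (moebius (m / e) * moebius (p ^ (β + 1 - k))) * a (e * p ^ k) = 0 := by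
    intro k hk
    rw [Finset.mem_range] at hk
    rw [moebius_apply_prime_pow hp (by omega), if_neg (by omega)]
    ring
  rw [Finset.sum_eq_zero h0]
  have h1 : β + 1 - β = 1 := by omega
  rw [h1, moebius_apply_prime_pow hp one_ne_zero, if_pos rfl]
  have h2 : β + 1 - (β + 1) = 0 := by omega
  rw [h2, pow_zero]
  simp only [Nat.add_sub_cancel]
  ring_nf
  rw [ArithmeticFunction.moebius_apply_one]
  ring

theorem stmt_4 (a : ℕ → ℤ) :
    (∀ n : ℕ, 1 ≤ n → (n : ℤ) ∣ ∑ d ∈ n.divisors, moebius (n / d) * a d) ↔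
    (∀ p n α : ℕ, p.Prime → 0 < n → Nat.Coprime p n → 1 ≤ α →
      (p : ℤ) ^ α ∣ a (n * p ^ α) - a (n * p ^ (α - 1))) := by
  constructor
  · intro h p n α hp hn hcop hα
    induction n using Nat.strong_induction_on with
    | _ n ih =>
    have hn0 : n ≠ 0 := hn.ne'
    have hpm : ¬ p ∣ n := hp.coprime_iff_not_dvd.mp hcop
    have hkey := key_ident a α hp hn hpm hα
    have hdvd1 : (p : ℤ) ^ α ∣ ∑ d ∈ (n * p ^ α).divisors, moebius ((n * p ^ α) / d) * a d := by
      refine dvd_trans ?_ (h (n * p ^ α) (Nat.one_le_iff_ne_zero.mpr (Nat.mul_ne_zero hn0 (pow_ne_zero _ hp.pos.ne'))))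
      exact_mod_cast Int.natCast_dvd_natCast.mpr (Dvd.intro_left n rfl)
    rw [hkey] at hdvd1
    have hmem : n ∈ n.divisors := Nat.mem_divisors_self n hn0
    rw [← Finset.add_sum_erase _ _ hmem, Nat.div_self hn, moebius_apply_one, one_mul] at hdvd1
    have hrest : (p : ℤ) ^ α ∣ ∑ e ∈ n.divisors.erase n,
        moebius (n / e) * (a (e * p ^ α) - a (e * p ^ (α - 1))) := by
      refine Finset.dvd_sum fun e hee => ?_
      have he : e ∣ n := (Nat.mem_divisors.mp (Finset.mem_of_mem_erase hee)).1
      have hene : e ≠ n := Finset.ne_of_mem_erase hee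
      have helt : e < n := lt_of_le_of_ne (Nat.le_of_dvd hn he) hene
      have he0 : 0 < e := Nat.pos_of_mem_divisors (Finset.mem_of_mem_erase hee)
      exact (ih e helt he0 (hcop.coprime_dvd_right he)).mul_left _
    have := (dvd_sub hdvd1 hrest)
    simpa using this
  · intro h n hn
    have hn0 : n ≠ 0 := Nat.one_le_iff_ne_zero.mp hn
    have hfac : (n : ℤ) = ∏ p ∈ n.primeFactors, (p : ℤ) ^ (n.factorization p) := by
      conv_lhs => rw [← Nat.factorization_prod_pow_eq_self hn0]
      rw [Nat.prod_factorization_eq_prod_primeFactors]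
      push_cast
      rfl
    rw [hfac]
    refine Finset.prod_dvd_of_coprime ?_ ?_
    · intro q hq r hr hqr
      have hq' : q.Prime := Nat.prime_of_mem_primeFactors hq
      have hr' : r.Prime := Nat.prime_of_mem_primeFactors hr
      have : Nat.Coprime (q ^ n.factorization q) (r ^ n.factorization r) :=
        ((Nat.coprime_primes hq' hr').mpr hqr).pow _ _
      exact Nat.isCoprime_iff_coprime.mpr this
    · intro q hq
      have hq' : q.Prime := Nat.prime_of_mem_primeFactors hq
      set α := n.factorization q with hαdef
      have hα : 1 ≤ α := (Nat.Prime.factorization_pos_of_dvd hq' hn0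
        (Nat.dvd_of_mem_primeFactors hq))
      set m := ordCompl[q] n with hmdef
      have hm0 : 0 < m := Nat.ordCompl_pos q hn0
      have hqm : ¬ q ∣ m := Nat.not_dvd_ordCompl hq' hn0
      have hn' : m * q ^ α = n := by
        rw [mul_comm]; exact Nat.ordProj_mul_ordCompl_eq_self n q
      calc (q : ℤ) ^ α ∣ ∑ e ∈ m.divisors,
            moebius (m / e) * (a (e * q ^ α) - a (e * q ^ (α - 1))) := by
            refine Finset.dvd_sum fun e hee => ?_
            have he : e ∣ m := (Nat.mem_divisors.mp hee).1
            have he0 : 0 < e := Nat.pos_of_mem_divisors hee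
            exact (h q e α hq' he0 ((hq'.coprime_iff_not_dvd.mpr hqm).coprime_dvd_right he)
              hα).mul_left _
        _ = ∑ d ∈ n.divisors, moebius (n / d) * a d := by
            rw [← key_ident a α hq' hm0 hqm hα, hn']
end

section
/- Let (a_n)_{n≥1} be integers such that for every prime p, every n coprime to p, and every α ≥ 1, a_{n·p^α} ≡ a_{n·p^{α-1}} (mod p^α). Then for every n ≥ 1, n divides Σ_{d|n} μ(n/d)·a_d. -/
open Finset ArithmeticFunction

lemma key_lemma (a : ℕ → ℤ)
    (hcong : ∀ p n α : ℕ, p.Prime → 0 < n → Nat.Coprime p n → 1 ≤ α →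
      (p : ℤ) ^ α ∣ a (n * p ^ α) - a (n * p ^ (α - 1)))
    (p m α : ℕ) (hp : p.Prime) (hm : 0 < m) (hpm : ¬ p ∣ m) (hα : 1 ≤ α) :
    (p : ℤ) ^ α ∣ ∑ d ∈ (m * p ^ α).divisors, moebius ((m * p ^ α) / d) * a d := by
  have hn0 : m * p ^ α ≠ 0 := Nat.mul_ne_zero hm.ne' (pow_ne_zero α hp.pos.ne')
  -- rewrite the sum as a double sum over divisors of m and of p^α
  have hre : ∑ d ∈ (m * p ^ α).divisors, moebius ((m * p ^ α) / d) * a d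
      = ∑ x ∈ m.divisors ×ˢ (p ^ α).divisors,
          moebius ((m * p ^ α) / (x.1 * x.2)) * a (x.1 * x.2) := by
    rw [Nat.divisors_mul, ← Finset.image_mul_product, Finset.sum_image]
    rintro ⟨e₁, j₁⟩ h₁ ⟨e₂, j₂⟩ h₂ (heq : e₁ * j₁ = e₂ * j₂)
    simp only [Finset.mem_coe, Finset.mem_product, Nat.mem_divisors] at h₁ h₂
    have hc₁ : Nat.Coprime e₁ j₂ :=
      Nat.Coprime.coprime_dvd_right h₂.2.1 ((Nat.Prime.coprime_iff_not_dvd hp |>.2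
        (fun h => hpm (h.trans h₁.1.1))).symm.pow_right α)
    have hc₂ : Nat.Coprime e₂ j₁ :=
      Nat.Coprime.coprime_dvd_right h₁.2.1 ((Nat.Prime.coprime_iff_not_dvd hp |>.2
        (fun h => hpm (h.trans h₂.1.1))).symm.pow_right α)
    have he : e₁ = e₂ := Nat.dvd_antisymm
      (hc₁.dvd_of_dvd_mul_right (heq ▸ Dvd.intro j₁ rfl))
      (hc₂.dvd_of_dvd_mul_right (heq ▸ Dvd.intro j₂ rfl))
    have he₁ : e₁ ≠ 0 := by
      rintro rfl; exact absurd (zero_dvd_iff.mp h₁.1.1) hm.ne'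
    have hj : j₁ = j₂ := by
      subst he
      exact Nat.eq_of_mul_eq_mul_left (Nat.pos_of_ne_zero he₁) heq
    simp [he, hj]
  rw [hre, Finset.sum_product]
  refine Finset.dvd_sum fun e he => ?_
  rw [Nat.mem_divisors] at he
  have he0 : 0 < e := Nat.pos_of_dvd_of_pos he.1 hm
  have hpe : ¬ p ∣ e := fun h => hpm (h.trans he.1)
  have hpme : ¬ p ∣ m / e := fun h => hpm (h.trans (Nat.div_dvd_of_dvd he.1))
  -- compute the inner sum over divisors of p^α
  rw [Nat.sum_divisors_prime_pow hp]
  have hdivcalc : ∀ i, i ≤ α → m * p ^ α / (e * p ^ i) = (m / e) * p ^ (α - i) := by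
    intro i hi
    rw [Nat.mul_div_mul_comm he.1 (pow_dvd_pow p hi), Nat.pow_div hi hp.pos]
  have hterm : ∀ i ∈ Finset.range (α + 1),
      (moebius (m * p ^ α / (e * p ^ i)) : ℤ) * a (e * p ^ i)
      = (moebius (m / e) : ℤ) * moebius (p ^ (α - i)) * a (e * p ^ i) := by
    intro i hi
    rw [Finset.mem_range] at hi
    rw [hdivcalc i (Nat.lt_succ_iff.mp hi),
      isMultiplicative_moebius.map_mul_of_coprime
        (((Nat.Prime.coprime_iff_not_dvd hp).2 hpme).symm.pow_right _)]
  rw [Finset.sum_congr rfl hterm]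
  have hsub : ({α - 1, α} : Finset ℕ) ⊆ Finset.range (α + 1) := by
    intro x hx
    simp only [Finset.mem_insert, Finset.mem_singleton] at hx
    rcases hx with rfl | rfl <;> simp [Nat.lt_succ_iff]
  rw [← Finset.sum_subset hsub (by
    intro i hi hni
    simp only [Finset.mem_insert, Finset.mem_singleton, not_or] at hni
    rw [Finset.mem_range] at hi
    have h2 : α - i ≠ 0 ∧ α - i ≠ 1 := by omega
    rw [moebius_apply_prime_pow hp h2.1, if_neg h2.2]
    ring)]
  have hne : α - 1 ≠ α := by omega
  rw [Finset.sum_pair hne]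
  have h1 : α - (α - 1) = 1 := by omega
  have h2 : α - α = 0 := by omega
  rw [h1, h2, pow_zero, pow_one, moebius_apply_prime hp]
  have : (moebius (m / e) : ℤ) * (-1) * a (e * p ^ (α - 1))
      + (moebius (m / e) : ℤ) * (moebius 1 : ℤ) * a (e * p ^ α)
      = (moebius (m / e) : ℤ) * (a (e * p ^ α) - a (e * p ^ (α - 1))) := by
    simp only [ArithmeticFunction.moebius_apply_one]
    ring
  rw [this]
  exact Dvd.dvd.mul_left
    (hcong p e α hp he0 ((Nat.Prime.coprime_iff_not_dvd hp).2 hpe) hα) _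

theorem stmt_6 (a : ℕ → ℤ)
    (hcong : ∀ p n α : ℕ, p.Prime → 0 < n → Nat.Coprime p n → 1 ≤ α →
      (p : ℤ) ^ α ∣ a (n * p ^ α) - a (n * p ^ (α - 1))) :
    ∀ n : ℕ, 1 ≤ n → (n : ℤ) ∣ ∑ d ∈ n.divisors, moebius (n / d) * a d := by
  intro n hn
  have hn0 : n ≠ 0 := by omega
  have hfact : (∏ p ∈ n.primeFactors, (p : ℤ) ^ n.factorization p) = (n : ℤ) := by
    have h := Nat.factorization_prod_pow_eq_self hn0
    calc ∏ p ∈ n.primeFactors, (p:ℤ) ^ n.factorization p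
        = ((n.factorization.prod (· ^ ·) : ℕ) : ℤ) := by
          rw [Finsupp.prod]; push_cast; rfl
      _ = n := by rw [h]
  rw [← hfact]
  apply Finset.prod_dvd_of_coprime
  · intro p hp q hq hpq
    have hp' := Nat.prime_of_mem_primeFactors hp
    have hq' := Nat.prime_of_mem_primeFactors hq
    exact ((Nat.isCoprime_iff_coprime.mpr
      ((Nat.coprime_primes hp' hq').mpr hpq)).pow : IsCoprime ((p:ℤ)^_) ((q:ℤ)^_))
  · intro p hp
    have hp' := Nat.prime_of_mem_primeFactors hp
    set α := n.factorization p with hαdef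
    have hα : 1 ≤ α := (Nat.Prime.factorization_pos_of_dvd hp'
      hn0 (Nat.dvd_of_mem_primeFactors hp))
    have hmp : ¬ p ∣ ordCompl[p] n := Nat.not_dvd_ordCompl hp' hn0
    have hm : 0 < ordCompl[p] n := Nat.ordCompl_pos p hn0
    have hrw : n = ordCompl[p] n * p ^ α := by
      rw [mul_comm]; exact (Nat.ordProj_mul_ordCompl_eq_self n p).symm
    rw [hrw]
    exact key_lemma a hcong p (ordCompl[p] n) α hp' hm hmp hα
end

section
/- Suppose the sequence of integers (a_m)_{m≥1} satisfies: for every prime p, all e ≥ 1, n ≥ 1, m ≥ 0 with p^{e-1}(p-1) | w, one has Σ_{s=0}^n (-1)^s C(n,s) a_{m+sw} ≡ 0 (mod gcd(p^m, p^{ne})). Then for every natural number b, every prime p, every n coprime to p, and every α ≥ 1: a_{b+n·p^α} ≡ a_{b+n·p^{α-1}} (mod p^α). -/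
open Finset

theorem stmt_7 (a : ℕ → ℤ)
    (hKummer : ∀ p e n m w : ℕ, p.Prime → 1 ≤ e → 1 ≤ n →
      p ^ (e - 1) * (p - 1) ∣ w →
      ((Nat.gcd (p ^ m) (p ^ (n * e)) : ℤ)) ∣
        ∑ s ∈ Finset.range (n + 1), (-1 : ℤ) ^ s * (n.choose s) * a (m + s * w)) :
    ∀ b p n α : ℕ, 1 ≤ b → p.Prime → 0 < n → Nat.Coprime p n → 1 ≤ α →
      (p : ℤ) ^ α ∣ a (b + n * p ^ α) - a (b + n * p ^ (α - 1)) := by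
  intro b p n α hb hp hn _ hα
  set m := b + n * p ^ (α - 1) with hm
  set w := n * p ^ (α - 1) * (p - 1) with hwdef
  have hdvd : p ^ (α - 1) * (p - 1) ∣ w := ⟨n, by ring⟩
  have key := hKummer p α 1 m w hp hα le_rfl hdvd
  have hmw : m + w = b + n * p ^ α := by
    have hp2 : 2 ≤ p := hp.two_le
    have hpow : p ^ (α - 1) * p = p ^ α := by
      rw [← pow_succ]
      congr 1
      omega
    have hp1 : p - 1 + 1 = p := by omega
    have : n * p ^ (α - 1) + n * p ^ (α - 1) * (p - 1) = n * p ^ α := by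
      calc n * p ^ (α - 1) + n * p ^ (α - 1) * (p - 1)
          = n * p ^ (α - 1) * ((p - 1) + 1) := by ring
        _ = n * p ^ α := by rw [hp1, mul_assoc, hpow]
    omega
  have hsum : ∑ s ∈ Finset.range (1 + 1), (-1 : ℤ) ^ s * ((1 : ℕ).choose s) * a (m + s * w)
      = a m - a (m + w) := by
    simp [Finset.sum_range_succ]
    ring
  rw [hsum, hmw] at key
  have hma : α ≤ m := by
    have h1 : α ≤ 2 ^ (α - 1) + 1 := by
      have := Nat.lt_two_pow_self (n := α - 1)
      omega
    have h2 : 2 ^ (α - 1) ≤ p ^ (α - 1) := Nat.pow_le_pow_left hp.two_le _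
    have h3 : p ^ (α - 1) ≤ n * p ^ (α - 1) := Nat.le_mul_of_pos_left _ hn
    omega
  have hg : (p : ℤ) ^ α ∣ ((Nat.gcd (p ^ m) (p ^ (1 * α)) : ℤ)) := by
    have : (p : ℕ) ^ α ∣ Nat.gcd (p ^ m) (p ^ (1 * α)) :=
      Nat.dvd_gcd (pow_dvd_pow p hma) (by rw [one_mul])
    exact_mod_cast Int.natCast_dvd_natCast.mpr this
  have := hg.trans key
  have : (p : ℤ) ^ α ∣ -(a m - a (b + n * p ^ α)) := this.neg_right
  simpa [neg_sub, hm] using this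
end

section
/- For any sequence of integers (a_m) satisfying, for a fixed prime p: a_{m + p^{e-1}(p-1)} ≡ a_m (mod p^e) whenever m ≥ e ≥ 1, it follows that a_{b+n·p^α} ≡ a_{b+n·p^{α-1}} (mod p^α) for all natural numbers b ≥ 1, α ≥ 1, and n coprime to p. -/
theorem stmt_8 (p : ℕ) (hp : p.Prime) (a : ℕ → ℤ)
    (hcong : ∀ m e : ℕ, 1 ≤ e → e ≤ m →
      (p : ℤ) ^ e ∣ a (m + p ^ (e - 1) * (p - 1)) - a m) :
    ∀ b n α : ℕ, 1 ≤ b → 1 ≤ α → 0 < n → Nat.Coprime p n →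
      (p : ℤ) ^ α ∣ a (b + n * p ^ α) - a (b + n * p ^ (α - 1)) := by
  intro b n α hb hα hn hcop
  set s := p ^ (α - 1) * (p - 1) with hs
  have key : ∀ m, α ≤ m → ∀ k : ℕ, (p : ℤ) ^ α ∣ a (m + k * s) - a m := by
    intro m hmle k
    induction k with
    | zero => simp
    | succ k ih =>
        have h1 := hcong (m + k * s) α hα (le_trans hmle (Nat.le_add_right _ _))
        have heq : m + (k + 1) * s = m + k * s + s := by ring
        rw [heq, hs]
        have := dvd_add h1 ih
        simpa using this
  have hαp : α ≤ p ^ (α - 1) := by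
    have h2 : α - 1 < 2 ^ (α - 1) := Nat.lt_two_pow_self
    have h2' : α ≤ 2 ^ (α - 1) := by omega
    exact le_trans h2' (Nat.pow_le_pow_left hp.two_le _)
  have hmle : α ≤ b + n * p ^ (α - 1) := by
    have : p ^ (α - 1) ≤ n * p ^ (α - 1) := Nat.le_mul_of_pos_left _ hn
    omega
  have hkey := key (b + n * p ^ (α - 1)) hmle n
  have heq : b + n * p ^ (α - 1) + n * s = b + n * p ^ α := by
    rw [hs]
    have hp1 : 1 ≤ p := hp.one_le
    have : p ^ (α - 1) * p = p ^ α := by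
      rw [← pow_succ]
      congr 1
      omega
    have hsub : p ^ (α - 1) * (p - 1) = p ^ α - p ^ (α - 1) := by
      rw [Nat.mul_sub, mul_one, this]
    rw [hsub]
    have hle : p ^ (α - 1) ≤ p ^ α := Nat.pow_le_pow_right hp1 (by omega)
    zify [hle]
    ring
  rw [heq] at hkey
  exact hkey
end

section
/- For every prime p, every positive integer n coprime to p, and every α ≥ 1, E_{2·n·p^α} ≡ E_{2·n·p^{α-1}} (mod p^α), where E_k are the Euler numbers defined by 1/cosh(x) = Σ_{n=0}^∞ (E_n/n!) x^n. -/
/-- The power series of `cosh x = ∑ x^{2k}/(2k)!` over `ℚ`. -/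
noncomputable def coshSeries : PowerSeries ℚ :=
  PowerSeries.mk fun n => if Even n then ((n.factorial : ℚ))⁻¹ else 0

/-- The Euler numbers, defined by `1 / cosh x = ∑ Eₙ xⁿ / n!`. -/
noncomputable def eulerNumber (n : ℕ) : ℚ :=
  (n.factorial : ℚ) * PowerSeries.coeff n coshSeries⁻¹

open Finset

/-- k-th finite difference sums: `D k t = ∑ (-1)^j C(k,j) j^t`. -/
def DD (k t : ℕ) : ℤ := ∑ j ∈ range (k+1), (-1)^j * (k.choose j : ℤ) * (j : ℤ)^t

lemma DD_zero (t : ℕ) : DD 0 t = (0:ℤ)^t := by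
  simp [DD]

lemma DD_t_zero (k : ℕ) : DD k 0 = if k = 0 then 1 else 0 := by
  rcases Nat.eq_zero_or_pos k with rfl | hk
  · simp [DD]
  · simp only [DD, pow_zero, mul_one]
    rw [if_neg hk.ne']
    have := Int.alternating_sum_range_choose_of_ne (n := k) hk.ne'
    simpa using this

lemma DD_rec (k t : ℕ) :
    DD (k+1) (t+1) = -(k+1) * ∑ s ∈ range (t+1), (t.choose s : ℤ) * DD k s := by
  have h1 : DD (k+1) (t+1)
      = ∑ i ∈ range (k+1), (-1)^(i+1) * ((k+1).choose (i+1) : ℤ) * ((i:ℤ)+1)^(t+1) := by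
    rw [DD, Finset.sum_range_succ']
    simp [pow_succ]
  rw [h1]
  have h2 : ∀ i : ℕ, (-1:ℤ)^(i+1) * ((k+1).choose (i+1) : ℤ) * ((i:ℤ)+1)^(t+1)
      = -(k+1) * ((-1)^i * (k.choose i : ℤ) * ((i:ℤ)+1)^t) := by
    intro i
    have hc : ((k+1) * k.choose i : ℤ) = ((k+1).choose (i+1) : ℤ) * (i+1) := by
      exact_mod_cast congrArg (Nat.cast (R := ℤ)) (Nat.add_one_mul_choose_eq k i)
    have : ((i:ℤ)+1)^(t+1) = ((i:ℤ)+1)^t * ((i:ℤ)+1) := by ring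
    rw [this]
    linear_combination ((-1:ℤ)^i * ((i:ℤ)+1)^t) * hc
  calc ∑ i ∈ range (k+1), (-1:ℤ)^(i+1) * ((k+1).choose (i+1) : ℤ) * ((i:ℤ)+1)^(t+1)
      = ∑ i ∈ range (k+1), -(k+1) * ((-1:ℤ)^i * (k.choose i : ℤ) * ((i:ℤ)+1)^t) := by
        exact Finset.sum_congr rfl fun i _ => h2 i
    _ = -(k+1) * ∑ i ∈ range (k+1), (-1:ℤ)^i * (k.choose i : ℤ) * ((i:ℤ)+1)^t := by
        rw [Finset.mul_sum]
    _ = -(k+1) * ∑ s ∈ range (t+1), (t.choose s : ℤ) * DD k s := by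
        congr 1
        have hexp : ∀ i : ℕ, ((i:ℤ)+1)^t = ∑ s ∈ range (t+1), (i:ℤ)^s * (t.choose s : ℤ) := by
          intro i
          simpa using add_pow (i:ℤ) 1 t
        calc ∑ i ∈ range (k+1), (-1:ℤ)^i * (k.choose i : ℤ) * ((i:ℤ)+1)^t
            = ∑ i ∈ range (k+1), ∑ s ∈ range (t+1),
                (t.choose s : ℤ) * ((-1:ℤ)^i * (k.choose i : ℤ) * (i:ℤ)^s) := by
              refine Finset.sum_congr rfl fun i _ => ?_
              rw [hexp i, Finset.mul_sum]
              exact Finset.sum_congr rfl fun s _ => by ring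
          _ = ∑ s ∈ range (t+1), (t.choose s : ℤ) * DD k s := by
              rw [Finset.sum_comm]
              refine Finset.sum_congr rfl fun s _ => ?_
              rw [DD, Finset.mul_sum]

lemma DD_eq_zero_of_lt : ∀ k t : ℕ, t < k → DD k t = 0 := by
  intro k
  induction k with
  | zero => intro t ht; omega
  | succ k ih =>
    intro t ht
    rcases t with _ | t
    · rw [DD_t_zero]; simp
    · rw [DD_rec]
      have : ∀ s ∈ range (t+1), (t.choose s : ℤ) * DD k s = 0 := by
        intro s hs
        rw [ih s (by simp at hs; omega), mul_zero]
      rw [Finset.sum_congr rfl this]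
      simp

lemma factorial_dvd_DD : ∀ k t : ℕ, (k.factorial : ℤ) ∣ DD k t := by
  intro k
  induction k with
  | zero => intro t; simp
  | succ k ih =>
    intro t
    rcases t with _ | t
    · rw [DD_t_zero]; simp
    · rw [DD_rec]
      have : (k.factorial : ℤ) ∣ ∑ s ∈ range (t+1), (t.choose s : ℤ) * DD k s :=
        Finset.dvd_sum fun s _ => Dvd.dvd.mul_left (ih s) _
      rw [Nat.factorial_succ]
      push_cast
      have h2 := mul_dvd_mul_left ((k:ℤ)+1) this
      have : -((k:ℤ)+1) * ∑ s ∈ range (t+1), (t.choose s : ℤ) * DD k s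
          = -( ((k:ℤ)+1) * ∑ s ∈ range (t+1), (t.choose s : ℤ) * DD k s) := by ring
      rw [this]
      exact (dvd_neg).2 h2

/-- `T k n = ∑_j (-1)^j C(k,j) (2j+1)^n`. -/
def TT (k n : ℕ) : ℤ := ∑ j ∈ range (k+1), (-1)^j * (k.choose j : ℤ) * (2*(j:ℤ)+1)^n

lemma TT_expand (k n : ℕ) :
    TT k n = ∑ t ∈ range (n+1), (n.choose t : ℤ) * 2^t * DD k t := by
  have hexp : ∀ j : ℕ, (2*(j:ℤ)+1)^n
      = ∑ t ∈ range (n+1), (n.choose t : ℤ) * 2^t * (j:ℤ)^t := by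
    intro j
    have h := add_pow (2*(j:ℤ)) 1 n
    rw [h]
    exact Finset.sum_congr rfl fun t _ => by ring
  calc TT k n = ∑ j ∈ range (k+1), ∑ t ∈ range (n+1),
        (n.choose t : ℤ) * 2^t * ((-1)^j * (k.choose j : ℤ) * (j:ℤ)^t) := by
        refine Finset.sum_congr rfl fun j _ => ?_
        rw [hexp j, Finset.mul_sum]
        exact Finset.sum_congr rfl fun t _ => by ring
    _ = ∑ t ∈ range (n+1), (n.choose t : ℤ) * 2^t * DD k t := by
        rw [Finset.sum_comm]
        refine Finset.sum_congr rfl fun t _ => ?_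
        rw [DD, Finset.mul_sum]

lemma TT_eq_zero_of_lt (k n : ℕ) (h : n < k) : TT k n = 0 := by
  rw [TT_expand]
  refine Finset.sum_eq_zero fun t ht => ?_
  rw [DD_eq_zero_of_lt k t (by simp at ht; omega), mul_zero]

lemma two_pow_dvd_TT (k n : ℕ) : (2:ℤ)^k ∣ TT k n := by
  rw [TT_expand]
  refine Finset.dvd_sum fun t ht => ?_
  rcases lt_or_ge t k with h | h
  · rw [DD_eq_zero_of_lt k t h, mul_zero]; exact dvd_zero _
  · have : (2:ℤ)^k ∣ 2^t := pow_dvd_pow 2 h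
    exact (this.mul_left _).mul_right _

lemma DD_pascal (k n : ℕ) :
    ∑ j ∈ range (k+1), (-1:ℤ)^j * (k.choose j : ℤ) * ((j:ℤ)+1)^n
      = DD k n - DD (k+1) n := by
  have h1 : DD (k+1) n
      = ∑ i ∈ range (k+1), (-1:ℤ)^(i+1) * ((k+1).choose (i+1) : ℤ) * ((i:ℤ)+1)^n
        + (0:ℤ)^n := by
    rw [DD, Finset.sum_range_succ']
    simp
  have h2 : ∀ i : ℕ, (-1:ℤ)^(i+1) * ((k+1).choose (i+1) : ℤ) * ((i:ℤ)+1)^n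
      = (-1)^(i+1) * (k.choose (i+1) : ℤ) * ((i:ℤ)+1)^n
        - (-1)^i * (k.choose i : ℤ) * ((i:ℤ)+1)^n := by
    intro i
    rw [Nat.choose_succ_succ k i]
    push_cast
    ring
  have h3 : ∑ i ∈ range (k+1), (-1:ℤ)^(i+1) * (k.choose (i+1) : ℤ) * ((i:ℤ)+1)^n
      = DD k n - (0:ℤ)^n := by
    have h4 : DD k n = ∑ i ∈ range k, (-1:ℤ)^(i+1) * (k.choose (i+1) : ℤ) * ((i:ℤ)+1)^n
        + (0:ℤ)^n := by
      rw [DD, Finset.sum_range_succ']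
      simp [add_comm]
    rw [Finset.sum_range_succ, h4]
    simp
  rw [h1, Finset.sum_congr rfl fun i _ => h2 i, Finset.sum_sub_distrib, h3]
  ring

lemma BIN (n : ℕ) (x : ℤ) :
    ∑ m ∈ range (n+1), (2:ℤ) * (if Even (n-m) then (n.choose m : ℤ) else 0) * x^m
      = (x+1)^n + (x-1)^n := by
  rw [add_pow x 1 n, sub_eq_add_neg, add_pow x (-1) n, ← Finset.sum_add_distrib]
  refine Finset.sum_congr rfl fun m hm => ?_
  rcases Nat.even_or_odd (n - m) with he | ho
  · rw [if_pos he, he.neg_one_pow]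
    ring
  · rw [if_neg (by simpa using ho), ho.neg_one_pow]
    ring

lemma W_eq (n k : ℕ) :
    2 * ∑ m ∈ range (n+1), (if Even (n-m) then (n.choose m : ℤ) else 0) * TT k m
      = 2^n * (2 * DD k n - DD (k+1) n) := by
  have swap : ∑ m ∈ range (n+1), (if Even (n-m) then (n.choose m : ℤ) else 0) * TT k m
      = ∑ j ∈ range (k+1), (-1:ℤ)^j * (k.choose j : ℤ)
          * ∑ m ∈ range (n+1), (if Even (n-m) then (n.choose m : ℤ) else 0) * (2*(j:ℤ)+1)^m := by
    simp only [TT, Finset.mul_sum, Finset.sum_mul]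
    rw [Finset.sum_comm]
    exact Finset.sum_congr rfl fun j _ => Finset.sum_congr rfl fun m _ => by ring
  rw [swap, Finset.mul_sum]
  have inner : ∀ j : ℕ,
      2 * ((-1:ℤ)^j * (k.choose j : ℤ)
          * ∑ m ∈ range (n+1), (if Even (n-m) then (n.choose m : ℤ) else 0) * (2*(j:ℤ)+1)^m)
      = 2^n * ((-1:ℤ)^j * (k.choose j : ℤ) * (((j:ℤ)+1)^n + (j:ℤ)^n)) := by
    intro j
    have hb : ∑ m ∈ range (n+1), (2:ℤ) * (if Even (n-m) then (n.choose m : ℤ) else 0)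
        * (2*(j:ℤ)+1)^m = (2*(j:ℤ)+2)^n + (2*(j:ℤ))^n := by
      have := BIN n (2*(j:ℤ)+1)
      convert this using 2 <;> ring
    have hb2 : 2 * ∑ m ∈ range (n+1), (if Even (n-m) then (n.choose m : ℤ) else 0)
        * (2*(j:ℤ)+1)^m = (2*(j:ℤ)+2)^n + (2*(j:ℤ))^n := by
      rw [Finset.mul_sum, ← hb]
      exact Finset.sum_congr rfl fun m _ => by ring
    have e1 : (2*(j:ℤ)+2)^n = 2^n * ((j:ℤ)+1)^n := by
      rw [← mul_pow]; ring_nf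
    have e2 : (2*(j:ℤ))^n = 2^n * (j:ℤ)^n := by
      rw [mul_pow]
    calc 2 * ((-1:ℤ)^j * (k.choose j : ℤ)
          * ∑ m ∈ range (n+1), (if Even (n-m) then (n.choose m : ℤ) else 0) * (2*(j:ℤ)+1)^m)
        = (-1:ℤ)^j * (k.choose j : ℤ)
          * (2 * ∑ m ∈ range (n+1), (if Even (n-m) then (n.choose m : ℤ) else 0) * (2*(j:ℤ)+1)^m) := by
          ring
      _ = (-1:ℤ)^j * (k.choose j : ℤ) * ((2*(j:ℤ)+2)^n + (2*(j:ℤ))^n) := by rw [hb2]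
      _ = 2^n * ((-1:ℤ)^j * (k.choose j : ℤ) * (((j:ℤ)+1)^n + (j:ℤ)^n)) := by
          rw [e1, e2]; ring
  calc ∑ j ∈ range (k+1), 2 * ((-1:ℤ)^j * (k.choose j : ℤ)
          * ∑ m ∈ range (n+1), (if Even (n-m) then (n.choose m : ℤ) else 0) * (2*(j:ℤ)+1)^m)
      = ∑ j ∈ range (k+1), 2^n * ((-1:ℤ)^j * (k.choose j : ℤ) * (((j:ℤ)+1)^n + (j:ℤ)^n)) :=
        Finset.sum_congr rfl fun j _ => inner j
    _ = 2^n * ((∑ j ∈ range (k+1), (-1:ℤ)^j * (k.choose j : ℤ) * ((j:ℤ)+1)^n) + DD k n) := by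
        rw [← Finset.mul_sum]
        congr 1
        rw [DD, ← Finset.sum_add_distrib]
        exact Finset.sum_congr rfl fun j _ => by ring
    _ = 2^n * (2 * DD k n - DD (k+1) n) := by
        rw [DD_pascal]; ring

/-- `cc n = ∑_k T k n / 2^k` — this will be the Euler number `E n`. -/
noncomputable def cc (n : ℕ) : ℚ := ∑ k ∈ range (n+1), (TT k n : ℚ) / 2^k

lemma cc_zero : cc 0 = 1 := by
  simp [cc, TT]

lemma cc_extend (n L : ℕ) (h : n ≤ L) :
    cc n = ∑ k ∈ range (L+1), (TT k n : ℚ) / 2^k := by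
  rw [cc]
  refine Finset.sum_subset (Finset.range_subset_range.2 (by omega)) fun k hk hnk => ?_
  have : n < k := by simp at hk hnk; omega
  rw [TT_eq_zero_of_lt k n this]
  simp

lemma KEY (n : ℕ) (hn : 1 ≤ n) :
    ∑ m ∈ range (n+1), (if Even (n-m) then ((n.choose m : ℚ)) else 0) * cc m = 0 := by
  have step1 : ∑ m ∈ range (n+1), (if Even (n-m) then ((n.choose m : ℚ)) else 0) * cc m
      = ∑ k ∈ range (n+1), (1/2^k) *
          ((∑ m ∈ range (n+1), (if Even (n-m) then (n.choose m : ℤ) else 0) * TT k m : ℤ) : ℚ) := by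
    have : ∀ m ∈ range (n+1), (if Even (n-m) then ((n.choose m : ℚ)) else 0) * cc m
        = ∑ k ∈ range (n+1),
            (1/2^k) * (((if Even (n-m) then (n.choose m : ℤ) else 0) * TT k m : ℤ) : ℚ) := by
      intro m hm
      rw [cc_extend m n (by simp at hm; omega), Finset.mul_sum]
      refine Finset.sum_congr rfl fun k _ => ?_
      push_cast
      split_ifs with he <;> ring
    rw [Finset.sum_congr rfl this, Finset.sum_comm]
    refine Finset.sum_congr rfl fun k _ => ?_
    rw [Int.cast_sum, Finset.mul_sum]
  rw [step1]
  have step2 : ∀ k : ℕ,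
      (1/2^k : ℚ) * ((∑ m ∈ range (n+1), (if Even (n-m) then (n.choose m : ℤ) else 0) * TT k m : ℤ) : ℚ)
      = ((2:ℚ)^n / 2^k * DD k n) - ((2:ℚ)^n / 2^(k+1) * DD (k+1) n) := by
    intro k
    have hw := W_eq n k
    have hwq : (2:ℚ) * ((∑ m ∈ range (n+1), (if Even (n-m) then (n.choose m : ℤ) else 0) * TT k m : ℤ) : ℚ)
        = 2^n * (2 * (DD k n : ℚ) - (DD (k+1) n : ℚ)) := by
      exact_mod_cast hw
    linear_combination (1/(2^(k+1)) : ℚ) * hwq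
  rw [Finset.sum_congr rfl fun k _ => step2 k]
  rw [Finset.sum_range_sub' (f := fun k => (2:ℚ)^n / 2^k * DD k n)]
  have e0 : DD 0 n = 0 := by
    rw [DD_zero, zero_pow (by omega)]
  have e1 : DD (n+1) n = 0 := DD_eq_zero_of_lt (n+1) n (by omega)
  rw [e0, e1]
  simp


noncomputable def invSeries : PowerSeries ℚ :=
  PowerSeries.mk fun n => cc n / n.factorial

lemma cosh_mul_inv : coshSeries * invSeries = 1 := by
  ext n
  rw [PowerSeries.coeff_mul]
  rcases Nat.eq_zero_or_pos n with rfl | hn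
  · simp [coshSeries, invSeries, cc_zero]
  · rw [PowerSeries.coeff_one, if_neg hn.ne']
    rw [Finset.Nat.sum_antidiagonal_eq_sum_range_succ
      (f := fun i j => (PowerSeries.coeff i coshSeries) * (PowerSeries.coeff j invSeries))]
    have hrefl : ∑ i ∈ range (n+1),
        (PowerSeries.coeff i coshSeries) * (PowerSeries.coeff (n-i) invSeries)
        = ∑ m ∈ range (n+1),
        (PowerSeries.coeff (n-m) coshSeries) * (PowerSeries.coeff (n-(n-m)) invSeries) := by
      rw [← Finset.sum_range_reflect]
      refine Finset.sum_congr rfl fun m hm => ?_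
      simp at hm
      congr 2 <;> omega
    rw [hrefl]
    have hterm : ∀ m ∈ range (n+1),
        (PowerSeries.coeff (n-m) coshSeries) * (PowerSeries.coeff (n-(n-m)) invSeries)
        = (1/(n.factorial : ℚ)) * ((if Even (n-m) then ((n.choose m : ℚ)) else 0) * cc m) := by
      intro m hm
      simp only [Finset.mem_range] at hm
      have hmn : m ≤ n := by omega
      have hsub : n - (n - m) = m := by omega
      rw [hsub, coshSeries, invSeries, PowerSeries.coeff_mk, PowerSeries.coeff_mk]
      have hfac : ((n.choose m : ℚ)) * (m.factorial : ℚ) * ((n-m).factorial : ℚ)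
          = (n.factorial : ℚ) := by
        exact_mod_cast congrArg (Nat.cast (R := ℚ)) (Nat.choose_mul_factorial_mul_factorial hmn)
      have hm0 : (m.factorial : ℚ) ≠ 0 := by positivity
      have hnm0 : ((n-m).factorial : ℚ) ≠ 0 := by positivity
      have hn0 : (n.factorial : ℚ) ≠ 0 := by positivity
      split_ifs with he
      · rw [eq_comm]
        field_simp
        linear_combination (cc m) * hfac
      · simp
    rw [Finset.sum_congr rfl hterm, ← Finset.mul_sum, KEY n hn, mul_zero]

lemma eulerNumber_eq_cc (n : ℕ) : eulerNumber n = cc n := by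
  have hinv : coshSeries⁻¹ = invSeries := by
    rw [eq_comm, PowerSeries.eq_inv_iff_mul_eq_one]
    · rw [mul_comm]; exact cosh_mul_inv
    · rw [coshSeries]
      simp [PowerSeries.constantCoeff_mk]
  rw [eulerNumber, hinv, invSeries, PowerSeries.coeff_mk]
  have : (n.factorial : ℚ) ≠ 0 := by positivity
  field_simp

lemma ARITH : ∀ t k : ℕ, 1 ≤ k → k ≤ t →
    padicValNat 2 t ≤ (t - k) + padicValNat 2 (k.factorial) := by
  have inst : Fact (Nat.Prime 2) := ⟨Nat.prime_two⟩
  intro t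
  induction t using Nat.strong_induction_on with
  | _ t ih =>
    intro k hk1 hkt
    rcases Nat.even_or_odd t with ⟨t', rfl⟩ | hodd
    · -- t = t' + t' = 2 t'
      have ht2 : t' + t' = 2 * t' := by ring
      rw [ht2] at hkt ⊢
      have ht'pos : 1 ≤ t' := by omega
      rcases Nat.eq_or_lt_of_le hk1 with hk1' | hk2
      · -- k = 1
        have hvlt : padicValNat 2 (2*t') < 2*t' := by
          have h1 : 2 ^ padicValNat 2 (2*t') ∣ 2*t' := pow_padicValNat_dvd
          have h2 : 2 ^ padicValNat 2 (2*t') ≤ 2*t' := Nat.le_of_dvd (by omega) h1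
          have h3 : padicValNat 2 (2*t') < 2 ^ padicValNat 2 (2*t') := Nat.lt_two_pow_self
          omega
        rw [← hk1']
        simp [Nat.factorial]
        omega
      · -- k ≥ 2
        set k' := k / 2 with hk'
        have hk'1 : 1 ≤ k' := Nat.one_le_div_iff (by norm_num) |>.2 (by omega)
        have hk't : k' ≤ t' := by omega
        have hvk : padicValNat 2 (k'.factorial) + k' ≤ padicValNat 2 (k.factorial) := by
          rcases Nat.even_or_odd k with ⟨m, rfl⟩ | ⟨m, rfl⟩
          · have : m + m = 2 * m := by ring
            rw [this] at hk' ⊢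
            have hm : k' = m := by omega
            rw [hm, padicValNat_factorial_mul]
          · have h2m : 2*m+1 = 2*m + 1 := rfl
            have hm : k' = m := by omega
            have hmpos : 0 < m := by omega
            have : (2*m+1).factorial = (2*m+1) * (2*m).factorial := rfl
            rw [hm, this, padicValNat.mul (by omega) (Nat.factorial_ne_zero _),
              padicValNat_factorial_mul]
            omega
        have hvt : padicValNat 2 (2*t') = padicValNat 2 t' + 1 := by
          rw [padicValNat.mul (by norm_num) (by omega)]
          simp [padicValNat.self]
          omega
        have hIH := ih t' (by omega) k' hk'1 hk't
        -- goal: padicValNat 2 (2*t') ≤ (2*t' - k) + padicValNat 2 k!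
        have hcase : 2 ≤ t' ∨ (t' = 1 ∧ k = 2) := by omega
        rcases hcase with h2t | ⟨rfl, rfl⟩
        · have hkk' : k ≤ 2*k' + 1 := by omega
          omega
        · norm_num [hvt]
    · obtain ⟨m, hm⟩ := hodd
      have h0 : padicValNat 2 t = 0 := padicValNat.eq_zero_of_not_dvd (by omega)
      omega

lemma pow_dvd_mul_choose (a m t : ℕ) (hm : 2^a ∣ m) (ht : 1 ≤ t) :
    2^a ∣ t * m.choose t := by
  rcases Nat.eq_zero_or_pos m with rfl | hmpos
  · rw [Nat.choose_eq_zero_of_lt (by omega), mul_zero]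
    exact dvd_zero _
  · have h := Nat.add_one_mul_choose_eq (m-1) (t-1)
    try simp only [Nat.succ_eq_add_one] at h
    have hm1 : m - 1 + 1 = m := by omega
    have ht1 : t - 1 + 1 = t := by omega
    rw [hm1, ht1] at h
    have h2 : 2^a ∣ m * (m-1).choose (t-1) := hm.mul_right _
    rw [h] at h2
    rwa [mul_comm] at h2

lemma choose_sub_dvd (a N M t : ℕ) (hMN : M ≤ N) (hM : 2^a ∣ M) (hN : 2^a ∣ N)
    (ht : 1 ≤ t) (hva : padicValNat 2 t ≤ a) :
    2^(a - padicValNat 2 t) ∣ N.choose t - M.choose t := by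
  set v := padicValNat 2 t with hv
  have htfac : t = 2^v * (t / 2^v) := (Nat.ordProj_mul_ordCompl_eq_self t 2).symm
  set u := t / 2^v with hu
  have hu_odd : ¬ 2 ∣ u := Nat.not_dvd_ordCompl Nat.prime_two (by omega)
  have h1 : 2^a ∣ t * (N.choose t) := pow_dvd_mul_choose a N t hN ht
  have h2 : 2^a ∣ t * (M.choose t) := pow_dvd_mul_choose a M t hM ht
  have hle : M.choose t ≤ N.choose t := Nat.choose_le_choose t hMN
  have h3 : t * (N.choose t) - t * (M.choose t) = t * (N.choose t - M.choose t) := by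
    rw [Nat.mul_sub]
  have h4 : 2^a ∣ t * (N.choose t - M.choose t) := by
    rw [← h3]; exact Nat.dvd_sub h1 h2
  have h4b : 2^v * 2^(a-v) ∣ 2^v * (u * (N.choose t - M.choose t)) := by
    have e1 : 2^v * (u * (N.choose t - M.choose t)) = t * (N.choose t - M.choose t) := by
      rw [← mul_assoc, ← htfac]
    have e2 : (2:ℕ)^v * 2^(a-v) = 2^a := by
      rw [← pow_add]; congr 1; omega
    rw [e1, e2]; exact h4
  have h6 : 2^(a-v) ∣ u * (N.choose t - M.choose t) :=
    (mul_dvd_mul_iff_left (by positivity : (2:ℕ)^v ≠ 0)).1 h4b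
  have hcop : Nat.Coprime (2^(a-v)) u :=
    Nat.Coprime.pow_left _ ((Nat.prime_two.coprime_iff_not_dvd).2 hu_odd)
  exact hcop.dvd_of_dvd_mul_left h6

lemma TT_expand_ext (k M L : ℕ) (h : M ≤ L) :
    TT k M = ∑ t ∈ range (L+1), (M.choose t : ℤ) * 2^t * DD k t := by
  rw [TT_expand]
  refine Finset.sum_subset (Finset.range_subset_range.2 (by omega)) fun t ht hnt => ?_
  rw [Nat.choose_eq_zero_of_lt (by simp at ht hnt; omega)]
  simp

lemma TT_sub_dvd_two (a k N M : ℕ) (hMN : M ≤ N) (hM : 2^a ∣ M) (hN : 2^a ∣ N) :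
    (2:ℤ)^(k+a) ∣ TT k N - TT k M := by
  rw [TT_expand, TT_expand_ext k M N hMN, ← Finset.sum_sub_distrib]
  refine Finset.dvd_sum fun t htr => ?_
  have hterm : (N.choose t : ℤ) * 2^t * DD k t - (M.choose t : ℤ) * 2^t * DD k t
      = ((N.choose t : ℤ) - (M.choose t : ℤ)) * 2^t * DD k t := by ring
  rw [hterm]
  rcases Nat.lt_or_ge t k with hlt | hge
  · rw [DD_eq_zero_of_lt k t hlt, mul_zero]
    exact dvd_zero _
  rcases Nat.eq_zero_or_pos t with rfl | htpos
  · have hk0 : k = 0 := by omega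
    subst hk0
    simp
  -- now 1 ≤ t, k ≤ t
  set v := padicValNat 2 t with hv
  set w := min v a with hw
  set vk := padicValNat 2 (k.factorial) with hvk
  have hCdvd : (2:ℤ)^(a - w) ∣ (N.choose t : ℤ) - (M.choose t : ℤ) := by
    have hle : M.choose t ≤ N.choose t := Nat.choose_le_choose t hMN
    rcases le_or_gt v a with hva | hva
    · have := choose_sub_dvd a N M t hMN hM hN htpos hva
      have hcast : ((N.choose t - M.choose t : ℕ) : ℤ) = (N.choose t : ℤ) - M.choose t := by
        push_cast [Nat.cast_sub hle]; ring
      have hz := Int.natCast_dvd_natCast.2 this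
      rw [hcast] at hz
      push_cast at hz
      have hwv : w = v := by omega
      rwa [hwv]
    · have hwa : a - w = 0 := by omega
      rw [hwa]
      simp
  have hDdvd : (2:ℤ)^vk ∣ DD k t := by
    have h1 : (2:ℕ)^vk ∣ k.factorial := pow_padicValNat_dvd
    have h2 : (2:ℤ)^vk ∣ (k.factorial : ℤ) := by exact_mod_cast h1
    exact dvd_trans h2 (factorial_dvd_DD k t)
  have harith : v ≤ (t - k) + vk := by
    rcases k.eq_zero_or_pos with rfl | hkpos
    · have h := ARITH t 1 le_rfl (by omega)
      have h1 : padicValNat 2 (Nat.factorial 1) = 0 := by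
        norm_num [Nat.factorial]
      have h0 : vk = 0 := by
        rw [hvk]; norm_num [Nat.factorial]
      omega
    · exact ARITH t k hkpos hge
  obtain ⟨x, hx⟩ := hCdvd
  obtain ⟨y, hy⟩ := hDdvd
  rw [hx, hy]
  have hexp : k + a ≤ (a - w) + t + vk := by omega
  have hfact : (2:ℤ) ^ (a - w) * x * 2 ^ t * (2 ^ vk * y)
      = 2^((a-w)+t+vk) * (x * y) := by
    rw [pow_add, pow_add]
    ring
  rw [hfact]
  exact (pow_dvd_pow 2 hexp).mul_right _

lemma TT_sub_dvd_odd (p n α : ℕ) (hp : p.Prime) (hodd : p ≠ 2) (hn : 0 < n)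
    (hα : 1 ≤ α) (k : ℕ) :
    ((2:ℤ)^k * (p:ℤ)^α) ∣ TT k (2*n*p^α) - TT k (2*n*p^(α-1)) := by
  set N := 2*n*p^α with hN
  set M := 2*n*p^(α-1) with hM
  have hp3 : 3 ≤ p := by
    rcases hp.two_le.lt_or_eq with h | h
    · omega
    · omega
  have hαM : α ≤ M := by
    have h1 : α - 1 < 2^(α-1) := Nat.lt_two_pow_self
    have h2 : (2:ℕ)^(α-1) ≤ p^(α-1) := Nat.pow_le_pow_left (by omega) _
    have h3 : p^(α-1) ≤ 2*n*p^(α-1) := by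
      have : 1 ≤ 2*n := by omega
      calc p^(α-1) = 1 * p^(α-1) := by ring
        _ ≤ (2*n) * p^(α-1) := Nat.mul_le_mul_right _ this
    omega
  -- p^α divides the difference
  have hpdvd : ((p:ℤ))^α ∣ TT k N - TT k M := by
    rw [TT, TT, ← Finset.sum_sub_distrib]
    refine Finset.dvd_sum fun j hj => ?_
    have hterm : (-1:ℤ)^j * (k.choose j : ℤ) * (2*(j:ℤ)+1)^N
        - (-1:ℤ)^j * (k.choose j : ℤ) * (2*(j:ℤ)+1)^M
        = (-1:ℤ)^j * (k.choose j : ℤ) * ((2*(j:ℤ)+1)^N - (2*(j:ℤ)+1)^M) := by ring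
    rw [hterm]
    have hkey : ((p:ℤ))^α ∣ (2*(j:ℤ)+1)^N - (2*(j:ℤ)+1)^M := by
      set b : ℕ := 2*j+1 with hb
      have hbcast : (2*(j:ℤ)+1) = (b:ℤ) := by rw [hb]; push_cast; ring
      rw [hbcast]
      rcases em (p ∣ b) with hpb | hpb
      · have h1 : ((p:ℤ))^α ∣ (b:ℤ)^M := by
          have : ((p:ℤ)) ∣ (b:ℤ) := Int.natCast_dvd_natCast.2 hpb
          exact (pow_dvd_pow_of_dvd this α).trans (pow_dvd_pow _ hαM)
        have h2 : ((p:ℤ))^α ∣ (b:ℤ)^N := by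
          have : ((p:ℤ)) ∣ (b:ℤ) := Int.natCast_dvd_natCast.2 hpb
          have hαN : α ≤ N := le_trans hαM (by
            apply Nat.mul_le_mul_left
            exact Nat.pow_le_pow_right (by omega) (by omega))
          exact (pow_dvd_pow_of_dvd this α).trans (pow_dvd_pow _ hαN)
        exact dvd_sub h2 h1
      · have hcop' : Nat.Coprime (b^(2*n)) (p^α) :=
          Nat.Coprime.pow (2*n) α (((Nat.Prime.coprime_iff_not_dvd hp).2 hpb).symm)
        have heuler : (b^(2*n))^(Nat.totient (p^α)) ≡ 1 [MOD p^α] :=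
          Nat.ModEq.pow_totient hcop'
        have htot : Nat.totient (p^α) = p^(α-1) * (p-1) := by
          have h := Nat.totient_prime_pow hp (show 0 < α by omega)
          exact h
        have hNdecomp : b^N = b^M * (b^(2*n))^(Nat.totient (p^α)) := by
          rw [← pow_mul, ← pow_add]
          congr 1
          rw [htot, hN, hM]
          have hpα : p^α = p^(α-1)*p := by
            rw [← pow_succ]
            congr 1
            omega
          rw [hpα]
          zify [show 1 ≤ p by omega]
          ring
        have hmod : b^M * (b^(2*n))^(Nat.totient (p^α)) ≡ b^M * 1 [MOD p^α] :=
          Nat.ModEq.mul_left _ heuler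
        have hdvd := (Nat.ModEq.dvd hmod)
        have : ((p:ℤ))^α ∣ ((b^M * 1 : ℕ) : ℤ) - ((b^M * (b^(2*n))^(Nat.totient (p^α)) : ℕ) : ℤ) := by
          have hc : (((p:ℕ)^α : ℕ) : ℤ) = ((p:ℤ))^α := by push_cast; ring
          rw [← hc]
          exact hdvd
        have hfin : ((p:ℤ))^α ∣ ((b:ℤ)^N - (b:ℤ)^M) := by
          rw [← neg_sub, dvd_neg] at this
          have hc2 : ((b^M * (b^(2*n))^(Nat.totient (p^α)) : ℕ) : ℤ) = (b:ℤ)^N := by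
            rw [← hNdecomp]
            push_cast
            ring
          have hc3 : ((b^M * 1 : ℕ) : ℤ) = (b:ℤ)^M := by push_cast; ring
          rwa [hc2, hc3] at this
        exact hfin
    exact hkey.mul_left _
  -- 2^k divides the difference
  have h2dvd : ((2:ℤ))^k ∣ TT k N - TT k M :=
    dvd_sub (two_pow_dvd_TT k N) (two_pow_dvd_TT k M)
  -- combine
  have hcop : IsCoprime ((2:ℤ)^k) ((p:ℤ)^α) := by
    apply IsCoprime.pow
    have hc : Nat.Coprime 2 p := (Nat.coprime_primes Nat.prime_two hp).2 (by omega)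
    rw [Int.isCoprime_iff_gcd_eq_one, show ((2:ℤ)) = ((2:ℕ):ℤ) by norm_num,
      Int.gcd_natCast_natCast]
    exact hc
  exact hcop.mul_dvd h2dvd hpdvd

theorem stmt_10 (p n α : ℕ) (hp : p.Prime) (hn : 0 < n)
    (hcop : Nat.Coprime p n) (hα : 1 ≤ α) :
    ∃ k : ℤ, eulerNumber (2 * n * p ^ α) - eulerNumber (2 * n * p ^ (α - 1)) =
      (k : ℚ) * (p : ℚ) ^ α := by
  set N := 2*n*p^α with hN
  set M := 2*n*p^(α-1) with hM
  have hppos : 1 ≤ p := hp.one_lt.le.trans' (by omega)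
  have hMN : M ≤ N := by
    apply Nat.mul_le_mul_left
    exact Nat.pow_le_pow_right (by omega) (by omega)
  have hdvd : ∀ k, ((2:ℤ)^k * (p:ℤ)^α) ∣ TT k N - TT k M := by
    intro k
    rcases em (p = 2) with rfl | hne
    · have h2M : 2^α ∣ M := by
        rw [hM]
        have : (2:ℕ)^α = 2 * 2^(α-1) := by
          rw [← pow_succ']
          congr 1
          omega
        rw [this]
        exact ⟨n, by ring⟩
      have h2N : 2^α ∣ N := by
        rw [hN]
        exact Dvd.intro_left (2*n) rfl
      have := TT_sub_dvd_two α k N M hMN h2M h2N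
      have hpow : ((2:ℤ))^(k+α) = 2^k * ((2:ℕ):ℤ)^α := by
        rw [pow_add]
        norm_num
      rwa [hpow] at this
    · exact TT_sub_dvd_odd p n α hp hne hn hα k
  set q : ℕ → ℤ := fun k => (TT k N - TT k M) / ((2:ℤ)^k * (p:ℤ)^α) with hqdef
  have hq : ∀ k, TT k N - TT k M = ((2:ℤ)^k * (p:ℤ)^α) * q k := by
    intro k
    rw [hqdef]
    exact (Int.mul_ediv_cancel' (hdvd k)).symm
  refine ⟨∑ k ∈ range (N+1), q k, ?_⟩
  rw [eulerNumber_eq_cc, eulerNumber_eq_cc]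
  rw [cc_extend N N le_rfl, cc_extend M N hMN, ← Finset.sum_sub_distrib]
  have hterm : ∀ k ∈ range (N+1),
      (TT k N : ℚ)/2^k - (TT k M : ℚ)/2^k = (q k : ℚ) * (p:ℚ)^α := by
    intro k _
    have h := hq k
    have hcast : (TT k N : ℚ) - (TT k M : ℚ) = ((2:ℚ)^k * (p:ℚ)^α) * (q k : ℚ) := by
      exact_mod_cast congrArg (fun z : ℤ => (z : ℚ)) h
    have h2k : (2:ℚ)^k ≠ 0 := by positivity
    field_simp
    linear_combination hcast
  rw [Finset.sum_congr rfl hterm, ← Finset.sum_mul]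
  push_cast
  ring
end

section
/- Let a, b be positive integers with b | a and such that every prime p dividing a also divides a/b. Then the sequence (a^n / b)_{n≥1} is realizable: Σ_{d|n} μ(n/d)·a^d/b is a non-negative integer divisible by n for every n ≥ 1. -/
open Finset ArithmeticFunction

/-- Splitting a sum over divisors of `p * m` for `p` prime not dividing `m`. -/
lemma aux_sum_divisors_prime_mul {p m : ℕ} (hp : p.Prime) (hm : m ≠ 0) (hpm : ¬ p ∣ m)
    (g : ℕ → ℤ) :
    ∑ e ∈ (p * m).divisors, g e = ∑ e ∈ m.divisors, (g e + g (p * e)) := by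
  have hp0 : p ≠ 0 := hp.ne_zero
  have hset : (p * m).divisors = m.divisors ∪ m.divisors.image (p * ·) := by
    ext e
    simp only [Nat.mem_divisors, Finset.mem_union, Finset.mem_image, mul_ne_zero_iff]
    constructor
    · rintro ⟨he, -⟩
      by_cases hpe : p ∣ e
      · obtain ⟨e', rfl⟩ := hpe
        right
        refine ⟨e', ⟨?_, hm⟩, rfl⟩
        exact (mul_dvd_mul_iff_left hp0).mp he
      · left
        refine ⟨?_, hm⟩
        exact (Nat.Coprime.dvd_of_dvd_mul_left
          ((hp.coprime_iff_not_dvd.mpr hpe).symm) he)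
    · rintro (⟨he, -⟩ | ⟨e', ⟨he', -⟩, rfl⟩)
      · exact ⟨he.mul_left p, ⟨hp0, hm⟩⟩
      · exact ⟨mul_dvd_mul_left p he', ⟨hp0, hm⟩⟩
  have hdisj : Disjoint m.divisors (m.divisors.image (p * ·)) := by
    rw [Finset.disjoint_left]
    rintro e he1 he2
    obtain ⟨e', -, rfl⟩ := Finset.mem_image.mp he2
    exact hpm ((dvd_mul_right p e').trans (Nat.mem_divisors.mp he1).1)
  rw [hset, Finset.sum_union hdisj, Finset.sum_add_distrib]
  congr 1
  rw [Finset.sum_image]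
  intro x _ y _ h
  exact Nat.eq_of_mul_eq_mul_left hp.pos h

/-- Key prime-power divisibility for the sequence `d ↦ c * a ^ (d - 1)`. -/
lemma aux_key {a c p : ℕ} (ha : 0 < a) (hp : p.Prime) (hpc : p ∣ a → p ∣ c)
    {k E : ℕ} (hk : 1 ≤ k) (hE : 1 ≤ E) :
    ((p : ℤ)) ^ k ∣ (c : ℤ) * (a : ℤ) ^ (p ^ k * E - 1)
      - (c : ℤ) * (a : ℤ) ^ (p ^ (k - 1) * E - 1) := by
  have hppos : 0 < p := hp.pos
  obtain ⟨j, rfl⟩ : ∃ j, k = j + 1 := ⟨k - 1, (Nat.succ_pred_eq_of_pos hk).symm⟩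
  simp only [Nat.add_sub_cancel]
  have hE1 : 1 ≤ p ^ j * E := Nat.one_le_iff_ne_zero.mpr
    (by positivity)
  have hE2 : 1 ≤ p ^ (j + 1) * E := Nat.one_le_iff_ne_zero.mpr (by positivity)
  by_cases hpa : p ∣ a
  · -- p divides a, hence p divides c; use valuations
    have hpc' : p ∣ c := hpc hpa
    have hkle : j + 1 ≤ p ^ j * E := by
      calc j + 1 ≤ 2 ^ j := by
              have := Nat.lt_two_pow_self (n := j)
              omega
        _ ≤ p ^ j := Nat.pow_le_pow_left hp.two_le _
        _ ≤ p ^ j * E := Nat.le_mul_of_pos_right _ hE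
    have hkle2 : j + 1 ≤ p ^ (j + 1) * E :=
      hkle.trans (Nat.mul_le_mul_right E (Nat.pow_le_pow_right hppos (by omega)))
    have hdvd : ∀ t : ℕ, j ≤ t → ((p : ℤ)) ^ (j + 1) ∣ (c : ℤ) * (a : ℤ) ^ t := by
      intro t ht
      have h1 : ((p : ℤ)) ^ j ∣ (a : ℤ) ^ t := by
        calc ((p : ℤ)) ^ j ∣ (a : ℤ) ^ j :=
              pow_dvd_pow_of_dvd (Int.natCast_dvd_natCast.mpr hpa) _
          _ ∣ (a : ℤ) ^ t := pow_dvd_pow _ ht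
      have h2 : ((p : ℤ)) ∣ (c : ℤ) := Int.natCast_dvd_natCast.mpr hpc'
      rw [pow_succ']
      exact mul_dvd_mul h2 h1
    exact dvd_sub (hdvd _ (by omega)) (hdvd _ (by omega))
  · -- p does not divide a: use Fermat + lifting the exponent
    haveI : Fact p.Prime := ⟨hp⟩
    have h1 : (p : ℤ) ∣ (a : ℤ) ^ p - (a : ℤ) := by
      have := ZMod.pow_card (a : ZMod p)
      have h0 : (((a : ℤ) ^ p - (a : ℤ) : ℤ) : ZMod p) = 0 := by
        push_cast
        rw [this]
        ring
      exact (ZMod.intCast_zmod_eq_zero_iff_dvd _ _).mp h0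
    have h2 : (p : ℤ) ∣ ((a : ℤ) ^ p) ^ E - ((a : ℤ)) ^ E :=
      h1.trans (sub_dvd_pow_sub_pow _ _ E)
    have h3 := dvd_sub_pow_of_dvd_sub h2 j
    have hexp1 : (((a : ℤ) ^ p) ^ E) ^ p ^ j = (a : ℤ) ^ (p ^ (j + 1) * E) := by
      rw [← pow_mul, ← pow_mul, pow_succ']
      ring_nf
    have hexp2 : (((a : ℤ)) ^ E) ^ p ^ j = (a : ℤ) ^ (p ^ j * E) := by
      rw [← pow_mul]
      ring_nf
    rw [hexp1, hexp2] at h3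
    have hfac : (a : ℤ) ^ (p ^ (j + 1) * E) - (a : ℤ) ^ (p ^ j * E)
        = (a : ℤ) * ((a : ℤ) ^ (p ^ (j + 1) * E - 1) - (a : ℤ) ^ (p ^ j * E - 1)) := by
      rw [mul_sub, ← pow_succ', ← pow_succ']
      congr 2 <;> omega
    rw [hfac] at h3
    have hcop : IsCoprime ((p : ℤ) ^ (j + 1)) (a : ℤ) :=
      (Nat.isCoprime_iff_coprime.mpr
        (hp.coprime_iff_not_dvd.mpr hpa)).pow_left
    have h4 := hcop.dvd_of_dvd_mul_left h3
    have : (c : ℤ) * (a : ℤ) ^ (p ^ (j + 1) * E - 1) - (c : ℤ) * (a : ℤ) ^ (p ^ j * E - 1)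
        = (c : ℤ) * ((a : ℤ) ^ (p ^ (j + 1) * E - 1) - (a : ℤ) ^ (p ^ j * E - 1)) := by ring
    rw [this]
    exact h4.mul_left _

/-- Prime-power divisibility of the Möbius-transformed sum. -/
lemma aux_primepow_dvd (a c : ℕ) (ha : 0 < a) (hpc : ∀ p : ℕ, p.Prime → p ∣ a → p ∣ c)
    (n p : ℕ) (hn : 1 ≤ n) (hp : p.Prime) :
    ((p : ℤ)) ^ (n.factorization p) ∣
      ∑ d ∈ n.divisors, moebius (n / d) * ((c : ℤ) * (a : ℤ) ^ (d - 1)) := by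
  set f : ℕ → ℤ := fun d => (c : ℤ) * (a : ℤ) ^ (d - 1) with hf
  have hn0 : n ≠ 0 := by omega
  set k := n.factorization p with hkdef
  rcases Nat.eq_zero_or_pos k with hk0 | hkpos
  · rw [hk0, pow_zero]; exact one_dvd _
  set m := n / p ^ k with hm
  have hnm : p ^ k * m = n := Nat.ordProj_mul_ordCompl_eq_self n p
  have hm0 : m ≠ 0 := (Nat.ordCompl_pos p hn0).ne'
  have hpm : ¬ p ∣ m := Nat.not_dvd_ordCompl hp hn0
  have hpmdvd : p * m ∣ n := by
    rw [← hnm]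
    exact mul_dvd_mul_right (dvd_pow_self p (by omega)) m
  -- Step 1: reindex sum
  have h1 : ∑ d ∈ n.divisors, (moebius (n / d) : ℤ) * f d
      = ∑ e ∈ n.divisors, (moebius e : ℤ) * f (n / e) := by
    rw [← Nat.sum_div_divisors n (fun e => (moebius e : ℤ) * f (n / e))]
    refine Finset.sum_congr rfl fun d hd => ?_
    rw [Nat.div_div_self (Nat.mem_divisors.mp hd).1 hn0]
  -- Step 2: restrict to divisors of p * m
  have h2 : ∑ e ∈ n.divisors, (moebius e : ℤ) * f (n / e)
      = ∑ e ∈ (p * m).divisors, (moebius e : ℤ) * f (n / e) := by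
    refine (Finset.sum_subset (Nat.divisors_subset_of_dvd hn0 hpmdvd) ?_).symm
    intro e he hne
    have hesq : moebius e = 0 := by
      by_contra hmu
      have hsq : Squarefree e := moebius_ne_zero_iff_squarefree.mp hmu
      have he0 : e ≠ 0 := hsq.ne_zero
      have hedvd : e ∣ n := (Nat.mem_divisors.mp he).1
      have : e ∣ p * m := by
        have hpm0 : p * m ≠ 0 := Nat.mul_ne_zero hp.ne_zero hm0
        rw [← Nat.factorization_le_iff_dvd he0 hpm0]
        intro q
        by_cases hq : q = p
        · rw [hq]
          have h1' : e.factorization p ≤ 1 := hsq.natFactorization_le_one p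
          have h2' : 1 ≤ (p * m).factorization p := by
            have hd : p ^ 1 ∣ p * m := by simpa using dvd_mul_right p m
            exact (Nat.Prime.pow_dvd_iff_le_factorization hp hpm0).mp hd
          omega
        · have hq' : p ≠ q := fun h => hq h.symm
          have hle : e.factorization q ≤ n.factorization q :=
            (Nat.factorization_le_iff_dvd he0 hn0).mpr hedvd q
          have hnq : n.factorization q = m.factorization q := by
            rw [← hnm, Nat.factorization_mul (pow_ne_zero _ hp.ne_zero) hm0]
            simp [hp.factorization_pow, Finsupp.single_apply, hq']
          have hpmq : (p * m).factorization q = m.factorization q := by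
            rw [Nat.factorization_mul hp.ne_zero hm0]
            simp [hp.factorization, Finsupp.single_apply, hq']
          omega
      exact hne (Nat.mem_divisors.mpr ⟨this, Nat.mul_ne_zero hp.ne_zero hm0⟩)
    simp [hesq]
  -- Step 3: split the sum
  rw [h1, h2, aux_sum_divisors_prime_mul hp hm0 hpm]
  -- Step 4: per-term divisibility
  refine Finset.dvd_sum fun e he => ?_
  obtain ⟨hedvd, -⟩ := Nat.mem_divisors.mp he
  have hcop : Nat.Coprime p e :=
    hp.coprime_iff_not_dvd.mpr fun h => hpm (h.trans hedvd)
  have hmue : (moebius (p * e) : ℤ) = - moebius e := by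
    rw [isMultiplicative_moebius.map_mul_of_coprime hcop,
      moebius_apply_prime hp]
    ring
  have hne : n / e = p ^ k * (m / e) := by
    rw [← hnm, Nat.mul_div_assoc _ hedvd]
  have hnpe : n / (p * e) = p ^ (k - 1) * (m / e) := by
    have hpk : p ^ k = p * p ^ (k - 1) := by
      rw [← pow_succ']
      congr 1
      omega
    rw [← hnm, hpk, mul_assoc, Nat.mul_div_mul_left _ _ hp.pos,
      Nat.mul_div_assoc _ hedvd]
  have hE : 1 ≤ m / e := Nat.one_le_div_iff (Nat.pos_of_dvd_of_pos hedvd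
    (Nat.pos_of_ne_zero hm0)) |>.mpr (Nat.le_of_dvd (Nat.pos_of_ne_zero hm0) hedvd)
  have key := aux_key ha hp (hpc p hp) hkpos hE
  have : (moebius e : ℤ) * f (n / e) + (moebius (p * e) : ℤ) * f (n / (p * e))
      = (moebius e : ℤ) * ((c : ℤ) * (a : ℤ) ^ (p ^ k * (m / e) - 1)
        - (c : ℤ) * (a : ℤ) ^ (p ^ (k - 1) * (m / e) - 1)) := by
    rw [hmue, hne, hnpe, hf]
    ring
  rw [this]
  exact key.mul_left _

theorem stmt_14 (a b : ℕ) (ha : 0 < a) (hb : 0 < b) (hba : b ∣ a)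
    (hp : ∀ p : ℕ, p.Prime → p ∣ a → p ∣ a / b) :
    ∀ n : ℕ, 1 ≤ n → ∃ k : ℕ,
      ∑ d ∈ n.divisors, moebius (n / d) * ((a ^ d / b : ℕ) : ℤ) =
        (n : ℤ) * (k : ℤ) := by
  intro n hn
  have hn0 : n ≠ 0 := by omega
  set c := a / b with hc
  have hbc : a = b * c := (Nat.mul_div_cancel' hba).symm
  have hcpos : 0 < c := Nat.div_pos (Nat.le_of_dvd ha hba) hb
  -- rewrite each term
  have hterm : ∀ d ∈ n.divisors, ((a ^ d / b : ℕ) : ℤ)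
      = (c : ℤ) * (a : ℤ) ^ (d - 1) := by
    intro d hd
    have hd1 : 1 ≤ d := Nat.pos_of_mem_divisors hd
    have : a ^ d = b * (c * a ^ (d - 1)) := by
      calc a ^ d = a * a ^ (d - 1) := by
            rw [← pow_succ']
            congr 1
            omega
        _ = b * (c * a ^ (d - 1)) := by rw [hbc]; ring
    rw [this, Nat.mul_div_cancel_left _ hb]
    push_cast
    ring
  have hS : ∑ d ∈ n.divisors, moebius (n / d) * ((a ^ d / b : ℕ) : ℤ)
      = ∑ d ∈ n.divisors, moebius (n / d) * ((c : ℤ) * (a : ℤ) ^ (d - 1)) :=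
    Finset.sum_congr rfl fun d hd => by rw [hterm d hd]
  set S : ℤ := ∑ d ∈ n.divisors, moebius (n / d) * ((c : ℤ) * (a : ℤ) ^ (d - 1))
    with hSdef
  -- divisibility
  have hdvd : (n : ℤ) ∣ S := by
    have : n ∣ S.natAbs := by
      rw [Nat.dvd_iff_prime_pow_dvd_dvd]
      intro p i hpp hpi
      have hpn : p.Prime := hpp
      have hile : i ≤ n.factorization p := by
        rcases Nat.eq_zero_or_pos i with rfl | hi
        · simp
        · exact (Nat.Prime.pow_dvd_iff_le_factorization hpn hn0).mp hpi
      have h1 : ((p : ℤ)) ^ i ∣ S :=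
        (pow_dvd_pow _ hile).trans (aux_primepow_dvd a c ha hp n p hn hpn)
      have h2 := Int.natAbs_dvd_natAbs.mpr h1
      simpa [Int.natAbs_pow] using h2
    have := Int.natCast_dvd_natCast.mpr this
    exact (Int.dvd_natAbs.mp (by exact_mod_cast this))
  -- nonnegativity
  have hnonneg : 0 ≤ S := by
    by_cases ha1 : a = 1
    · -- a = 1 forces b = c = 1, S is the Möbius sum
      have hb1 : b = 1 := Nat.eq_one_of_dvd_one (ha1 ▸ hba)
      have hc1 : c = 1 := by rw [hc, ha1, hb1]
      have : S = ∑ e ∈ n.divisors, (moebius e : ℤ) := by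
        rw [hSdef, ha1, hc1]
        simp only [Nat.cast_one, one_pow, mul_one]
        rw [← Nat.sum_div_divisors n (fun e => (moebius e : ℤ))]
      rw [this]
      have := ArithmeticFunction.moebius_mul_coe_zeta
      have happ : (moebius * (zeta : ArithmeticFunction ℤ)) n = (1 : ArithmeticFunction ℤ) n := by
        rw [this]
      rw [ArithmeticFunction.coe_mul_zeta_apply] at happ
      rw [happ]
      rcases eq_or_ne n 1 with rfl | hne
      · simp
      · simp [hne]
    · -- a ≥ 2
      have ha2 : 2 ≤ a := by omega
      have ha2' : (2 : ℤ) ≤ (a : ℤ) := by exact_mod_cast ha2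
      have hsplit : S = (∑ d ∈ n.properDivisors, moebius (n / d)
          * ((c : ℤ) * (a : ℤ) ^ (d - 1)))
          + moebius (n / n) * ((c : ℤ) * (a : ℤ) ^ (n - 1)) := by
        rw [hSdef, ← Nat.cons_self_properDivisors hn0, Finset.sum_cons, add_comm]
      have hnn : (moebius (n / n) : ℤ) = 1 := by
        rw [Nat.div_self (by omega)]
        simp
      -- bound each proper-divisor term below
      have hbound : ∀ d ∈ n.properDivisors,
          -((c : ℤ) * (a : ℤ) ^ (d - 1)) ≤ moebius (n / d) * ((c : ℤ) * (a : ℤ) ^ (d - 1)) := by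
        intro d hd
        have h1 : (-1 : ℤ) ≤ moebius (n / d) :=
          neg_le_of_abs_le (@ArithmeticFunction.abs_moebius_le_one (n / d))
        have h2 : (0 : ℤ) ≤ (c : ℤ) * (a : ℤ) ^ (d - 1) := by positivity
        calc -((c : ℤ) * (a : ℤ) ^ (d - 1)) = (-1) * ((c : ℤ) * (a : ℤ) ^ (d - 1)) := by ring
          _ ≤ moebius (n / d) * ((c : ℤ) * (a : ℤ) ^ (d - 1)) :=
            mul_le_mul_of_nonneg_right h1 h2
      have hstep1 : -(∑ d ∈ n.properDivisors, (c : ℤ) * (a : ℤ) ^ (d - 1))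
          ≤ ∑ d ∈ n.properDivisors, moebius (n / d) * ((c : ℤ) * (a : ℤ) ^ (d - 1)) := by
        rw [← Finset.sum_neg_distrib]
        exact Finset.sum_le_sum hbound
      -- geometric bound on the proper-divisor sum
      have hstep2 : ∑ d ∈ n.properDivisors, (c : ℤ) * (a : ℤ) ^ (d - 1)
          ≤ (c : ℤ) * ((a : ℤ) ^ (n - 1) - 1) := by
        have hinj : ∑ d ∈ n.properDivisors, (a : ℤ) ^ (d - 1)
            ≤ ∑ j ∈ Finset.range (n - 1), (a : ℤ) ^ j := by
          rw [show (∑ d ∈ n.properDivisors, (a : ℤ) ^ (d - 1))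
              = ∑ j ∈ n.properDivisors.image (· - 1), (a : ℤ) ^ j from
            (Finset.sum_image fun x hx y hy hxy => by
              have hx1 : 1 ≤ x := Nat.pos_of_mem_divisors
                (Nat.mem_divisors.mpr ⟨(Nat.mem_properDivisors.mp hx).1, hn0⟩)
              have hy1 : 1 ≤ y := Nat.pos_of_mem_divisors
                (Nat.mem_divisors.mpr ⟨(Nat.mem_properDivisors.mp hy).1, hn0⟩)
              omega).symm]
          refine Finset.sum_le_sum_of_subset_of_nonneg ?_ ?_
          · intro j hj
            obtain ⟨d, hd, rfl⟩ := Finset.mem_image.mp hj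
            have := (Nat.mem_properDivisors.mp hd).2
            have hd1 : 1 ≤ d := Nat.pos_of_mem_divisors
              (Nat.mem_divisors.mpr ⟨(Nat.mem_properDivisors.mp hd).1, hn0⟩)
            exact Finset.mem_range.mpr (by omega)
          · intro j _ _
            positivity
        have hgeom : ∑ j ∈ Finset.range (n - 1), (a : ℤ) ^ j ≤ (a : ℤ) ^ (n - 1) - 1 := by
          have hmul := geom_sum_mul (a : ℤ) (n - 1)
          have hpos : (0 : ℤ) ≤ ∑ j ∈ Finset.range (n - 1), (a : ℤ) ^ j :=
            Finset.sum_nonneg fun j _ => by positivity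
          nlinarith [hmul, hpos]
        calc ∑ d ∈ n.properDivisors, (c : ℤ) * (a : ℤ) ^ (d - 1)
            = (c : ℤ) * ∑ d ∈ n.properDivisors, (a : ℤ) ^ (d - 1) := by
              rw [Finset.mul_sum]
          _ ≤ (c : ℤ) * ((a : ℤ) ^ (n - 1) - 1) := by
              have : (0 : ℤ) ≤ (c : ℤ) := by positivity
              exact mul_le_mul_of_nonneg_left (hinj.trans hgeom) this
      have hcz : (0 : ℤ) < (c : ℤ) := by exact_mod_cast hcpos
      rw [hsplit, hnn]
      have := hstep1
      have := hstep2
      nlinarith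
  obtain ⟨t, ht⟩ := hdvd
  have htnn : 0 ≤ t := by
    rcases le_or_gt 0 t with h | h
    · exact h
    · exfalso
      have : S < 0 := by
        rw [ht]
        have : (0 : ℤ) < n := by exact_mod_cast Nat.pos_of_ne_zero hn0
        exact mul_neg_of_pos_of_neg this h
      omega
  refine ⟨t.toNat, ?_⟩
  rw [hS, ht, Int.toNat_of_nonneg htnn]
end

section
/- For every positive integer n, Σ_{d|n} μ(n/d)·2^{4d-3} is a non-negative integer divisible by n. -/
open Finset ArithmeticFunction
open scoped ArithmeticFunction.Moebius

private lemma geo_bound (n : ℕ) :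
    (∑ d ∈ Finset.Ico 1 n, (2:ℤ)^(4*d-3)) < 2^(4*n-3) := by
  induction n with
  | zero => simp
  | succ n ih =>
    rcases Nat.eq_zero_or_pos n with rfl | hn
    · norm_num
    · rw [Finset.sum_Ico_succ_top (by omega : 1 ≤ n)]
      have h2 : (4*n-3+1) ≤ 4*(n+1)-3 := by omega
      calc ∑ d ∈ Finset.Ico 1 n, (2:ℤ)^(4*d-3) + 2^(4*n-3)
          < 2^(4*n-3) + 2^(4*n-3) := by linarith
        _ = 2^(4*n-3+1) := by ring
        _ ≤ 2^(4*(n+1)-3) := pow_le_pow_right₀ (by norm_num) h2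

private lemma moeb_lb (x : ℕ) : (-1:ℤ) ≤ μ x := by
  by_cases h : Squarefree x
  · rw [moebius_apply_of_squarefree h]
    rcases neg_one_pow_eq_or ℤ (cardFactors x) with h' | h' <;> rw [h'] <;> norm_num
  · rw [moebius_eq_zero_of_not_squarefree h]; norm_num

private lemma S_pos {n : ℕ} (hn : 1 ≤ n) :
    0 < ∑ d ∈ n.divisors, (μ (n / d) : ℤ) * 2 ^ (4*d-3) := by
  have hn0 : n ≠ 0 := by omega
  rw [← Nat.insert_self_properDivisors hn0,
    Finset.sum_insert Nat.self_notMem_properDivisors,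
    Nat.div_self (by omega : 0 < n), moebius_apply_one, one_mul]
  have hb : ∀ d ∈ n.properDivisors, -(2:ℤ)^(4*d-3) ≤ (μ (n/d):ℤ) * 2^(4*d-3) := by
    intro d _
    have h1 : (-1:ℤ) ≤ μ (n/d) := moeb_lb _
    have h2 : (0:ℤ) ≤ 2^(4*d-3) := by positivity
    nlinarith
  have hsum1 := Finset.sum_le_sum hb
  rw [Finset.sum_neg_distrib] at hsum1
  have hsum2 : ∑ d ∈ n.properDivisors, (2:ℤ)^(4*d-3) ≤ ∑ d ∈ Finset.Ico 1 n, (2:ℤ)^(4*d-3) := by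
    apply Finset.sum_le_sum_of_subset_of_nonneg
    · intro d hd
      rw [Finset.mem_Ico]
      have h := Nat.mem_properDivisors.mp hd
      exact ⟨Nat.pos_of_dvd_of_pos h.1 (by omega), h.2⟩
    · intro d _ _; positivity
  have := geo_bound n
  linarith

private lemma key_s15 {n p : ℕ} (hp : p.Prime) (hn : n ≠ 0) :
    ((p:ℤ))^(n.factorization p) ∣
      ∑ d ∈ n.divisors, (μ (n / d) : ℤ) * 2 ^ (4*d-3) := by
  classical
  set k := n.factorization p with hkdef
  rcases Nat.eq_zero_or_pos k with hk0 | hk1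
  · rw [hk0, pow_zero]; exact one_dvd _
  have hcast : ∀ S : ℤ, ((S : ZMod (p^k)) = 0) → ((p:ℤ))^k ∣ S := by
    intro S h
    have := (ZMod.intCast_zmod_eq_zero_iff_dvd S (p^k)).mp h
    push_cast at this; exact this
  apply hcast
  push_cast
  -- facts
  have hfac_lb : ∀ d, d ∈ n.divisors → (μ (n/d) : ℤ) ≠ 0 → k - 1 ≤ d.factorization p := by
    intro d hd hmu
    have hdvd : d ∣ n := (Nat.mem_divisors.mp hd).1
    have hd0 : d ≠ 0 := (Nat.pos_of_mem_divisors hd).ne'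
    have hq0 : n / d ≠ 0 := by
      have := Nat.div_pos (Nat.le_of_dvd (Nat.pos_of_ne_zero hn) hdvd) (Nat.pos_of_ne_zero hd0)
      omega
    have hsq : Squarefree (n / d) := by
      by_contra h
      exact hmu (moebius_eq_zero_of_not_squarefree h)
    have h1 : (n / d).factorization p ≤ 1 :=
      (Nat.squarefree_iff_factorization_le_one hq0).mp hsq p
    have h2 : (n / d).factorization p = k - d.factorization p := by
      rw [Nat.factorization_div hdvd, Finsupp.tsub_apply]
    omega
  by_cases hp2 : p = 2
  · subst hp2
    apply Finset.sum_eq_zero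
    intro d hd
    by_cases hmu : (μ (n/d) : ℤ) = 0
    · rw [hmu]; push_cast; ring
    · have hv := hfac_lb d hd hmu
      have hd0 : d ≠ 0 := (Nat.pos_of_mem_divisors hd).ne'
      have h2 : (2:ℕ)^(k-1) ∣ d := (hp.pow_dvd_iff_le_factorization hd0).mpr hv
      have h3 : 2^(k-1) ≤ d := Nat.le_of_dvd (Nat.pos_of_ne_zero hd0) h2
      have h4 : k ≤ 4*d-3 := by
        have := Nat.lt_two_pow_self (n := k-1)
        omega
      have h5 : ((2:ZMod (2^k)))^(4*d-3) = 0 := by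
        have hsplit : 4*d-3 = k + (4*d-3-k) := by omega
        rw [hsplit, pow_add]
        have hz : ((2:ZMod (2^k)))^k = 0 := by
          have h := ZMod.natCast_self (2^k)
          push_cast at h
          exact h
        rw [hz, zero_mul]
      rw [h5, mul_zero]
  · -- odd prime
    have hcop2 : Nat.Coprime 2 (p^k) :=
      ((Nat.coprime_primes Nat.prime_two hp).mpr (fun h => hp2 h.symm)).pow_right k
    have heuler : ((2:ZMod (p^k)))^((p^k).totient) = 1 := by
      have h := Nat.ModEq.pow_totient hcop2
      have h2 := (ZMod.natCast_eq_natCast_iff _ _ _).mpr h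
      push_cast at h2
      exact h2
    have hpow1 : ∀ d : ℕ, p^(k-1) ∣ d → ((2:ZMod (p^k)))^(4*(d*(p-1))) = 1 := by
      intro d hdvd
      obtain ⟨c, hc⟩ := hdvd
      have htot : (p^k).totient = p^(k-1)*(p-1) := Nat.totient_prime_pow hp hk1
      have he : 4*(d*(p-1)) = (p^k).totient * (4*c) := by
        rw [htot, hc]; ring
      rw [he, pow_mul, heuler, one_pow]
    -- pair identity
    have hpair : ∀ d : ℕ, d ∣ n → d.factorization p = k - 1 →
        ((μ (n/d) : ℤ) : ZMod (p^k)) * 2^(4*d-3)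
          + ((μ (n/(d*p)) : ℤ) : ZMod (p^k)) * 2^(4*(d*p)-3) = 0 := by
      intro d hdn hvd
      have hd0 : d ≠ 0 := by rintro rfl; exact hn (Nat.eq_zero_of_zero_dvd hdn)
      have hnd0 : n / d ≠ 0 := by
        have := Nat.div_pos (Nat.le_of_dvd (Nat.pos_of_ne_zero hn) hdn) (Nat.pos_of_ne_zero hd0)
        omega
      have hvnd : (n/d).factorization p = 1 := by
        rw [Nat.factorization_div hdn, Finsupp.tsub_apply, hvd, ← hkdef]
        omega
      have hpnd : p ∣ n / d := Nat.dvd_of_factorization_pos (by rw [hvnd]; norm_num)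
      obtain ⟨t, ht⟩ := hpnd
      have hn_eq : n = d * p * t := by
        have h := Nat.mul_div_cancel' hdn
        rw [ht] at h
        rw [← h]; ring
      have ht0 : t ≠ 0 := by rintro rfl; rw [mul_zero] at hn_eq; exact hn hn_eq
      have hndp : n / (d * p) = t := by
        rw [hn_eq]; exact Nat.mul_div_cancel_left t (Nat.mul_pos (Nat.pos_of_ne_zero hd0) hp.pos)
      have hpt : ¬ p ∣ t := by
        intro hdt
        have hfmul : n.factorization p
            = d.factorization p + 1 + t.factorization p := by
          rw [hn_eq, Nat.factorization_mul (mul_ne_zero hd0 hp.pos.ne') ht0,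
            Nat.factorization_mul hd0 hp.pos.ne', hp.factorization]
          simp
        have h1 : 1 ≤ t.factorization p :=
          (hp.pow_dvd_iff_le_factorization ht0).mp (by simpa using hdt)
        rw [← hkdef] at hfmul
        omega
      have hcopt : Nat.Coprime p t := (Nat.Prime.coprime_iff_not_dvd hp).mpr hpt
      have hmu : μ (p * t) = - μ t := by
        rw [isMultiplicative_moebius.map_mul_of_coprime hcopt, moebius_apply_prime hp]
        ring
      rw [hndp, ht, hmu]
      have hdp : d * p = d * (p - 1) + d := by
        have h1 : p - 1 + 1 = p := Nat.succ_pred_eq_of_pos hp.pos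
        calc d * p = d * (p - 1 + 1) := by rw [h1]
          _ = d * (p-1) + d := by ring
      have hd1 : 1 ≤ d := Nat.pos_of_ne_zero hd0
      have hexp : 4*(d*p) - 3 = (4*d - 3) + 4*(d*(p-1)) := by omega
      have hpk1d : p^(k-1) ∣ d := (hp.pow_dvd_iff_le_factorization hd0).mpr (by omega)
      rw [hexp, pow_add, hpow1 d hpk1d, mul_one]
      push_cast
      ring
    -- involution
    refine Finset.sum_involution
      (fun d _ => if p^k ∣ d then d / p else if p^(k-1) ∣ d then d * p else d)
      ?_ ?_ ?_ ?_
    · -- pair sums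
      intro d hd
      have hdn : d ∣ n := (Nat.mem_divisors.mp hd).1
      have hd0 : d ≠ 0 := (Nat.pos_of_mem_divisors hd).ne'
      have hvle : d.factorization p ≤ k := by
        rw [hkdef]
        exact Finsupp.le_def.mp ((Nat.factorization_le_iff_dvd hd0 hn).mpr hdn) p
      by_cases h1 : p^k ∣ d
      · simp only [h1, if_true]
        have hvk : d.factorization p = k :=
          le_antisymm hvle ((hp.pow_dvd_iff_le_factorization hd0).mp h1)
        have hpd : p ∣ d := dvd_trans (dvd_pow_self p (by omega : k ≠ 0)) h1
        have hd' : d / p * p = d := Nat.div_mul_cancel hpd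
        have hd'0 : d / p ≠ 0 := by
          have := Nat.div_pos (Nat.le_of_dvd (Nat.pos_of_ne_zero hd0) hpd) hp.pos
          omega
        have hv' : (d / p).factorization p = k - 1 := by
          rw [Nat.factorization_div hpd, Finsupp.tsub_apply, hvk, hp.factorization]
          simp
        have := hpair (d/p) (dvd_trans (Nat.div_dvd_of_dvd hpd) hdn) hv'
        rw [hd'] at this
        rw [add_comm]
        exact this
      · by_cases h2 : p^(k-1) ∣ d
        · simp only [h1, if_false, h2, if_true]
          have hvk : d.factorization p = k - 1 := by
            have hle := (hp.pow_dvd_iff_le_factorization hd0).mpr (le_refl (d.factorization p))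
            have hlb := (hp.pow_dvd_iff_le_factorization hd0).mp h2
            have hub : ¬ k ≤ d.factorization p := fun h =>
              h1 ((hp.pow_dvd_iff_le_factorization hd0).mpr h)
            omega
          exact hpair d hdn hvk
        · simp only [h1, if_false, h2, if_false]
          have hmu : (μ (n/d) : ℤ) = 0 := by
            by_contra h
            have := hfac_lb d hd h
            exact h2 ((hp.pow_dvd_iff_le_factorization hd0).mpr this)
          rw [hmu]
          push_cast
          ring
    · -- g_ne
      intro d hd hfd
      have hd0 : 0 < d := Nat.pos_of_mem_divisors hd
      by_cases h1 : p^k ∣ d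
      · simp only [h1, if_true]
        exact (Nat.div_lt_self hd0 hp.one_lt).ne
      · by_cases h2 : p^(k-1) ∣ d
        · simp only [h1, if_false, h2, if_true]
          have : d < d * p := (Nat.lt_mul_iff_one_lt_right hd0).mpr hp.one_lt
          omega
        · exfalso
          apply hfd
          have hmu : (μ (n/d) : ℤ) = 0 := by
            by_contra h
            have := hfac_lb d hd h
            exact h2 ((hp.pow_dvd_iff_le_factorization (by omega)).mpr this)
          rw [hmu]
          push_cast
          ring
    · -- g_mem
      intro d hd
      have hdn : d ∣ n := (Nat.mem_divisors.mp hd).1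
      have hd0 : d ≠ 0 := (Nat.pos_of_mem_divisors hd).ne'
      by_cases h1 : p^k ∣ d
      · simp only [h1, if_true]
        have hpd : p ∣ d := dvd_trans (dvd_pow_self p (by omega : k ≠ 0)) h1
        exact Nat.mem_divisors.mpr ⟨dvd_trans (Nat.div_dvd_of_dvd hpd) hdn, hn⟩
      · by_cases h2 : p^(k-1) ∣ d
        · simp only [h1, if_false, h2, if_true]
          have hvk : d.factorization p = k - 1 := by
            have hlb := (hp.pow_dvd_iff_le_factorization hd0).mp h2
            have hub : ¬ k ≤ d.factorization p := fun h =>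
              h1 ((hp.pow_dvd_iff_le_factorization hd0).mpr h)
            omega
          -- d*p ∣ n as in hpair
          have hvnd : (n/d).factorization p = 1 := by
            rw [Nat.factorization_div hdn, Finsupp.tsub_apply, hvk, ← hkdef]
            omega
          have hnd0 : n / d ≠ 0 := by
            have := Nat.div_pos (Nat.le_of_dvd (Nat.pos_of_ne_zero hn) hdn)
              (Nat.pos_of_ne_zero hd0)
            omega
          have hpnd : p ∣ n / d := Nat.dvd_of_factorization_pos (by rw [hvnd]; norm_num)
          obtain ⟨t, ht⟩ := hpnd
          have hn_eq : n = d * p * t := by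
            have h := Nat.mul_div_cancel' hdn
            rw [ht] at h
            rw [← h]; ring
          exact Nat.mem_divisors.mpr ⟨⟨t, hn_eq⟩, hn⟩
        · simpa only [h1, if_false, h2, if_false] using hd
    · -- involution
      intro d hd
      have hdn : d ∣ n := (Nat.mem_divisors.mp hd).1
      have hd0 : d ≠ 0 := (Nat.pos_of_mem_divisors hd).ne'
      have hvle : d.factorization p ≤ k := by
        rw [hkdef]
        exact Finsupp.le_def.mp ((Nat.factorization_le_iff_dvd hd0 hn).mpr hdn) p
      by_cases h1 : p^k ∣ d
      · simp only [h1, if_true]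
        have hvk : d.factorization p = k :=
          le_antisymm hvle ((hp.pow_dvd_iff_le_factorization hd0).mp h1)
        have hpd : p ∣ d := dvd_trans (dvd_pow_self p (by omega : k ≠ 0)) h1
        have hd'0 : d / p ≠ 0 := by
          have := Nat.div_pos (Nat.le_of_dvd (Nat.pos_of_ne_zero hd0) hpd) hp.pos
          omega
        have hv' : (d / p).factorization p = k - 1 := by
          rw [Nat.factorization_div hpd, Finsupp.tsub_apply, hvk, hp.factorization]
          simp
        have hnk : ¬ p^k ∣ d / p := fun h => by
          have := (hp.pow_dvd_iff_le_factorization hd'0).mp h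
          omega
        have hyk : p^(k-1) ∣ d / p :=
          (hp.pow_dvd_iff_le_factorization hd'0).mpr (by omega)
        simp only [hnk, if_false, hyk, if_true]
        exact Nat.div_mul_cancel hpd
      · by_cases h2 : p^(k-1) ∣ d
        · simp only [h1, if_false, h2, if_true]
          have hvk : d.factorization p = k - 1 := by
            have hlb := (hp.pow_dvd_iff_le_factorization hd0).mp h2
            have hub : ¬ k ≤ d.factorization p := fun h =>
              h1 ((hp.pow_dvd_iff_le_factorization hd0).mpr h)
            omega
          have hdp0 : d * p ≠ 0 := mul_ne_zero hd0 hp.pos.ne'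
          have hv' : (d * p).factorization p = k := by
            rw [Nat.factorization_mul hd0 hp.pos.ne', hp.factorization]
            simp [hvk]
            omega
          have hyk : p^k ∣ d * p :=
            (hp.pow_dvd_iff_le_factorization hdp0).mpr (by omega)
          simp only [hyk, if_true]
          rw [Nat.mul_div_assoc d (dvd_refl p), Nat.div_self hp.pos, mul_one]
        · simp only [h1, if_false, h2, if_false]

theorem stmt_15 :
    ∀ n : ℕ, 1 ≤ n → ∃ k : ℕ,
      ∑ d ∈ n.divisors, moebius (n / d) * (2 : ℤ) ^ (4 * d - 3) =
        (n : ℤ) * (k : ℤ) := by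
  intro n hn
  have hn0 : n ≠ 0 := by omega
  set S : ℤ := ∑ d ∈ n.divisors, (μ (n / d) : ℤ) * 2 ^ (4*d-3) with hSdef
  have hSpos : 0 < S := S_pos hn
  have hM : (S.natAbs : ℤ) = S := Int.natAbs_of_nonneg hSpos.le
  have hM0 : S.natAbs ≠ 0 := Int.natAbs_ne_zero.mpr hSpos.ne'
  have hdvd : n ∣ S.natAbs := by
    rw [← Nat.factorization_le_iff_dvd hn0 hM0, Finsupp.le_def]
    intro q
    by_cases hq : q.Prime
    · have h1 := key_s15 (n := n) hq hn0
      have h2 : (q:ℕ)^(n.factorization q) ∣ S.natAbs := by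
        have h3 : ((q^(n.factorization q) : ℕ) : ℤ) ∣ (S.natAbs : ℤ) := by
          rw [hM]; push_cast; exact h1
        exact_mod_cast h3
      exact (hq.pow_dvd_iff_le_factorization hM0).mp h2
    · simp [Nat.factorization_eq_zero_of_not_prime _ hq]
  obtain ⟨c, hc⟩ := hdvd
  refine ⟨c, ?_⟩
  have : S = (n:ℤ) * (c:ℤ) := by rw [← hM, hc]; push_cast; ring
  exact this
end

section
/- Define λ_n by λ_0 = 1 and (n+1)·λ_{n+1} = Σ_{k=0}^n 2^{4k+1}·|E_{2k+2}|·λ_{n-k} for n ≥ 0, where E_m are the Euler numbers. Then every λ_n is an integer. -/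
open Finset ArithmeticFunction

namespace Gabcke
open PowerSeries

noncomputable def sech : PowerSeries ℚ := coshSeries⁻¹

lemma constantCoeff_cosh : constantCoeff coshSeries = 1 := by
  rw [← coeff_zero_eq_constantCoeff_apply]
  simp [coshSeries]

lemma cosh_ne0 : constantCoeff coshSeries ≠ 0 := by
  rw [constantCoeff_cosh]; norm_num

lemma sech_mul_cosh : sech * coshSeries = 1 :=
  PowerSeries.inv_mul_cancel _ cosh_ne0

lemma cosh_mul_sech : coshSeries * sech = 1 := by
  rw [mul_comm]; exact sech_mul_cosh

noncomputable def Eexp (a : ℚ) : PowerSeries ℚ := rescale a (exp ℚ)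

lemma coeff_Eexp (a : ℚ) (n : ℕ) :
    coeff n (Eexp a) = a ^ n / n.factorial := by
  rw [Eexp, coeff_rescale, coeff_exp]
  simp [algebraMap]
  ring

lemma Eexp_mul (a b : ℚ) : Eexp a * Eexp b = Eexp (a + b) :=
  exp_mul_exp_eq_exp_add a b

lemma Eexp_zero : Eexp 0 = 1 := by
  ext n
  rw [coeff_Eexp]
  cases n with
  | zero => simp
  | succ n => simp [zero_pow, coeff_one]

lemma two_cosh : Eexp 1 + Eexp (-1) = 2 * coshSeries := by
  ext n
  rw [map_add, coeff_Eexp, coeff_Eexp]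
  have h2 : (2 : ℚ⟦X⟧) = C 2 := by
    simp [map_ofNat]
  rw [h2, coeff_C_mul]
  simp only [coshSeries, coeff_mk, one_pow]
  rcases Nat.even_or_odd n with h | h
  · rw [if_pos h, h.neg_one_pow]
    have : (n.factorial : ℚ) ≠ 0 := by positivity
    field_simp
    norm_num
  · rw [if_neg (by simp [Nat.not_even_iff_odd, h]), h.neg_one_pow]
    have : (n.factorial : ℚ) ≠ 0 := by positivity
    field_simp
    norm_num

lemma telescope (q : ℕ) :
    ∑ j ∈ range q, (-1 : ℚ⟦X⟧) ^ j * (Eexp (2 * j + 2) + Eexp (2 * j)) =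
      1 + (-1) ^ (q + 1) * Eexp (2 * q) := by
  induction q with
  | zero => simp [Eexp_zero]
  | succ q ih =>
      rw [sum_range_succ, ih]
      have e1 : (2 : ℚ) * (↑(q + 1) : ℚ) = 2 * q + 2 := by push_cast; ring
      rw [e1]
      ring

lemma sum_mul_cosh (q : ℕ) (hq : Odd q) :
    (∑ j ∈ range q, (-1 : ℚ⟦X⟧) ^ j * Eexp (2 * j + 1)) * (2 * coshSeries) =
      1 + Eexp (2 * q) := by
  rw [← two_cosh, sum_mul]
  have : ∀ j ∈ range q, (-1 : ℚ⟦X⟧) ^ j * Eexp (2 * j + 1) * (Eexp 1 + Eexp (-1)) =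
      (-1 : ℚ⟦X⟧) ^ j * (Eexp (2 * j + 2) + Eexp (2 * j)) := by
    intro j _
    rw [mul_add, mul_assoc, mul_assoc, Eexp_mul, Eexp_mul, ← mul_add]
    have e1 : (2 : ℚ) * j + 1 + 1 = 2 * j + 2 := by ring
    have e2 : (2 : ℚ) * j + 1 + -1 = 2 * j := by ring
    rw [e1, e2]
  rw [sum_congr rfl this, telescope]
  have : ((-1 : ℚ⟦X⟧)) ^ (q + 1) = 1 := Even.neg_one_pow (by exact hq.add_one)
  rw [this, one_mul]

lemma key (q : ℕ) (hq : Odd q) :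
    2 * ∑ j ∈ range q, (-1 : ℚ⟦X⟧) ^ j * Eexp (2 * j + 1) =
      (1 + Eexp (2 * q)) * sech := by
  have h1 := sum_mul_cosh q hq
  have : (∑ j ∈ range q, (-1 : ℚ⟦X⟧) ^ j * Eexp (2 * j + 1)) * (2 * coshSeries) * sech =
      (1 + Eexp (2 * q)) * sech := by rw [h1]
  calc 2 * ∑ j ∈ range q, (-1 : ℚ⟦X⟧) ^ j * Eexp (2 * j + 1)
      = (∑ j ∈ range q, (-1 : ℚ⟦X⟧) ^ j * Eexp (2 * j + 1)) * (2 * (coshSeries * sech)) := by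
        rw [cosh_mul_sech]; ring
    _ = (∑ j ∈ range q, (-1 : ℚ⟦X⟧) ^ j * Eexp (2 * j + 1)) * (2 * coshSeries) * sech := by
        ring
    _ = (1 + Eexp (2 * q)) * sech := this

end Gabcke

namespace Gabcke
open PowerSeries

lemma coeff_sech (j : ℕ) : coeff j sech = eulerNumber j / j.factorial := by
  rw [eulerNumber]
  have : (j.factorial : ℚ) ≠ 0 := by positivity
  field_simp [sech]
  rfl

lemma star_q (q n : ℕ) (hq : Odd q) :
    2 * ∑ j ∈ range q, (-1 : ℚ) ^ j * (2 * j + 1) ^ n =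
      eulerNumber n + ∑ k ∈ range (n + 1),
        (n.choose k : ℚ) * (2 * q) ^ k * eulerNumber (n - k) := by
  have h := congrArg (coeff n) (key q hq)
  have h2 : (2 : ℚ⟦X⟧) = C 2 := by simp [map_ofNat]
  rw [h2, coeff_C_mul, map_sum] at h
  have hL : ∀ j ∈ range q, coeff n ((-1 : ℚ⟦X⟧) ^ j * Eexp (2 * j + 1)) =
      (-1 : ℚ) ^ j * ((2 * j + 1) ^ n / n.factorial) := by
    intro j _
    have : ((-1 : ℚ⟦X⟧)) ^ j = C ((-1) ^ j) := by rw [map_pow, map_neg, map_one]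
    rw [this, coeff_C_mul, coeff_Eexp]
  rw [sum_congr rfl hL] at h
  rw [coeff_mul, Finset.Nat.sum_antidiagonal_eq_sum_range_succ_mk] at h
  have hfac : (n.factorial : ℚ) ≠ 0 := by positivity
  have key2 : 2 * ∑ j ∈ range q, (-1 : ℚ) ^ j * (2 * j + 1) ^ n =
      (n.factorial : ℚ) * ∑ k ∈ range (n + 1),
        coeff k (1 + Eexp (2 * q)) * coeff (n - k) sech := by
    rw [← h, mul_sum, mul_sum, mul_sum]
    apply sum_congr rfl
    intro j _
    field_simp
  rw [key2, mul_sum]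
  have hterm : ∀ k ∈ range (n + 1),
      (n.factorial : ℚ) * (coeff k (1 + Eexp (2 * q)) * coeff (n - k) sech) =
      (if k = 0 then eulerNumber n else 0) +
        (n.choose k : ℚ) * (2 * q) ^ k * eulerNumber (n - k) := by
    intro k hk
    have hkn : k ≤ n := Nat.lt_succ_iff.mp (mem_range.mp hk)
    rw [map_add, coeff_one, coeff_Eexp, coeff_sech]
    have hk2 : (k.factorial : ℚ) ≠ 0 := by positivity
    have hnk2 : ((n - k).factorial : ℚ) ≠ 0 := by positivity
    have hch : (n.choose k : ℚ) = n.factorial / (k.factorial * (n - k).factorial) :=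
      Nat.cast_choose ℚ hkn
    by_cases h0 : k = 0
    · subst h0
      simp only [if_pos]
      rw [Nat.choose_zero_right, Nat.sub_zero]
      field_simp
      ring
    · rw [if_neg h0, if_neg h0, hch]
      field_simp
      ring
  rw [sum_congr rfl hterm, sum_add_distrib]
  congr 1
  rw [Finset.sum_ite_eq' (range (n + 1)) 0 (fun _ => eulerNumber n)]
  rw [if_pos (mem_range.mpr (Nat.succ_pos n))]

lemma eulerNumber_zero : eulerNumber 0 = 1 := by
  rw [eulerNumber]
  simp only [Nat.factorial_zero, Nat.cast_one, one_mul, coeff_zero_eq_constantCoeff_apply]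
  rw [PowerSeries.constantCoeff_inv, constantCoeff_cosh]
  norm_num

lemma star_q' (q n : ℕ) (hq : Odd q) :
    2 * ∑ j ∈ range q, (-1 : ℚ) ^ j * (2 * j + 1) ^ n =
      2 * eulerNumber n + ∑ k ∈ range n,
        (n.choose (k + 1) : ℚ) * (2 * q) ^ (k + 1) * eulerNumber (n - 1 - k) := by
  rw [star_q q n hq, Finset.sum_range_succ']
  simp only [Nat.choose_zero_right, pow_zero, Nat.sub_zero, Nat.cast_one]
  have hcong : ∀ k ∈ range n, (n.choose (k + 1) : ℚ) * (2 * q) ^ (k + 1) * eulerNumber (n - (k + 1))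
      = (n.choose (k + 1) : ℚ) * (2 * q) ^ (k + 1) * eulerNumber (n - 1 - k) := by
    intro k _
    congr 2
    omega
  rw [sum_congr rfl hcong]
  ring

/-- Integer Euler numbers. -/
noncomputable def Ez (n : ℕ) : ℤ := (eulerNumber n).num

lemma Ez_cast : ∀ n, (Ez n : ℚ) = eulerNumber n := by
  intro n
  induction n using Nat.strong_induction_on with
  | _ n ih =>
    have h := star_q' 1 n odd_one
    simp only [range_one, sum_singleton, pow_zero, one_mul, Nat.cast_one] at h
    -- h : 2 * (2*0+1)^n = 2 * E n + ∑ ...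
    have h2 : eulerNumber n = 1 - ∑ k ∈ range n,
        (n.choose (k + 1) : ℚ) * 2 ^ k * eulerNumber (n - 1 - k) := by
      have expand : ∀ k ∈ range n,
          (n.choose (k + 1) : ℚ) * (2 * 1) ^ (k + 1) * eulerNumber (n - 1 - k) =
          2 * ((n.choose (k + 1) : ℚ) * 2 ^ k * eulerNumber (n - 1 - k)) := by
        intro k _; ring
      rw [sum_congr rfl expand, ← mul_sum] at h
      have : (2 : ℚ) * (2 * (0:ℕ) + 1) ^ n = 2 := by norm_num
      rw [this] at h
      linarith
    have h3 : eulerNumber n = ((1 - ∑ k ∈ range n,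
        (n.choose (k + 1) : ℤ) * 2 ^ k * Ez (n - 1 - k) : ℤ) : ℚ) := by
      rw [h2]
      push_cast
      congr 1
      apply sum_congr rfl
      intro k hk
      rw [ih (n - 1 - k) (by have := mem_range.mp hk; omega)]
    rw [Ez, h3, Rat.num_intCast]

lemma star_int (q n : ℕ) (hq : Odd q) :
    2 * ∑ j ∈ range q, (-1 : ℤ) ^ j * (2 * j + 1) ^ n =
      Ez n + ∑ k ∈ range (n + 1), (n.choose k : ℤ) * (2 * q) ^ k * Ez (n - k) := by
  have h := star_q q n hq
  apply (Int.cast_injective (α := ℚ))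
  push_cast [Ez_cast]
  convert h using 2

lemma Ez_zero : Ez 0 = 1 := by
  have := Ez_cast 0
  rw [eulerNumber_zero] at this
  exact_mod_cast this

end Gabcke

namespace Gabcke
open PowerSeries

lemma rescale_neg_cosh : rescale (-1 : ℚ) coshSeries = coshSeries := by
  ext n
  rw [coeff_rescale]
  simp only [coshSeries, coeff_mk]
  rcases Nat.even_or_odd n with h | h
  · rw [h.neg_one_pow, one_mul]
  · rw [if_neg (by simp [Nat.not_even_iff_odd, h]), mul_zero]

lemma cosh_ne0' : coshSeries ≠ 0 := by
  intro h
  apply cosh_ne0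
  rw [h]
  exact _root_.map_zero (constantCoeff (R := ℚ))

lemma rescale_neg_sech : rescale (-1 : ℚ) sech = sech := by
  have h1 : (rescale (-1 : ℚ) sech) * coshSeries = 1 := by
    have h := congrArg (rescale (-1 : ℚ)) sech_mul_cosh
    rw [map_mul, rescale_neg_cosh, map_one] at h
    exact h
  exact mul_right_cancel₀ cosh_ne0' (h1.trans sech_mul_cosh.symm)

lemma euler_odd (n : ℕ) (hn : Odd n) : eulerNumber n = 0 := by
  have h : coeff n (rescale (-1 : ℚ) sech) = coeff n sech := by rw [rescale_neg_sech]
  rw [coeff_rescale, hn.neg_one_pow, neg_one_mul] at h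
  have h0 : coeff n sech = 0 := by linarith
  rw [eulerNumber]
  show (n.factorial : ℚ) * coeff n sech = 0
  rw [h0, mul_zero]

lemma Ez_odd (n : ℕ) (hn : Odd n) : Ez n = 0 := by
  have := Ez_cast n
  rw [euler_odd n hn] at this
  exact_mod_cast this

lemma star_int' (q n : ℕ) (hq : Odd q) :
    2 * ∑ j ∈ range q, (-1 : ℤ) ^ j * (2 * j + 1) ^ n - 2 * Ez n =
      ∑ k ∈ range n, (n.choose (k + 1) : ℤ) * (2 * q) ^ (k + 1) * Ez (n - (k + 1)) := by
  have h := star_int q n hq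
  rw [Finset.sum_range_succ'] at h
  simp only [Nat.choose_zero_right, pow_zero, Nat.sub_zero, Nat.cast_one, one_mul] at h
  linarith

lemma euler_sum_congr (p a n : ℕ) (hp : p.Prime) (hp2 : p ≠ 2) (ha : 1 ≤ a) :
    ((p : ℤ) ^ a) ∣ Ez n - ∑ j ∈ range (p ^ a), (-1 : ℤ) ^ j * (2 * j + 1) ^ n := by
  have hq : Odd (p ^ a) := (hp.odd_of_ne_two hp2).pow
  have h := star_int' (p ^ a) n hq
  have hdvd : ((p : ℤ) ^ a) ∣
      ∑ k ∈ range n, (n.choose (k + 1) : ℤ) * (2 * (p ^ a : ℕ)) ^ (k + 1) * Ez (n - (k + 1)) := by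
    apply Finset.dvd_sum
    intro k _
    have h1 : ((p : ℤ) ^ a) ∣ (2 * ((p : ℕ) ^ a : ℕ) : ℤ) ^ (k + 1) := by
      have : ((p : ℤ) ^ a) ∣ (2 * ((p : ℕ) ^ a : ℕ) : ℤ) := by
        push_cast
        exact Dvd.intro_left 2 rfl
      calc ((p : ℤ) ^ a) ∣ (2 * ((p : ℕ) ^ a : ℕ) : ℤ) := this
        _ ∣ (2 * ((p : ℕ) ^ a : ℕ) : ℤ) ^ (k + 1) := dvd_pow_self _ (Nat.succ_ne_zero k)
    exact (h1.mul_left _).mul_right _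
  rw [← h] at hdvd
  have h2 : (2 : ℤ) * (Ez n - ∑ j ∈ range (p ^ a), (-1 : ℤ) ^ j * (2 * j + 1) ^ n) =
      -(2 * ∑ j ∈ range (p ^ a), (-1 : ℤ) ^ j * (2 * j + 1) ^ n - 2 * Ez n) := by ring
  have hcop : IsCoprime ((p : ℤ) ^ a) 2 := by
    apply IsCoprime.pow_left
    rw [Int.isCoprime_iff_gcd_eq_one]
    have : Nat.Coprime p 2 := (Nat.coprime_primes hp Nat.prime_two).mpr hp2
    simpa [Int.gcd] using this
  have h3 : ((p : ℤ) ^ a) ∣ 2 * (Ez n - ∑ j ∈ range (p ^ a), (-1 : ℤ) ^ j * (2 * j + 1) ^ n) := by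
    rw [h2]
    exact hdvd.neg_right
  exact hcop.dvd_of_dvd_mul_left h3

lemma pow_term_congr (p a : ℕ) (hp : p.Prime) (ha : 1 ≤ a) (x : ℕ) (n n' : ℕ)
    (hn : a ≤ n) (hn' : a ≤ n') (hnn : n ≤ n')
    (hd : p ^ (a - 1) * (p - 1) ∣ n' - n) :
    ((p : ℤ) ^ a) ∣ (x : ℤ) ^ n' - (x : ℤ) ^ n := by
  by_cases hpx : p ∣ x
  · have h1 : ((p : ℤ) ^ a) ∣ (x : ℤ) ^ n := by
      calc ((p : ℤ) ^ a) ∣ (p : ℤ) ^ n := pow_dvd_pow _ hn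
        _ ∣ (x : ℤ) ^ n := pow_dvd_pow_of_dvd (Int.natCast_dvd_natCast.mpr hpx) n
    have h2 : ((p : ℤ) ^ a) ∣ (x : ℤ) ^ n' := by
      calc ((p : ℤ) ^ a) ∣ (p : ℤ) ^ n' := pow_dvd_pow _ hn'
        _ ∣ (x : ℤ) ^ n' := pow_dvd_pow_of_dvd (Int.natCast_dvd_natCast.mpr hpx) n'
    exact dvd_sub h2 h1
  · have hcop : Nat.Coprime x (p ^ a) :=
      (Nat.Coprime.pow_right a ((Nat.Prime.coprime_iff_not_dvd hp).mpr hpx).symm)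
    have htot : Nat.totient (p ^ a) = p ^ (a - 1) * (p - 1) :=
      Nat.totient_prime_pow hp ha
    obtain ⟨t, ht⟩ := hd
    have hmod : x ^ (n' - n) ≡ 1 [MOD p ^ a] := by
      have h1 : x ^ Nat.totient (p ^ a) ≡ 1 [MOD p ^ a] := Nat.ModEq.pow_totient hcop
      calc x ^ (n' - n) = (x ^ Nat.totient (p ^ a)) ^ t := by
            rw [← pow_mul, htot, ← ht]
        _ ≡ 1 ^ t [MOD p ^ a] := h1.pow t
        _ = 1 := one_pow t
    have hdvd1 : ((p : ℤ) ^ a) ∣ ((x : ℤ) ^ (n' - n) - 1) := by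
      have h5 := (Nat.modEq_iff_dvd.mp hmod.symm)
      push_cast at h5
      exact h5
    have hsplit : (x : ℤ) ^ n' - (x : ℤ) ^ n = (x : ℤ) ^ n * ((x : ℤ) ^ (n' - n) - 1) := by
      rw [mul_sub, mul_one, ← pow_add]
      congr 2
      omega
    rw [hsplit]
    exact hdvd1.mul_left _

lemma euler_kummer (p a n n' : ℕ) (hp : p.Prime) (hp2 : p ≠ 2) (ha : 1 ≤ a)
    (hn : a ≤ n) (hn' : a ≤ n') (hnn : n ≤ n')
    (hd : p ^ (a - 1) * (p - 1) ∣ n' - n) :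
    ((p : ℤ) ^ a) ∣ Ez n' - Ez n := by
  have h1 := euler_sum_congr p a n hp hp2 ha
  have h2 := euler_sum_congr p a n' hp hp2 ha
  have h3 : ((p : ℤ) ^ a) ∣ ∑ j ∈ range (p ^ a),
      ((-1 : ℤ) ^ j * (2 * j + 1) ^ n' - (-1 : ℤ) ^ j * (2 * j + 1) ^ n) := by
    apply Finset.dvd_sum
    intro j _
    have he : (-1 : ℤ) ^ j * (2 * j + 1) ^ n' - (-1 : ℤ) ^ j * (2 * j + 1) ^ n =
        (-1 : ℤ) ^ j * ((2 * j + 1) ^ n' - (2 * j + 1) ^ n) := by ring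
    rw [he]
    apply Dvd.dvd.mul_left
    have := pow_term_congr p a hp ha (2 * j + 1) n n' hn hn' hnn hd
    push_cast at this
    exact this
  rw [Finset.sum_sub_distrib] at h3
  have hfinal : Ez n' - Ez n =
      (Ez n' - ∑ j ∈ range (p ^ a), (-1 : ℤ) ^ j * (2 * j + 1) ^ n')
      - (Ez n - ∑ j ∈ range (p ^ a), (-1 : ℤ) ^ j * (2 * j + 1) ^ n)
      + (∑ j ∈ range (p ^ a), (-1 : ℤ) ^ j * (2 * j + 1) ^ n'
         - ∑ j ∈ range (p ^ a), (-1 : ℤ) ^ j * (2 * j + 1) ^ n) := by ring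
  rw [hfinal]
  exact dvd_add (dvd_sub h2 h1) h3

lemma Ez_even_parity (n : ℕ) (hn : Even n) : (2 : ℤ) ∣ Ez n - 1 := by
  have h := star_int' 1 n odd_one
  have hdvd : (4 : ℤ) ∣ ∑ k ∈ range n, (n.choose (k + 1) : ℤ) * (2 * (1 : ℕ)) ^ (k + 1) * Ez (n - (k + 1)) := by
    apply Finset.dvd_sum
    intro k hk
    rcases Nat.eq_zero_or_pos k with hk0 | hk1
    · have hkn : k < n := mem_range.mp hk
      obtain ⟨m, hm⟩ := hn
      have hodd : Odd (n - (k + 1)) := by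
        refine ⟨m - 1, by omega⟩
      rw [Ez_odd _ hodd, mul_zero]
      exact dvd_zero 4
    · have h6 : (4 : ℤ) ∣ (2 * (1 : ℕ) : ℤ) ^ (k + 1) := by
        have h7 : (2 * (1 : ℕ) : ℤ) = 2 := by norm_num
        have hke : k + 1 = 2 + (k - 1) := by omega
        rw [h7, hke, pow_add]
        norm_num
      exact (h6.mul_left _).mul_right _
  rw [← h] at hdvd
  have hS : ∑ j ∈ range 1, (-1 : ℤ) ^ j * (2 * j + 1) ^ n = 1 := by simp
  rw [hS] at hdvd
  have h4 : (2 : ℤ) * 2 ∣ 2 * (1 - Ez n) := by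
    have : (2 : ℤ) * (1 - Ez n) = 2 * 1 - 2 * Ez n := by ring
    rw [this]
    exact (by norm_num : (2:ℤ)*2 = 4) ▸ hdvd
  have := (mul_dvd_mul_iff_left (by norm_num : (2:ℤ) ≠ 0)).mp h4
  omega

end Gabcke

namespace Gabcke
open PowerSeries

noncomputable def aa (n : ℕ) : ℚ := (-1) ^ n * eulerNumber (2 * n) / (2 * n).factorial

lemma aa_zero : aa 0 = 1 := by simp [aa, eulerNumber_zero]

lemma sum_even_helper (m : ℕ) (g : ℕ → ℚ) (hodd : ∀ k, Odd k → g k = 0) :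
    ∑ k ∈ range (2 * m + 1), g k = ∑ i ∈ range (m + 1), g (2 * i) := by
  induction m with
  | zero => simp
  | succ m ih =>
    have h1 : 2 * (m + 1) + 1 = (2 * m + 1) + 1 + 1 := by ring
    rw [h1, sum_range_succ, sum_range_succ, ih, hodd (2 * m + 1) ⟨m, by ring⟩,
      sum_range_succ]
    have h2 : 2 * m + 1 + 1 = 2 * (m + 1) := by ring
    rw [h2, add_zero, sum_range_succ, sum_range_succ]

lemma zero_sum (n : ℕ) :
    ∑ i ∈ range (n + 2), (-1 : ℚ) ^ i * aa i / (2 * (n + 1 - i)).factorial = 0 := by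
  have h1 : coeff (2 * n + 2) (sech * coshSeries) = 0 := by
    rw [sech_mul_cosh, coeff_one]
    simp
  rw [coeff_mul, Finset.Nat.sum_antidiagonal_eq_sum_range_succ_mk] at h1
  have h2 : (2 * n + 2).succ = 2 * (n + 1) + 1 := by omega
  rw [h2] at h1
  have h3 :  ∑ k ∈ range (2 * (n + 1) + 1),
      coeff k sech * coeff (2 * n + 2 - k) coshSeries =
      ∑ i ∈ range (n + 2), coeff (2 * i) sech * coeff (2 * n + 2 - 2 * i) coshSeries := by
    apply sum_even_helper (n + 1)
    intro k hk
    rw [coeff_sech, euler_odd k hk, zero_div, zero_mul]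
  rw [h3] at h1
  rw [← h1]
  apply sum_congr rfl
  intro i hi
  have hin : i ≤ n + 1 := Nat.lt_succ_iff.mp (mem_range.mp hi)
  have he : 2 * n + 2 - 2 * i = 2 * (n + 1 - i) := by omega
  have hsq : ((-1 : ℚ) ^ i) * ((-1 : ℚ) ^ i) = 1 := by
    rw [← pow_add]
    exact Even.neg_one_pow ⟨i, by ring⟩
  have haa : (-1 : ℚ) ^ i * aa i = eulerNumber (2 * i) / (2 * i).factorial := by
    calc (-1 : ℚ) ^ i * aa i
        = ((-1 : ℚ) ^ i * (-1) ^ i) * eulerNumber (2 * i) / (2 * i).factorial := by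
          rw [aa]; ring
      _ = eulerNumber (2 * i) / (2 * i).factorial := by rw [hsq, one_mul]
  rw [he, coeff_sech]
  simp only [coshSeries, coeff_mk]
  rw [if_pos ⟨n + 1 - i, by ring⟩, ← haa, div_eq_mul_inv]

lemma aa_rec (n : ℕ) :
    aa (n + 1) = ∑ j ∈ range (n + 1), (-1 : ℚ) ^ j * aa (n - j) / (2 * j + 2).factorial := by
  have h := zero_sum n
  rw [sum_range_succ] at h
  -- isolate i = n+1 term
  have hlast : (-1 : ℚ) ^ (n + 1) * aa (n + 1) / (2 * (n + 1 - (n + 1))).factorial =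
      (-1 : ℚ) ^ (n + 1) * aa (n + 1) := by
    simp
  rw [hlast] at h
  have hsq : (-1 : ℚ) ^ (n + 1) * (-1 : ℚ) ^ (n + 1) = 1 := by
    rw [← pow_add]
    exact Even.neg_one_pow ⟨n + 1, by ring⟩
  have hstep : (-1 : ℚ) ^ (n + 1) * aa (n + 1) =
      - ∑ i ∈ range (n + 1), (-1 : ℚ) ^ i * aa i / (2 * (n + 1 - i)).factorial := by
    linarith
  have h2 : aa (n + 1) = (-1 : ℚ) ^ (n + 1) *
      (- ∑ i ∈ range (n + 1), (-1 : ℚ) ^ i * aa i / (2 * (n + 1 - i)).factorial) := by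
    calc aa (n + 1) = ((-1 : ℚ) ^ (n + 1) * (-1) ^ (n + 1)) * aa (n + 1) := by
          rw [hsq, one_mul]
      _ = (-1 : ℚ) ^ (n + 1) * ((-1 : ℚ) ^ (n + 1) * aa (n + 1)) := by ring
      _ = _ := by rw [hstep]
  -- reflect the sum
  rw [← Finset.sum_range_reflect (fun i => (-1 : ℚ) ^ i * aa i / (2 * (n + 1 - i)).factorial)
    (n + 1)] at h2
  rw [h2, mul_neg, mul_sum, ← Finset.sum_neg_distrib]
  apply sum_congr rfl
  intro j hj
  have hjn : j ≤ n := Nat.lt_succ_iff.mp (mem_range.mp hj)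
  have e1 : n + 1 - 1 - j = n - j := by omega
  have e2 : n + 1 - (n - j) = j + 1 := by omega
  simp only [e1, e2]
  have hsign : (-1 : ℚ) ^ (n - j) * (-1 : ℚ) ^ (n + 1) = -(-1 : ℚ) ^ j := by
    rw [← pow_add]
    have he : n - j + (n + 1) = 2 * (n - j) + (j + 1) := by omega
    rw [he, pow_add, pow_mul]
    simp [pow_succ]
  have e3 : (2 * (j + 1)) = 2 * j + 2 := by ring
  rw [e3]
  calc -((-1 : ℚ) ^ (n + 1) * ((-1) ^ (n - j) * aa (n - j) / (2 * j + 2).factorial))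
      = -(((-1 : ℚ) ^ (n - j) * (-1) ^ (n + 1)) * (aa (n - j) / (2 * j + 2).factorial)) := by
        ring
    _ = (-1 : ℚ) ^ j * aa (n - j) / (2 * j + 2).factorial := by rw [hsign]; ring

lemma alt_peel (t : ℕ → ℚ) (K l : ℕ) :
    ∑ j ∈ range (K + 1), (-1 : ℚ) ^ j * t (l + j) =
      t l - ∑ j ∈ range K, (-1 : ℚ) ^ j * t ((l + 1) + j) := by
  rw [Finset.sum_range_succ']
  have hc : ∀ j ∈ range K, (-1 : ℚ) ^ (j + 1) * t (l + (j + 1)) =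
      -((-1 : ℚ) ^ j * t ((l + 1) + j)) := by
    intro j _
    have : l + (j + 1) = (l + 1) + j := by ring
    rw [this]
    ring
  rw [sum_congr rfl hc, Finset.sum_neg_distrib]
  simp only [pow_zero, one_mul, Nat.add_zero]
  ring

lemma alt_bounds (t : ℕ → ℚ) (h0 : ∀ j, 0 ≤ t j) (hdec : ∀ j, t (j + 1) ≤ t j) :
    ∀ K l, 0 ≤ ∑ j ∈ range K, (-1 : ℚ) ^ j * t (l + j) ∧
      ∑ j ∈ range K, (-1 : ℚ) ^ j * t (l + j) ≤ t l := by
  intro K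
  induction K with
  | zero => intro l; simp [h0 l]
  | succ K ih =>
    intro l
    obtain ⟨ih0, ih1⟩ := ih (l + 1)
    rw [alt_peel]
    constructor
    · linarith [ih1, hdec l]
    · linarith [ih0]

lemma alt_lower (t : ℕ → ℚ) (h0 : ∀ j, 0 ≤ t j) (hdec : ∀ j, t (j + 1) ≤ t j)
    (K : ℕ) : t 0 - t 1 ≤ ∑ j ∈ range (K + 1), (-1 : ℚ) ^ j * t j := by
  have hp := alt_peel t K 0
  have hb := (alt_bounds t h0 hdec K 1).2
  have : ∀ j ∈ range (K + 1), (-1 : ℚ) ^ j * t j = (-1 : ℚ) ^ j * t (0 + j) := by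
    intro j _; rw [zero_add]
  rw [sum_congr rfl this, hp]
  simp only [zero_add] at hb ⊢
  linarith

end Gabcke

namespace Gabcke

lemma aa_chain : ∀ n : ℕ, 0 < aa n ∧ 2 * aa (n + 1) ≤ aa n ∧ aa n ≤ 3 * aa (n + 1) := by
  intro n
  induction n using Nat.strong_induction_on with
  | _ n SIH =>
    match n, SIH with
    | 0, _ =>
      have h1 : aa 1 = 1 / 2 := by
        rw [aa_rec 0]
        simp [aa_zero, Nat.factorial]
        norm_num
      refine ⟨by rw [aa_zero]; norm_num, ?_, ?_⟩ <;> rw [aa_zero, h1] <;> norm_num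
    | (m + 1), SIH =>
      set n := m + 1 with hn
      have hSm := SIH m (by omega)
      have hn_pos : 0 < aa n := by
        have := hSm.1
        have := hSm.2.2
        linarith
      have hpos : ∀ k, k ≤ n → 0 < aa k := by
        intro k hk
        rcases Nat.lt_or_ge k n with h | h
        · exact (SIH k h).1
        · have : k = n := by omega
          rw [this]; exact hn_pos
      set t : ℕ → ℚ := fun j => if j ≤ n then aa (n - j) / ((2 * j + 2).factorial : ℚ) else 0
        with ht
      have h0 : ∀ j, 0 ≤ t j := by
        intro j
        by_cases hj : j ≤ n
        · have htj : t j = aa (n - j) / ((2 * j + 2).factorial : ℚ) := by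
            simp only [ht]; rw [if_pos hj]
          rw [htj]
          have := hpos (n - j) (by omega)
          positivity
        · have htj : t j = 0 := by simp only [ht]; rw [if_neg hj]
          rw [htj]
      have hdec : ∀ j, t (j + 1) ≤ t j := by
        intro j
        by_cases hj : j + 1 ≤ n
        · have htj1 : t (j + 1) = aa (n - (j + 1)) / ((2 * (j + 1) + 2).factorial : ℚ) := by
            simp only [ht]; rw [if_pos hj]
          have htj : t j = aa (n - j) / ((2 * j + 2).factorial : ℚ) := by
            simp only [ht]; rw [if_pos (by omega : j ≤ n)]
          rw [htj1, htj]
          have hfacc : ((2 * (j + 1) + 2).factorial : ℕ) =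
              (2 * j + 4) * ((2 * j + 3) * (2 * j + 2).factorial) := by
            have e1 : 2 * (j + 1) + 2 = (2 * j + 3) + 1 := by ring
            have e2 : 2 * j + 3 = (2 * j + 2) + 1 := by ring
            rw [e1, Nat.factorial_succ, e2, Nat.factorial_succ, ← e2]
          have hkey : aa (n - (j + 1)) ≤ 3 * aa (n - j) := by
            have h3 := (SIH (n - (j + 1)) (by omega)).2.2
            have e : n - (j + 1) + 1 = n - j := by omega
            rw [e] at h3
            exact h3
          have hF : (0 : ℚ) < ((2 * j + 2).factorial : ℚ) := by positivity
          have hc : (12 : ℚ) ≤ ((2 * j + 4) : ℚ) * ((2 * j + 3) : ℚ) := by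
            have : (3 : ℚ) ≤ ((2 * j + 3) : ℚ) := by
              have : (0:ℚ) ≤ (j:ℚ) := by positivity
              linarith
            nlinarith
          have hApos := hpos (n - j) (by omega)
          have hBpos := hpos (n - (j + 1)) (by omega)
          rw [div_le_div_iff₀ (by push_cast [hfacc]; positivity) hF]
          push_cast [hfacc]
          have hAF : 0 ≤ aa (n - j) * ((2 * j + 2).factorial : ℚ) := by positivity
          nlinarith [mul_le_mul_of_nonneg_right hkey hF.le,
            mul_le_mul_of_nonneg_right hc hAF]
        · have htj1 : t (j + 1) = 0 := by simp only [ht]; rw [if_neg hj]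
          rw [htj1]
          exact h0 j
      have hsum : aa (n + 1) = ∑ j ∈ range (n + 1), (-1 : ℚ) ^ j * t j := by
        rw [aa_rec n]
        apply sum_congr rfl
        intro j hj
        have hjn : j ≤ n := Nat.lt_succ_iff.mp (mem_range.mp hj)
        have htj : t j = aa (n - j) / ((2 * j + 2).factorial : ℚ) := by
          simp only [ht]; rw [if_pos hjn]
        rw [htj]
        ring
      have ht0 : t 0 = aa n / 2 := by
        have htj : t 0 = aa (n - 0) / ((2 * 0 + 2).factorial : ℚ) := by
          simp only [ht]; rw [if_pos (by omega : 0 ≤ n)]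
        rw [htj]
        norm_num [Nat.factorial]
      have ht1 : t 1 ≤ aa n / 8 := by
        have htj : t 1 = aa (n - 1) / ((2 * 1 + 2).factorial : ℚ) := by
          simp only [ht]; rw [if_pos (by omega : 1 ≤ n)]
        rw [htj]
        have h24 : ((2 * 1 + 2).factorial : ℚ) = 24 := by norm_num [Nat.factorial]
        rw [h24]
        have hkey : aa (n - 1) ≤ 3 * aa n := by
          have h3 := hSm.2.2
          have e : n - 1 = m := by omega
          rw [e]
          exact h3
        linarith
      have hupper : aa (n + 1) ≤ aa n / 2 := by
        have hb := (alt_bounds t h0 hdec (n + 1) 0).2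
        have hz : ∀ j ∈ range (n + 1), (-1 : ℚ) ^ j * t (0 + j) = (-1 : ℚ) ^ j * t j := by
          intro j _; rw [Nat.zero_add]
        rw [sum_congr rfl hz] at hb
        rw [hsum, ← ht0]
        exact hb
      have hlower : aa n / 2 - aa n / 8 ≤ aa (n + 1) := by
        have hb := alt_lower t h0 hdec n
        rw [← hsum] at hb
        have := ht1
        linarith [hb, ht0 ▸ (le_refl (t 0))]
      refine ⟨hn_pos, by linarith, by linarith⟩

lemma aa_pos (n : ℕ) : 0 < aa n := (aa_chain n).1

lemma abs_Ez (m : ℕ) : |Ez (2 * m)| = (-1) ^ m * Ez (2 * m) := by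
  have hf : (0 : ℚ) < ((2 * m).factorial : ℚ) := by positivity
  have h1 : 0 < (-1 : ℚ) ^ m * eulerNumber (2 * m) := by
    have h := mul_pos (aa_pos m) hf
    rw [aa, div_mul_cancel₀] at h
    · exact h
    · positivity
  have h2 : 0 < (-1 : ℤ) ^ m * Ez (2 * m) := by
    have : ((((-1 : ℤ) ^ m * Ez (2 * m)) : ℤ) : ℚ) = (-1 : ℚ) ^ m * eulerNumber (2 * m) := by
      push_cast [Ez_cast]
      ring
    exact_mod_cast this ▸ h1
  calc |Ez (2 * m)| = |(-1 : ℤ) ^ m * Ez (2 * m)| := by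
        rw [abs_mul, abs_pow, abs_neg, abs_one, one_pow, one_mul]
    _ = (-1 : ℤ) ^ m * Ez (2 * m) := abs_of_pos h2

end Gabcke

namespace Gabcke

noncomputable def cz (m : ℕ) : ℤ := 2 ^ (4 * (m - 1) + 1) * ((-1) ^ m * Ez (2 * m))

lemma cz_abs (m : ℕ) : cz m = 2 ^ (4 * (m - 1) + 1) * |Ez (2 * m)| := by
  rw [cz, abs_Ez]

lemma gauss (p m : ℕ) (hp : p.Prime) (hm : 1 ≤ m) :
    ((p : ℤ) ^ (m.factorization p + 1)) ∣ cz (p * m) - cz m := by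
  have hm0 : m ≠ 0 := by omega
  set v := m.factorization p with hv
  have hvm : v < m := Nat.factorization_lt p hm0
  by_cases hp2 : p = 2
  · subst hp2
    have hc : ((2 : ℕ) : ℤ) = (2 : ℤ) := by norm_num
    rw [hc]
    have h1 : ((2 : ℤ) ^ (v + 1)) ∣ cz m := by
      rw [cz]
      exact (pow_dvd_pow 2 (by omega : v + 1 ≤ 4 * (m - 1) + 1)).mul_right _
    have h2 : ((2 : ℤ) ^ (v + 1)) ∣ cz (2 * m) := by
      rw [cz]
      exact (pow_dvd_pow 2 (by omega : v + 1 ≤ 4 * (2 * m - 1) + 1)).mul_right _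
    exact dvd_sub h2 h1
  · have hp1 : 1 ≤ p := hp.pos
    have hpm1 : 1 ≤ p * m := Nat.one_le_iff_ne_zero.mpr (Nat.mul_ne_zero (by omega) hm0)
    obtain ⟨s, hs⟩ := Nat.ordProj_dvd m p
    -- sign fact
    have hsig : ((-1 : ℤ)) ^ (p * m) = (-1 : ℤ) ^ m := by
      rcases Nat.even_or_odd m with he | ho
      · rw [he.neg_one_pow, (by exact he.mul_left p : Even (p * m)).neg_one_pow]
      · rw [ho.neg_one_pow, ((hp.odd_of_ne_two hp2).mul ho).neg_one_pow]
    -- exponent identity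
    have hexp : 4 * (p * m - 1) + 1 = (4 * (m - 1) + 1) + 4 * m * (p - 1) := by
      obtain ⟨m', rfl⟩ : ∃ m', m = m' + 1 := ⟨m - 1, by omega⟩
      obtain ⟨p', rfl⟩ : ∃ p', p = p' + 1 := ⟨p - 1, by omega⟩
      have e : (p' + 1) * (m' + 1) = p' * m' + p' + m' + 1 := by ring
      rw [e]
      simp only [Nat.add_sub_cancel]
      ring
    -- part 1 : p^(v+1) ∣ 2^(4m(p-1)) - 1
    have hcop2 : Nat.Coprime 2 (p ^ (v + 1)) :=
      (((Nat.coprime_primes Nat.prime_two hp).mpr (Ne.symm hp2))).pow_right _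
    have htot : Nat.totient (p ^ (v + 1)) = p ^ v * (p - 1) := by
      rw [Nat.totient_prime_pow hp (by omega)]
      simp
    have hdvd_tot : p ^ v * (p - 1) ∣ 4 * m * (p - 1) :=
      Nat.mul_dvd_mul ((Nat.ordProj_dvd m p).trans (Dvd.intro_left 4 rfl)) dvd_rfl
    obtain ⟨t, htt⟩ := hdvd_tot
    have hmod : 2 ^ (4 * m * (p - 1)) ≡ 1 [MOD p ^ (v + 1)] := by
      calc 2 ^ (4 * m * (p - 1)) = (2 ^ Nat.totient (p ^ (v + 1))) ^ t := by
            rw [← pow_mul, htot, ← htt]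
        _ ≡ 1 ^ t [MOD p ^ (v + 1)] := (Nat.ModEq.pow_totient hcop2).pow t
        _ = 1 := one_pow t
    have hpart1 : ((p : ℤ) ^ (v + 1)) ∣ (2 : ℤ) ^ (4 * m * (p - 1)) - 1 := by
      have h5 := Nat.modEq_iff_dvd.mp hmod.symm
      push_cast at h5
      exact h5
    -- part 2 : Kummer
    have hpart2 : ((p : ℤ) ^ (v + 1)) ∣ Ez (2 * (p * m)) - Ez (2 * m) := by
      apply euler_kummer p (v + 1) (2 * m) (2 * (p * m)) hp hp2 (by omega)
      · -- v + 1 ≤ 2 * m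
        omega
      · -- v + 1 ≤ 2 * (p * m)
        have : m ≤ p * m := Nat.le_mul_of_pos_left m hp.pos
        omega
      · have : m ≤ p * m := Nat.le_mul_of_pos_left m hp.pos
        omega
      · -- p ^ (v + 1 - 1) * (p - 1) ∣ 2 * (p * m) - 2 * m
        simp only [Nat.add_sub_cancel]
        refine ⟨2 * s, ?_⟩
        have hle : 2 * m ≤ 2 * (p * m) := by
          have : m ≤ p * m := Nat.le_mul_of_pos_left m hp.pos
          omega
        rw [Nat.sub_eq_iff_eq_add hle]
        calc 2 * (p * m) = 2 * (((p - 1) + 1) * (p ^ v * s)) := by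
              rw [← hs]
              congr 2
              omega
          _ = p ^ v * (p - 1) * (2 * s) + 2 * (p ^ v * s) := by ring
          _ = p ^ v * (p - 1) * (2 * s) + 2 * m := by rw [← hs]
    -- combine
    have hsplit : cz (p * m) - cz m =
        (2 : ℤ) ^ (4 * (m - 1) + 1) * ((-1) ^ m) *
          (((2 : ℤ) ^ (4 * m * (p - 1)) - 1) * Ez (2 * (p * m)) +
            (Ez (2 * (p * m)) - Ez (2 * m))) := by
      rw [cz, cz, hexp, pow_add, hsig]
      ring
    rw [hsplit]
    exact (dvd_add (hpart1.mul_right _) hpart2).mul_left _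

end Gabcke

namespace Gabcke
open scoped ArithmeticFunction.Moebius ArithmeticFunction.zeta

noncomputable def czA : ArithmeticFunction ℤ :=
  ⟨fun m => if m = 0 then 0 else cz m, by simp⟩

@[simp] lemma czA_apply (n : ℕ) : czA n = if n = 0 then 0 else cz n := rfl

noncomputable def Nfun (d : ℕ) : ℤ := ∑ e ∈ d.divisors, μ e * cz (d / e)

lemma Nfun_eq (d : ℕ) (hd : d ≠ 0) : (μ * czA : ArithmeticFunction ℤ) d = Nfun d := by
  rw [ArithmeticFunction.mul_apply,
    Nat.sum_divisorsAntidiagonal (f := fun a b => μ a * czA b)]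
  apply sum_congr rfl
  intro e he
  obtain ⟨hedvd, -⟩ := Nat.mem_divisors.mp he
  have h0 : d / e ≠ 0 := by
    have he0 : e ≠ 0 := by rintro rfl; exact hd (Nat.eq_zero_of_zero_dvd hedvd)
    have := Nat.div_pos (Nat.le_of_dvd (Nat.pos_of_ne_zero hd) hedvd) (Nat.pos_of_ne_zero he0)
    omega
  rw [czA_apply, if_neg h0]

lemma sum_Nfun (m : ℕ) (hm : m ≠ 0) : ∑ d ∈ m.divisors, Nfun d = cz m := by
  have h1 : (↑ζ * (μ * czA) : ArithmeticFunction ℤ) = czA := by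
    rw [← mul_assoc, coe_zeta_mul_moebius, one_mul]
  have h2 : (↑ζ * (μ * czA) : ArithmeticFunction ℤ) m = czA m := by rw [h1]
  rw [coe_zeta_mul_apply] at h2
  calc ∑ d ∈ m.divisors, Nfun d
      = ∑ d ∈ m.divisors, (μ * czA : ArithmeticFunction ℤ) d := by
        apply sum_congr rfl
        intro d hd
        refine (Nfun_eq d ?_).symm
        intro h0
        rw [h0] at hd
        exact hm (Nat.eq_zero_of_zero_dvd (Nat.mem_divisors.mp hd).1)
    _ = czA m := h2
    _ = cz m := by rw [czA_apply, if_neg hm]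

lemma prime_pow_dvd_Nfun (p : ℕ) (hp : p.Prime) (d : ℕ) (hd : d ≠ 0) :
    ((p : ℤ) ^ (d.factorization p)) ∣ Nfun d := by
  set v := d.factorization p with hv
  rcases Nat.eq_zero_or_pos v with hv0 | hv1
  · rw [hv0, pow_zero]; exact one_dvd _
  · have hpd : p ^ v ∣ d := Nat.ordProj_dvd d p
    set s := d / p ^ v with hsdef
    have hds : d = p ^ v * s := (Nat.ordProj_mul_ordCompl_eq_self d p).symm
    have hps : ¬ p ∣ s := Nat.not_dvd_ordCompl hp hd
    have hs0 : s ≠ 0 := by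
      intro h0
      rw [h0, mul_zero] at hds
      exact hd hds
    have hp0 : p ≠ 0 := hp.pos.ne'
    have hps0 : p * s ≠ 0 := Nat.mul_ne_zero hp0 hs0
    -- step 1 : restrict the sum to divisors of p * s
    have hpsd : p * s ∣ d := by
      rw [hds]
      exact Nat.mul_dvd_mul (dvd_pow_self p (by omega)) dvd_rfl
    have hsub : (p * s).divisors ⊆ d.divisors := Nat.divisors_subset_of_dvd hd hpsd
    have hstep1 : Nfun d = ∑ e ∈ (p * s).divisors, μ e * cz (d / e) := by
      rw [Nfun]
      refine (Finset.sum_subset hsub ?_).symm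
      intro e hed henps
      obtain ⟨hedvd, -⟩ := Nat.mem_divisors.mp hed
      have he0 : e ≠ 0 := by rintro rfl; exact hd (Nat.eq_zero_of_zero_dvd hedvd)
      have hnsq : ¬ Squarefree e := by
        intro hsq
        apply henps
        rw [Nat.mem_divisors]
        refine ⟨?_, hps0⟩
        rw [← Nat.factorization_le_iff_dvd he0 hps0]
        intro q
        have hle1 : e.factorization q ≤ 1 :=
          (Nat.squarefree_iff_factorization_le_one he0).mp hsq q
        have hled : e.factorization q ≤ d.factorization q :=
          (Nat.factorization_le_iff_dvd he0 hd).mpr hedvd q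
        have hfps : (p * s).factorization q = p.factorization q + s.factorization q := by
          rw [Nat.factorization_mul hp0 hs0]; rfl
        have hfd : d.factorization q = (p ^ v).factorization q + s.factorization q := by
          conv_lhs => rw [hds]
          rw [Nat.factorization_mul (pow_ne_zero v hp0) hs0]; rfl
        have hp_fact : p.factorization q = if q = p then 1 else 0 := by
          rw [hp.factorization, Finsupp.single_apply]
          by_cases h : q = p
          · rw [if_pos h.symm, if_pos h]
          · rw [if_neg (fun hh => h hh.symm), if_neg h]
        have hpv_fact : (p ^ v).factorization q = if q = p then v else 0 := by
          rw [Nat.Prime.factorization_pow hp, Finsupp.single_apply]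
          by_cases h : q = p
          · rw [if_pos h.symm, if_pos h]
          · rw [if_neg (fun hh => h hh.symm), if_neg h]
        by_cases hq : q = p
        · rw [if_pos hq] at hp_fact hpv_fact
          omega
        · rw [if_neg hq] at hp_fact hpv_fact
          omega
      rw [moebius_eq_zero_of_not_squarefree hnsq]
      simp
    -- step 2 : split divisors of p * s
    have hembinj : Function.Injective (fun e : ℕ => p * e) := fun a b h =>
      Nat.eq_of_mul_eq_mul_left hp.pos h
    set emb : ℕ ↪ ℕ := ⟨fun e => p * e, hembinj⟩ with hemb
    have hset : (p * s).divisors = s.divisors ∪ s.divisors.map emb := by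
      ext e
      simp only [Nat.mem_divisors, Finset.mem_union, Finset.mem_map, hemb,
        Function.Embedding.coeFn_mk]
      constructor
      · rintro ⟨hdvd, -⟩
        by_cases hpe : p ∣ e
        · obtain ⟨e', rfl⟩ := hpe
          right
          refine ⟨e', ⟨?_, hs0⟩, rfl⟩
          exact (Nat.mul_dvd_mul_iff_left hp.pos).mp hdvd
        · left
          refine ⟨?_, hs0⟩
          have hcop : Nat.Coprime e p := ((hp.coprime_iff_not_dvd).mpr hpe).symm
          exact hcop.dvd_of_dvd_mul_left hdvd
      · rintro (⟨h1, -⟩ | ⟨e', ⟨h1, -⟩, rfl⟩)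
        · exact ⟨h1.mul_left p, hps0⟩
        · exact ⟨Nat.mul_dvd_mul_left p h1, hps0⟩
    have hdisj : Disjoint s.divisors (s.divisors.map emb) := by
      rw [Finset.disjoint_left]
      intro e he hemem
      obtain ⟨e', he', heq⟩ := Finset.mem_map.mp hemem
      apply hps
      have : p ∣ e := by
        rw [← heq]
        exact Dvd.intro e' rfl
      exact this.trans (Nat.mem_divisors.mp he).1
    have hstep2 : Nfun d = ∑ e ∈ s.divisors,
        (μ e * cz (d / e) + μ (p * e) * cz (d / (p * e))) := by
      rw [hstep1, hset, Finset.sum_union hdisj, Finset.sum_map, Finset.sum_add_distrib]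
      rfl
    rw [hstep2]
    apply Finset.dvd_sum
    intro e he
    obtain ⟨⟨u, hu⟩, -⟩ := (Nat.mem_divisors.mp he)
    have hpe : ¬ p ∣ e := fun h => hps (h.trans (Nat.mem_divisors.mp he).1)
    have hu0 : u ≠ 0 := by rintro rfl; rw [mul_zero] at hu; exact hs0 hu
    have hpu : ¬ p ∣ u := fun h => hps (hu ▸ (h.mul_left e))
    have hcop : Nat.Coprime p e := (hp.coprime_iff_not_dvd).mpr hpe
    have hmu : μ (p * e) = - μ e := by
      rw [isMultiplicative_moebius.map_mul_of_coprime hcop, moebius_apply_prime hp]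
      ring
    -- arithmetic of d / e and d / (p * e)
    have hpvsplit : p ^ v = p * p ^ (v - 1) := by
      rw [← pow_succ']
      congr 1
      omega
    have hd_eq : d = (p * e) * (p ^ (v - 1) * u) := by
      rw [hds, hu, hpvsplit]; ring
    have hpe0 : p * e ≠ 0 := by
      have he0 : e ≠ 0 := by rintro rfl; rw [zero_mul] at hu; exact hs0 hu
      exact Nat.mul_ne_zero hp0 he0
    have hm' : d / (p * e) = p ^ (v - 1) * u := by
      rw [hd_eq]
      exact Nat.mul_div_cancel_left _ (Nat.pos_of_ne_zero hpe0)
    have hde : d / e = p * (p ^ (v - 1) * u) := by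
      have : d = e * (p * (p ^ (v - 1) * u)) := by rw [hd_eq]; ring
      rw [this]
      exact Nat.mul_div_cancel_left _ (Nat.pos_of_ne_zero (by
        rintro rfl; rw [zero_mul] at hu; exact hs0 hu))
    have hm'0 : p ^ (v - 1) * u ≠ 0 := Nat.mul_ne_zero (pow_ne_zero _ hp0) hu0
    have hfact : (p ^ (v - 1) * u).factorization p = v - 1 := by
      rw [Nat.factorization_mul (pow_ne_zero _ hp0) hu0]
      have h1 : (p ^ (v - 1)).factorization p = v - 1 := by
        rw [Nat.Prime.factorization_pow hp, Finsupp.single_apply, if_pos rfl]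

      have h2 : u.factorization p = 0 := Nat.factorization_eq_zero_of_not_dvd hpu
      rw [Finsupp.add_apply, h1, h2]
      omega
    have hg := gauss p (p ^ (v - 1) * u) hp (Nat.one_le_iff_ne_zero.mpr hm'0)
    rw [hfact] at hg
    have hvv : v - 1 + 1 = v := by omega
    rw [hvv] at hg
    have hterm : μ e * cz (d / e) + μ (p * e) * cz (d / (p * e)) =
        μ e * (cz (p * (p ^ (v - 1) * u)) - cz (p ^ (v - 1) * u)) := by
      rw [hmu, hde, hm']
      ring
    rw [hterm]
    exact hg.mul_left _

lemma Ndvd (d : ℕ) (hd : d ≠ 0) : (d : ℤ) ∣ Nfun d := by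
  rw [Int.natCast_dvd]
  rw [Nat.dvd_iff_prime_pow_dvd_dvd]
  intro p k hpp hpk
  have hppn : p.Prime := hpp
  have hk : k ≤ d.factorization p := (Nat.Prime.pow_dvd_iff_le_factorization hppn hd).mp hpk
  have h1 : ((p : ℤ) ^ k) ∣ Nfun d :=
    (pow_dvd_pow (p : ℤ) hk).trans (prime_pow_dvd_Nfun p hppn d hd)
  rw [← Int.natCast_pow] at h1
  exact Int.natCast_dvd.mp h1

noncomputable def betaZ (d : ℕ) : ℤ := Nfun d / d

lemma beta_mul (d : ℕ) (hd : d ≠ 0) : (d : ℤ) * betaZ d = Nfun d :=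
  Int.mul_ediv_cancel' (Ndvd d hd)

lemma sum_beta (m : ℕ) (hm : m ≠ 0) : ∑ d ∈ m.divisors, (d : ℤ) * betaZ d = cz m := by
  rw [← sum_Nfun m hm]
  apply sum_congr rfl
  intro d hd
  exact beta_mul d (by
    rintro rfl
    exact hm (Nat.eq_zero_of_zero_dvd (Nat.mem_divisors.mp hd).1))

end Gabcke

namespace Gabcke
open PowerSeries

noncomputable def gser (d : ℕ) : PowerSeries ℚ :=
  PowerSeries.mk fun k => if d ∣ k then 1 else 0

noncomputable def gserZ (d : ℕ) : PowerSeries ℤ :=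
  PowerSeries.mk fun k => if d ∣ k then 1 else 0

lemma gser_unit (d : ℕ) (hd : d ≠ 0) : (1 - X ^ d) * gser d = 1 := by
  ext n
  rw [sub_mul, one_mul, map_sub, coeff_X_pow_mul']
  simp only [gser, coeff_mk, coeff_one]
  by_cases hn : n = 0
  · subst hn
    rw [if_pos (dvd_zero d), if_neg (by omega), if_pos rfl]
    norm_num
  · rw [if_neg hn]
    by_cases hdn : d ∣ n
    · have hdle : d ≤ n := Nat.le_of_dvd (Nat.pos_of_ne_zero hn) hdn
      rw [if_pos hdn, if_pos hdle, if_pos ((Nat.dvd_sub hdn dvd_rfl))]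
      ring
    · rw [if_neg hdn]
      by_cases hdle : d ≤ n
      · rw [if_pos hdle, if_neg (fun h => hdn (by
          have := Nat.dvd_add h (dvd_refl d)
          rwa [Nat.sub_add_cancel hdle] at this))]
        ring
      · rw [if_neg hdle]
        ring

lemma gser_unit' (d : ℕ) (hd : d ≠ 0) : gser d * (1 - X ^ d) = 1 := by
  rw [mul_comm]; exact gser_unit d hd

lemma deriv_X_pow (d : ℕ) (hd : d ≠ 0) :
    d⁄dX ℚ (X ^ d) = (d : ℚ⟦X⟧) * X ^ (d - 1) := by
  rw [Derivation.leibniz_pow]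
  rw [PowerSeries.derivative_X]
  rw [smul_eq_mul, mul_one, nsmul_eq_mul]

lemma Xmul_deriv_gser (d : ℕ) (hd : d ≠ 0) :
    X * d⁄dX ℚ (gser d) = (d : ℚ⟦X⟧) * (X ^ d * (gser d * gser d)) := by
  have h1 : (1 - X ^ d) * d⁄dX ℚ (gser d) + gser d * d⁄dX ℚ (1 - X ^ d) = 0 := by
    have h0 := congrArg (d⁄dX ℚ) (gser_unit d hd)
    rw [Derivation.leibniz, Derivation.map_one_eq_zero, smul_eq_mul, smul_eq_mul] at h0
    linear_combination h0
  have h2 : d⁄dX ℚ (1 - X ^ d) = -((d : ℚ⟦X⟧) * X ^ (d - 1)) := by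
    rw [map_sub, Derivation.map_one_eq_zero, deriv_X_pow d hd, zero_sub]
  have h3 : (1 - X ^ d) * d⁄dX ℚ (gser d) = gser d * ((d : ℚ⟦X⟧) * X ^ (d - 1)) := by
    rw [h2] at h1
    linear_combination h1
  have h4 : d⁄dX ℚ (gser d) = gser d * (gser d * ((d : ℚ⟦X⟧) * X ^ (d - 1))) := by
    calc d⁄dX ℚ (gser d) = d⁄dX ℚ (gser d) * ((1 - X ^ d) * gser d) := by
          rw [gser_unit d hd, mul_one]
      _ = gser d * ((1 - X ^ d) * d⁄dX ℚ (gser d)) := by ring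
      _ = gser d * (gser d * ((d : ℚ⟦X⟧) * X ^ (d - 1))) := by rw [h3]
  rw [h4]
  have h5 : (X : ℚ⟦X⟧) * X ^ (d - 1) = X ^ d := by
    rw [← pow_succ']
    congr 1
    omega
  calc X * (gser d * (gser d * ((d : ℚ⟦X⟧) * X ^ (d - 1))))
      = (d : ℚ⟦X⟧) * ((X * X ^ (d - 1)) * (gser d * gser d)) := by ring
    _ = (d : ℚ⟦X⟧) * (X ^ d * (gser d * gser d)) := by rw [h5]

lemma Xmul_deriv_gser_pow (d e : ℕ) (hd : d ≠ 0) :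
    X * d⁄dX ℚ (gser d ^ e) =
      ((d * e : ℕ) : ℚ⟦X⟧) * (X ^ d * gser d) * gser d ^ e := by
  rcases Nat.eq_zero_or_pos e with he | he
  · subst he
    simp
  · rw [Derivation.leibniz_pow, smul_eq_mul, nsmul_eq_mul]
    have hX := Xmul_deriv_gser d hd
    calc X * ((e : ℚ⟦X⟧) * (gser d ^ (e - 1) * d⁄dX ℚ (gser d)))
        = (e : ℚ⟦X⟧) * gser d ^ (e - 1) * (X * d⁄dX ℚ (gser d)) := by ring
      _ = (e : ℚ⟦X⟧) * gser d ^ (e - 1) *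
            ((d : ℚ⟦X⟧) * (X ^ d * (gser d * gser d))) := by rw [hX]
      _ = ((d * e : ℕ) : ℚ⟦X⟧) * (X ^ d * gser d) * (gser d ^ (e - 1) * gser d) := by
            push_cast; ring
      _ = ((d * e : ℕ) : ℚ⟦X⟧) * (X ^ d * gser d) * gser d ^ e := by
            rw [← pow_succ]
            congr 2
            omega

end Gabcke

namespace Gabcke
open PowerSeries

lemma Xmul_deriv_w_pow (d e : ℕ) (hd : d ≠ 0) :
    X * d⁄dX ℚ ((1 - X ^ d) ^ e) =
      -(((d * e : ℕ) : ℚ⟦X⟧) * (X ^ d * gser d)) * (1 - X ^ d) ^ e := by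
  rcases Nat.eq_zero_or_pos e with he | he
  · subst he
    simp
  · rw [Derivation.leibniz_pow, smul_eq_mul, nsmul_eq_mul]
    have hw : d⁄dX ℚ ((1 : ℚ⟦X⟧) - X ^ d) = -((d : ℚ⟦X⟧) * X ^ (d - 1)) := by
      rw [map_sub, Derivation.map_one_eq_zero, deriv_X_pow d hd, zero_sub]
    have h5 : (X : ℚ⟦X⟧) * X ^ (d - 1) = X ^ d := by
      rw [← pow_succ']
      congr 1
      omega
    have hwe : ((1 : ℚ⟦X⟧) - X ^ d) ^ (e - 1) = gser d * (1 - X ^ d) ^ e := by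
      calc ((1 : ℚ⟦X⟧) - X ^ d) ^ (e - 1)
          = (gser d * (1 - X ^ d)) * (1 - X ^ d) ^ (e - 1) := by
            rw [gser_unit' d hd, one_mul]
        _ = gser d * ((1 - X ^ d) ^ (e - 1) * (1 - X ^ d)) := by ring
        _ = gser d * (1 - X ^ d) ^ e := by
            rw [← pow_succ]
            congr 2
            omega
    calc X * ((e : ℚ⟦X⟧) * ((1 - X ^ d) ^ (e - 1) * d⁄dX ℚ ((1 : ℚ⟦X⟧) - X ^ d)))
        = (e : ℚ⟦X⟧) * (1 - X ^ d) ^ (e - 1) * (X * d⁄dX ℚ ((1 : ℚ⟦X⟧) - X ^ d)) := by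
          ring
      _ = (e : ℚ⟦X⟧) * (1 - X ^ d) ^ (e - 1) * (-((d : ℚ⟦X⟧) * (X * X ^ (d - 1)))) := by
          rw [hw]; ring
      _ = (e : ℚ⟦X⟧) * (gser d * (1 - X ^ d) ^ e) * (-((d : ℚ⟦X⟧) * X ^ d)) := by
          rw [h5, hwe]
      _ = -(((d * e : ℕ) : ℚ⟦X⟧) * (X ^ d * gser d)) * (1 - X ^ d) ^ e := by
          push_cast; ring

noncomputable def hfacZ (d : ℕ) : PowerSeries ℤ :=
  if 0 ≤ betaZ d then gserZ d ^ (betaZ d).toNat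
  else (1 - (X : ℤ⟦X⟧) ^ d) ^ (- betaZ d).toNat

noncomputable def hfacQ (d : ℕ) : PowerSeries ℚ :=
  if 0 ≤ betaZ d then gser d ^ (betaZ d).toNat
  else (1 - (X : ℚ⟦X⟧) ^ d) ^ (- betaZ d).toNat

lemma map_hfacZ (d : ℕ) : PowerSeries.map (Int.castRingHom ℚ) (hfacZ d) = hfacQ d := by
  have hg : PowerSeries.map (Int.castRingHom ℚ) (gserZ d) = gser d := by
    ext n
    rw [coeff_map]
    simp only [gserZ, gser, coeff_mk]
    split <;> simp
  rw [hfacZ, hfacQ]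
  split
  · rw [map_pow, hg]
  · rw [map_pow, map_sub, map_one, map_pow, PowerSeries.map_X]

lemma Xmul_deriv_hfacQ (d : ℕ) (hd : d ≠ 0) :
    X * d⁄dX ℚ (hfacQ d) =
      (C ((d : ℚ) * (betaZ d : ℚ)) * (X ^ d * gser d)) * hfacQ d := by
  rw [hfacQ]
  split
  case isTrue h =>
    rw [Xmul_deriv_gser_pow d _ hd]
    have htn : (((betaZ d).toNat : ℕ) : ℚ) = ((betaZ d : ℤ) : ℚ) := by
      exact_mod_cast congrArg (Int.cast : ℤ → ℚ) (Int.toNat_of_nonneg h)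
    have hcast : ((d * (betaZ d).toNat : ℕ) : ℚ⟦X⟧) = C ((d : ℚ) * (betaZ d : ℚ)) := by
      rw [← map_natCast (C (R := ℚ))]
      congr 1
      push_cast
      rw [htn]
    rw [hcast]
  case isFalse h =>
    rw [Xmul_deriv_w_pow d _ hd]
    have htn : (((- betaZ d).toNat : ℕ) : ℚ) = ((- betaZ d : ℤ) : ℚ) := by
      exact_mod_cast congrArg (Int.cast : ℤ → ℚ)
        (Int.toNat_of_nonneg (by omega : (0:ℤ) ≤ - betaZ d))
    have hcast : -(((d * (- betaZ d).toNat : ℕ) : ℚ⟦X⟧)) = C ((d : ℚ) * (betaZ d : ℚ)) := by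
      rw [← map_natCast (C (R := ℚ)), ← map_neg]
      congr 1
      push_cast
      rw [htn]
      push_cast
      ring
    rw [← hcast]
    ring

lemma Xmul_deriv_prod (s : Finset ℕ) (f u : ℕ → ℚ⟦X⟧)
    (h : ∀ d ∈ s, X * d⁄dX ℚ (f d) = u d * f d) :
    X * d⁄dX ℚ (∏ d ∈ s, f d) = (∑ d ∈ s, u d) * ∏ d ∈ s, f d := by
  induction s using Finset.induction_on with
  | empty => simp
  | @insert a s' ha ih =>
    rw [Finset.prod_insert ha, Finset.sum_insert ha, Derivation.leibniz, smul_eq_mul,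
      smul_eq_mul]
    have h1 := h a (Finset.mem_insert_self a s')
    have h2 := ih (fun d hd => h d (Finset.mem_insert_of_mem hd))
    calc X * (f a * d⁄dX ℚ (∏ d ∈ s', f d) + (∏ d ∈ s', f d) * d⁄dX ℚ (f a))
        = f a * (X * d⁄dX ℚ (∏ d ∈ s', f d)) + (∏ d ∈ s', f d) * (X * d⁄dX ℚ (f a)) := by
          ring
      _ = f a * ((∑ d ∈ s', u d) * ∏ d ∈ s', f d) + (∏ d ∈ s', f d) * (u a * f a) := by
          rw [h1, h2]
      _ = (u a + ∑ d ∈ s', u d) * (f a * ∏ d ∈ s', f d) := by ring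

end Gabcke

namespace Gabcke
open PowerSeries

noncomputable def QZ (n : ℕ) : PowerSeries ℤ := ∏ d ∈ Icc 1 n, hfacZ d

noncomputable def QQ (n : ℕ) : PowerSeries ℚ := PowerSeries.map (Int.castRingHom ℚ) (QZ n)

lemma QQ_eq_prod (n : ℕ) : QQ n = ∏ d ∈ Icc 1 n, hfacQ d := by
  rw [QQ, QZ, map_prod]
  exact Finset.prod_congr rfl fun d _ => map_hfacZ d

noncomputable def useries (d : ℕ) : ℚ⟦X⟧ :=
  C ((d : ℚ) * (betaZ d : ℚ)) * (X ^ d * gser d)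

lemma Xderiv_QQ (n : ℕ) :
    X * d⁄dX ℚ (QQ n) = (∑ d ∈ Icc 1 n, useries d) * QQ n := by
  rw [QQ_eq_prod]
  exact Xmul_deriv_prod _ _ _ (fun d hd => Xmul_deriv_hfacQ d (by
    have := (mem_Icc.mp hd).1; omega))

lemma coeff_useries (d k : ℕ) (hd : d ≠ 0) (hk : k ≠ 0) :
    coeff k (useries d) = if d ∣ k then (d : ℚ) * (betaZ d : ℚ) else 0 := by
  rw [useries, coeff_C_mul, coeff_X_pow_mul']
  by_cases h1 : d ≤ k
  · rw [if_pos h1]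
    simp only [gser, coeff_mk]
    by_cases h2 : d ∣ k
    · rw [if_pos (Nat.dvd_sub h2 dvd_rfl), if_pos h2, mul_one]
    · rw [if_neg (fun h => h2 (by
        have := Nat.dvd_add h (dvd_refl d)
        rwa [Nat.sub_add_cancel h1] at this)), if_neg h2, mul_zero]
  · rw [if_neg h1, if_neg (fun h2 => h1 (Nat.le_of_dvd (Nat.pos_of_ne_zero hk) h2)), mul_zero]

lemma coeff_U (n k : ℕ) (hk1 : 1 ≤ k) (hkn : k ≤ n) :
    coeff k (∑ d ∈ Icc 1 n, useries d) = (cz k : ℚ) := by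
  rw [map_sum]
  rw [sum_congr rfl (fun d hd => coeff_useries d k (by
    have := (mem_Icc.mp hd).1; omega) (by omega))]
  rw [← Finset.sum_filter]
  have hfil : (Icc 1 n).filter (· ∣ k) = k.divisors := by
    ext e
    simp only [Finset.mem_filter, mem_Icc, Nat.mem_divisors]
    constructor
    · rintro ⟨⟨-, -⟩, h⟩
      exact ⟨h, by omega⟩
    · rintro ⟨h, -⟩
      have he0 : e ≠ 0 := by
        rintro rfl
        have := Nat.eq_zero_of_zero_dvd h
        omega
      exact ⟨⟨by omega, (Nat.le_of_dvd (by omega) h).trans hkn⟩, h⟩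
  rw [hfil]
  have := sum_beta k (by omega)
  calc ∑ d ∈ k.divisors, (d : ℚ) * (betaZ d : ℚ)
      = ((∑ d ∈ k.divisors, (d : ℤ) * betaZ d : ℤ) : ℚ) := by push_cast; rfl
    _ = (cz k : ℚ) := by rw [this]

lemma coeff_U0 (n : ℕ) : coeff 0 (∑ d ∈ Icc 1 n, useries d) = 0 := by
  rw [map_sum]
  apply Finset.sum_eq_zero
  intro d hd
  have hd1 : 1 ≤ d := (mem_Icc.mp hd).1
  rw [useries, coeff_C_mul, coeff_X_pow_mul']
  rw [if_neg (by omega)]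
  ring

lemma constantCoeff_QQ (n : ℕ) : coeff 0 (QQ n) = 1 := by
  rw [QQ_eq_prod, coeff_zero_eq_constantCoeff_apply, map_prod]
  apply Finset.prod_eq_one
  intro d hd
  have hd1 : 1 ≤ d := (mem_Icc.mp hd).1
  rw [hfacQ]
  have hg : constantCoeff (gser d) = 1 := by
    rw [← coeff_zero_eq_constantCoeff_apply]
    simp [gser]
  have hw : constantCoeff ((1 : ℚ⟦X⟧) - X ^ d) = 1 := by
    rw [map_sub, map_one, map_pow, constantCoeff_X, zero_pow (by omega : d ≠ 0), sub_zero]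
  split
  · rw [map_pow, hg, one_pow]
  · rw [map_pow, hw, one_pow]

lemma QQ_rec (n m : ℕ) (hm : m + 1 ≤ n) :
    ((m : ℚ) + 1) * coeff (m + 1) (QQ n) =
      ∑ i ∈ range (m + 1), (cz (i + 1) : ℚ) * coeff (m - i) (QQ n) := by
  have hL : coeff (m + 1) (X * d⁄dX ℚ (QQ n)) = ((m : ℚ) + 1) * coeff (m + 1) (QQ n) := by
    rw [coeff_succ_X_mul, PowerSeries.coeff_derivative]
    push_cast
    ring
  rw [← hL, Xderiv_QQ, coeff_mul, Finset.Nat.sum_antidiagonal_eq_sum_range_succ_mk]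
  have hsucc : (m + 1).succ = (m + 1) + 1 := rfl
  rw [hsucc, Finset.sum_range_succ']
  rw [coeff_U0 n, zero_mul, add_zero]
  apply sum_congr rfl
  intro i hi
  have him : i < m + 1 := mem_range.mp hi
  rw [coeff_U n (i + 1) (by omega) (by omega)]
  have e : m + 1 - (i + 1) = m - i := by omega
  rw [e]

end Gabcke

theorem stmt_16 (lam : ℕ → ℚ) (h0 : lam 0 = 1)
    (hrec : ∀ n : ℕ, (n + 1 : ℚ) * lam (n + 1) =
      ∑ k ∈ Finset.range (n + 1),
        2 ^ (4 * k + 1) * |eulerNumber (2 * k + 2)| * lam (n - k)) :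
    ∀ n : ℕ, ∃ m : ℤ, lam n = (m : ℚ) := by
  intro n
  have key : ∀ m, m ≤ n → lam m = PowerSeries.coeff m (Gabcke.QQ n) := by
    intro m
    induction m using Nat.strong_induction_on with
    | _ m ih =>
      intro hmn
      match m, ih, hmn with
      | 0, _, _ =>
        rw [h0, Gabcke.constantCoeff_QQ]
      | (m + 1), ih, hmn =>
        have hrec' := hrec m
        have hQ := Gabcke.QQ_rec n m (by omega)
        have hterm : ∀ k ∈ range (m + 1),
            2 ^ (4 * k + 1) * |eulerNumber (2 * k + 2)| * lam (m - k)
            = (Gabcke.cz (k + 1) : ℚ) * PowerSeries.coeff (m - k) (Gabcke.QQ n) := by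
          intro k hk
          have hk' : k < m + 1 := mem_range.mp hk
          rw [← ih (m - k) (by omega) (by omega)]
          have hidx : Gabcke.cz (k + 1) = 2 ^ (4 * k + 1) * |Gabcke.Ez (2 * k + 2)| := by
            have e1 : 4 * ((k + 1) - 1) + 1 = 4 * k + 1 := by omega
            have e2 : 2 * (k + 1) = 2 * k + 2 := by omega
            rw [Gabcke.cz_abs, e1, e2]
          rw [hidx]
          congr 1
          push_cast [Gabcke.Ez_cast]
          ring
        rw [sum_congr rfl hterm, ← hQ] at hrec'
        have hne : ((m : ℚ) + 1) ≠ 0 := by positivity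
        exact mul_left_cancel₀ hne hrec'
  refine ⟨PowerSeries.coeff n (Gabcke.QZ n), ?_⟩
  rw [key n le_rfl, Gabcke.QQ, PowerSeries.coeff_map]
  rfl
end
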